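/- arXiv:2303.09265 — 10 statements merged into one kernel-verified Lean document; each statement's English description precedes it below -/
import Mathlib

section
/- Let p be an odd prime, q a power of p, n ≥ 1, a ∈ F_{q^n}*, and let ℓ : F_{q^n} → F_{q^n} be an F_p-linear map. Then the function f(x) = Tr(a·x^{q+1}) + ℓ(x²) is a planar function on F_{q^n} if and only if for all u, v ∈ F_{q^n}*, Tr(a·u^q·v^{1−q} + a·u·v^{q−1}) + 2·ℓ(u) ≠ 0. -/
/-- `f(x) = Tr(a·x^{q+1}) + ℓ(x²)` is planar on `F_{q^n}` iff
`Tr(a·u^q·v^{1−q} + a·u·v^{q−1}) + 2·ℓ(u) ≠ 0` for all nonzero `u, v`. -/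
theorem planar_iff_trace_condition
    (p m n : ℕ) (hp : p.Prime) (hodd : Odd p) (hm : 0 < m) (hn : 1 ≤ n)
    (q : ℕ) (hq : q = p ^ m)
    (F : Type*) [Field F] [Fintype F] (hF : Fintype.card F = q ^ n)
    (a : F) (ha : a ≠ 0)
    (ℓ : F → F) (hℓ : ∀ x y, ℓ (x + y) = ℓ x + ℓ y)
    (Tr : F → F) (hTr : ∀ x, Tr x = ∑ i ∈ Finset.range n, x ^ q ^ i)
    (f : F → F) (hf : ∀ x, f x = Tr (a * x ^ (q + 1)) + ℓ (x ^ 2)) :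
    (∀ c : F, c ≠ 0 → Function.Bijective (fun x => f (x + c) - f x)) ↔
      (∀ u v : F, u ≠ 0 → v ≠ 0 →
        Tr (a * u ^ q * (v ^ (q - 1))⁻¹ + a * u * v ^ (q - 1)) + 2 * ℓ u ≠ 0) := by
  haveI : Fact p.Prime := ⟨hp⟩
  have hq1 : 1 ≤ q := by
    rw [hq]; exact Nat.one_le_pow _ _ hp.pos
  -- characteristic of F is p
  haveI hcharF : CharP F p := by
    obtain ⟨r, hr⟩ := CharP.exists F
    haveI := hr
    obtain ⟨k, hrp, hcard⟩ := FiniteField.card F r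
    have hpr : p = r := by
      have hdvd : p ∣ r ^ (k : ℕ) := by
        rw [← hcard, hF, hq, ← pow_mul]
        exact dvd_pow_self p (by positivity)
      exact ((Nat.prime_dvd_prime_iff_eq hp hrp).mp (hp.dvd_of_dvd_pow hdvd))
    rwa [hpr]
  -- Frobenius-type additivity
  have hpowq : ∀ x y : F, (x + y) ^ q = x ^ q + y ^ q := by
    intro x y; rw [hq]; exact add_pow_char_pow ..
  have hTr_add : ∀ x y : F, Tr (x + y) = Tr x + Tr y := by
    intro x y
    rw [hTr, hTr, hTr, ← Finset.sum_add_distrib]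
    refine Finset.sum_congr rfl fun i _ => ?_
    rw [hq, ← pow_mul]
    exact add_pow_char_pow ..
  -- the linear part of the difference
  set g : F → F → F := fun c x => Tr (a * c ^ q * x + a * c * x ^ q) + 2 * ℓ (c * x)
    with hg
  have key : ∀ c x : F, f (x + c) - f x
      = g c x + (Tr (a * c ^ (q + 1)) + ℓ (c ^ 2)) := by
    intro c x
    have e1 : a * (x + c) ^ (q + 1)
        = a * x ^ (q + 1) + ((a * c ^ q * x + a * c * x ^ q) + a * c ^ (q + 1)) := by
      rw [pow_succ, pow_succ, pow_succ, hpowq]; ring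
    have e2 : ((x + c) : F) ^ 2 = x ^ 2 + ((c * x + c * x) + c ^ 2) := by ring
    rw [hf, hf, e1, e2, hTr_add, hTr_add, hℓ, hℓ, hℓ, hg]
    ring
  have hgadd : ∀ c x y : F, g c (x + y) = g c x + g c y := by
    intro c x y
    have e1 : a * c ^ q * (x + y) + a * c * (x + y) ^ q
        = (a * c ^ q * x + a * c * x ^ q) + (a * c ^ q * y + a * c * y ^ q) := by
      rw [hpowq]; ring
    have e2 : c * (x + y) = c * x + c * y := by ring
    rw [hg]; simp only
    rw [e1, e2, hTr_add, hℓ]; ring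
  -- bijectivity of the difference map iff trivial kernel of g c
  have step : ∀ c : F, Function.Bijective (fun x => f (x + c) - f x)
      ↔ ∀ x : F, x ≠ 0 → g c x ≠ 0 := by
    intro c
    rw [Fintype.bijective_iff_injective_and_card]
    constructor
    · rintro ⟨hinj, -⟩ x hx hgx
      apply hx
      have : f (x + c) - f x = f (0 + c) - f 0 := by
        rw [key, key, hgx]
        have : g c 0 = 0 := by
          have := hgadd c 0 0
          simpa using this
        rw [this]
      exact hinj this
    · intro hker
      refine ⟨?_, rfl⟩
      intro x y hxy
      simp only [key] at hxy
      have hgeq : g c x = g c y := add_right_cancel hxy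
      by_contra hne
      have hsub : x + (y - x) = y := by ring
      have hsum : g c x + g c (y - x) = g c y := by rw [← hgadd, hsub]
      have hz : g c (y - x) = 0 := by
        rw [hgeq] at hsum
        linear_combination hsum
      have hne' : y - x ≠ 0 := sub_ne_zero.mpr (Ne.symm hne)
      exact hker _ hne' hz
  -- powers manipulation lemma
  have hvpow : ∀ v : F, v ^ (q - 1) * v = v ^ q := by
    intro v
    rw [← pow_succ, Nat.sub_add_cancel hq1]
  constructor
  · intro H u v hu hv
    have hc : u * v⁻¹ ≠ 0 := by
      exact mul_ne_zero hu (inv_ne_zero hv)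
    have := (step (u * v⁻¹)).mp (H _ hc) v hv
    have harg : a * (u * v⁻¹) ^ q * v + a * (u * v⁻¹) * v ^ q
        = a * u ^ q * (v ^ (q - 1))⁻¹ + a * u * v ^ (q - 1) := by
      have hvq : (v : F) ^ (q - 1) ≠ 0 := pow_ne_zero _ hv
      rw [mul_pow, inv_pow]
      field_simp
      rw [← hvpow v]
      ring
    have hcv : (u * v⁻¹) * v = u := by field_simp
    rw [hg] at this; simp only at this
    rw [harg, hcv] at this
    exact this
  · intro H c hc
    rw [step c]
    intro x hx
    have := H (c * x) x (mul_ne_zero hc hx) hx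
    have harg : a * (c * x) ^ q * (x ^ (q - 1))⁻¹ + a * (c * x) * x ^ (q - 1)
        = a * c ^ q * x + a * c * x ^ q := by
      have hxq : (x : F) ^ (q - 1) ≠ 0 := pow_ne_zero _ hx
      rw [mul_pow]
      field_simp
      rw [← hvpow x]
      ring
    have hcx : ℓ (c * x) = ℓ (c * x) := rfl
    rw [harg] at this
    rw [hg]; simp only
    exact this
end

section
/- Let p be an odd prime, q a power of p, and let ℓ : F_{q²} → F_{q²} be an F_p-linear map. Suppose the function x^{q+1} + ℓ(x²) is planar on F_{q²}. Then the kernel of ℓ has at most q elements; moreover, if ℓ(F_{q²}) ∩ F_q = {0}, then the kernel of ℓ has exactly q elements. -/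
lemma aux_card_pow_le {F : Type*} [Field F] [Fintype F] {q : ℕ} (hq : 2 ≤ q) (c : F) :
    Nat.card {z : F // z ^ q = c * z} ≤ q := by
  classical
  set P : Polynomial F := Polynomial.X ^ q - Polynomial.C c * Polynomial.X with hP
  have hdeg : P.natDegree = q := by
    rw [hP, Polynomial.natDegree_sub_eq_left_of_natDegree_lt, Polynomial.natDegree_X_pow]
    rw [Polynomial.natDegree_X_pow]
    exact lt_of_le_of_lt
      ((Polynomial.natDegree_C_mul_le _ _).trans (le_of_eq Polynomial.natDegree_X)) (by omega)
  have hP0 : P ≠ 0 := fun h => by rw [h] at hdeg; simp at hdeg; omega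
  have hcard : Fintype.card {z : F // z ^ q = c * z} ≤ q := by
    rw [Fintype.card_subtype]
    calc (Finset.univ.filter fun z : F => z ^ q = c * z).card
        ≤ P.roots.toFinset.card := Finset.card_le_card (by
          intro z hz
          simp only [Finset.mem_filter] at hz
          rw [Multiset.mem_toFinset, Polynomial.mem_roots hP0]
          simp [Polynomial.IsRoot, hP, hz.2])
      _ ≤ Multiset.card P.roots := Multiset.toFinset_card_le _
      _ ≤ P.natDegree := Polynomial.card_roots' P
      _ = q := hdeg
  rwa [Nat.card_eq_fintype_card]

lemma aux_rank_nullity {F : Type*} [AddCommGroup F] [Fintype F] (f : F →+ F) :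
    Nat.card F = Nat.card f.range * Nat.card f.ker := by
  rw [AddSubgroup.card_eq_card_quotient_mul_card_addSubgroup f.ker]
  congr 1
  exact Nat.card_congr (QuotientAddGroup.quotientKerEquivRange f).toEquiv

/-- if `x^{q+1} + ℓ(x²)` is planar on `F_{q²}` then `ℓ` has at most `q`
roots, and exactly `q` roots if moreover `ℓ(F_{q²}) ∩ F_q = {0}`. -/
theorem kernel_card_of_planar
    (p m : ℕ) (hp : p.Prime) (hodd : Odd p) (hm : 0 < m)
    (q : ℕ) (hq : q = p ^ m)
    (F : Type*) [Field F] [Fintype F] (hF : Fintype.card F = q ^ 2)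
    (ℓ : F → F) (hℓ : ∀ x y, ℓ (x + y) = ℓ x + ℓ y)
    (f : F → F) (hf : ∀ x, f x = x ^ (q + 1) + ℓ (x ^ 2))
    (hplanar : ∀ c : F, c ≠ 0 → Function.Bijective (fun x => f (x + c) - f x)) :
    Nat.card {x : F // ℓ x = 0} ≤ q ∧
      ((∀ x : F, (ℓ x) ^ q = ℓ x → ℓ x = 0) → Nat.card {x : F // ℓ x = 0} = q) := by
  classical
  have hq2 : 2 ≤ q := by
    rw [hq]
    calc 2 ≤ p := hp.two_le
    _ ≤ p ^ m := Nat.le_self_pow hm.ne' p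
  have hq0 : 0 < q := by omega
  haveI hpF : Fact p.Prime := ⟨hp⟩
  have hcardF : Fintype.card F = p ^ (2 * m) := by rw [hF, hq, ← pow_mul, mul_comm]
  obtain ⟨n, hrprime, hcard'⟩ := FiniteField.card F (ringChar F)
  have hrp : ringChar F = p := by
    have h1 : ringChar F ∣ p ^ (2 * m) := by
      rw [← hcardF, hcard']
      exact dvd_pow_self _ n.pos.ne'
    exact (Nat.prime_dvd_prime_iff_eq hrprime hp).mp (hrprime.dvd_of_dvd_pow h1)
  haveI : CharP F p := hrp ▸ ringChar.charP F
  haveI : ExpChar F p := ExpChar.prime hp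
  set φ : F →+* F := iterateFrobenius F p m with hφdef
  have hφ : ∀ x : F, φ x = x ^ q := by
    intro x; rw [hφdef, iterateFrobenius_def, ← hq]
  have hfrobadd : ∀ x y : F, (x + y) ^ q = x ^ q + y ^ q := by
    intro x y; rw [← hφ, ← hφ, ← hφ, map_add]
  have hfrobsub : ∀ x y : F, (x - y) ^ q = x ^ q - y ^ q := by
    intro x y; rw [← hφ, ← hφ, ← hφ, map_sub]
  have hpow : ∀ x : F, (x ^ q) ^ q = x := by
    intro x
    rw [← pow_mul, ← pow_two]
    rw [← hF]
    exact FiniteField.pow_card x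
  have hTfix : ∀ x : F, (x ^ q + x) ^ q = x ^ q + x := by
    intro x
    rw [hfrobadd, hpow, add_comm]
  -- Part 1: injectivity of T on the kernel of ℓ
  have hD := (hplanar 1 one_ne_zero).injective
  have hTinj : ∀ a b : F, ℓ a = 0 → ℓ b = 0 → a ^ q + a = b ^ q + b → a = b := by
    intro a b ha hb hab
    apply hD
    show f (a + 1) - f a = f (b + 1) - f b
    have key : ∀ x : F, ℓ x = 0 → f (x + 1) - f x = x ^ q + x + 1 + ℓ 1 := by
      intro x hx
      have h2 : (x + 1) ^ 2 = x ^ 2 + (x + (x + 1)) := by ring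
      have h1 : ℓ ((x + 1) ^ 2) = ℓ (x ^ 2) + ℓ 1 := by
        rw [h2, hℓ, hℓ, hℓ, hx]; ring
      have h3 : (x + 1) ^ (q + 1) = x ^ (q + 1) + (x ^ q + x + 1) := by
        rw [pow_succ, pow_succ, hfrobadd, one_pow]; ring
      rw [hf, hf, h1, h3]; ring
    rw [key a ha, key b hb, hab]
  have hFixle : Nat.card {z : F // z ^ q = z} ≤ q := by
    have := aux_card_pow_le hq2 (1 : F)
    simpa using this
  have h1 : Nat.card {x : F // ℓ x = 0} ≤ Nat.card {z : F // z ^ q = z} := by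
    refine Nat.card_le_card_of_injective
      (fun x : {x : F // ℓ x = 0} => (⟨x.1 ^ q + x.1, hTfix x.1⟩ : {z : F // z ^ q = z})) ?_
    intro a b hab
    exact Subtype.ext (hTinj a.1 b.1 a.2 b.2 (congrArg Subtype.val hab))
  have part1 : Nat.card {x : F // ℓ x = 0} ≤ q := h1.trans hFixle
  refine ⟨part1, ?_⟩
  -- Part 2
  intro H
  set ℓm : F →+ F := AddMonoidHom.mk' ℓ hℓ with hℓm
  set Tm : F →+ F := φ.toAddMonoidHom + AddMonoidHom.id F with hTm
  have hTmapp : ∀ x : F, Tm x = x ^ q + x := by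
    intro x; rw [hTm]; simp [hφ x]
  have hcardnat : Nat.card F = q ^ 2 := by rw [Nat.card_eq_fintype_card, hF]
  -- kernel of Tm is small
  have hkerT : Nat.card Tm.ker ≤ q := by
    refine le_trans (le_of_eq (Nat.card_congr (Equiv.subtypeEquivRight ?_)))
      (aux_card_pow_le hq2 (-1 : F))
    intro z
    rw [AddMonoidHom.mem_ker, hTmapp]
    constructor
    · intro h; rw [neg_one_mul]; exact eq_neg_of_add_eq_zero_left h
    · intro h; rw [h]; ring
  -- range of Tm injects into Fix
  have hrangeT : Nat.card Tm.range ≤ Nat.card {z : F // z ^ q = z} := by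
    refine Nat.card_le_card_of_injective
      (fun r : Tm.range => (⟨r.1, ?_⟩ : {z : F // z ^ q = z})) ?_
    · obtain ⟨x, hx⟩ := r.2
      rw [← hx, hTmapp]
      exact hTfix x
    · intro a b hab
      exact Subtype.ext (by simpa using hab)
  have hFixge : q ≤ Nat.card {z : F // z ^ q = z} := by
    have hrn := aux_rank_nullity Tm
    rw [hcardnat] at hrn
    have : q * q ≤ Nat.card {z : F // z ^ q = z} * q := by
      calc q * q = q ^ 2 := (sq q).symm
      _ = Nat.card Tm.range * Nat.card Tm.ker := hrn
      _ ≤ Nat.card {z : F // z ^ q = z} * q := Nat.mul_le_mul hrangeT hkerT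
    exact Nat.le_of_mul_le_mul_right this hq0
  -- range of ℓm is small
  have hrangeL : Nat.card ℓm.range ≤ q := by
    have hinj : Function.Injective
        (fun z : ℓm.range × {z : F // z ^ q = z} => z.1.1 + z.2.1) := by
      rintro ⟨a, z⟩ ⟨b, w⟩ hab
      simp only at hab
      have hd : a.1 - b.1 = w.1 - z.1 := by linear_combination hab
      have hdr : a.1 - b.1 ∈ ℓm.range := sub_mem a.2 b.2
      obtain ⟨x, hx⟩ := hdr
      have hfix : (ℓ x) ^ q = ℓ x := by
        have : ℓm x = ℓ x := rfl
        rw [← this, hx, hd, hfrobsub, w.2, z.2]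
      have h0 : ℓ x = 0 := H x hfix
      have hab' : a.1 = b.1 := by
        have : ℓm x = ℓ x := rfl
        have h1 : a.1 - b.1 = 0 := by rw [← hx, this, h0]
        exact sub_eq_zero.mp h1
      have hzw : z.1 = w.1 := by
        rw [hab'] at hab
        exact add_left_cancel hab
      exact Prod.ext (Subtype.ext hab') (Subtype.ext hzw)
    have hle : Nat.card (ℓm.range × {z : F // z ^ q = z}) ≤ Nat.card F :=
      Nat.card_le_card_of_injective _ hinj
    rw [Nat.card_prod, hcardnat] at hle
    have : Nat.card ℓm.range * q ≤ q * q := by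
      calc Nat.card ℓm.range * q ≤ Nat.card ℓm.range * Nat.card {z : F // z ^ q = z} :=
        Nat.mul_le_mul_left _ hFixge
      _ ≤ q ^ 2 := hle
      _ = q * q := sq q
    exact Nat.le_of_mul_le_mul_right this hq0
  -- rank-nullity for ℓm
  have hkerL : Nat.card ℓm.ker = Nat.card {x : F // ℓ x = 0} := by
    refine Nat.card_congr (Equiv.subtypeEquivRight ?_)
    intro x
    rw [AddMonoidHom.mem_ker]
    exact Iff.rfl
  have hrn := aux_rank_nullity ℓm
  rw [hcardnat, hkerL] at hrn
  have hge : q ≤ Nat.card {x : F // ℓ x = 0} := by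
    have : q * q ≤ q * Nat.card {x : F // ℓ x = 0} := by
      calc q * q = q ^ 2 := (sq q).symm
      _ = Nat.card ℓm.range * Nat.card {x : F // ℓ x = 0} := hrn
      _ ≤ q * Nat.card {x : F // ℓ x = 0} := Nat.mul_le_mul_right _ hrangeL
    exact Nat.le_of_mul_le_mul_left this hq0
  omega
end

section
/- Let p be an odd prime, k ≥ 1, q = p^{2k}, and δ ∈ F_q*. Then u^{2·p^k} − δ·u² is a nonzero square in F_q for every u ∈ F_q* if and only if p^k ≡ 1 (mod 4) and δ^{(p^k+1)/2} = −1. -/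
open Polynomial Finset


private lemma coeff_linear_pow {F : Type*} [Field F] (a b : F) (n k : ℕ) (hk : k ≤ n) :
    ((C a * X + C b) ^ n).coeff k = a ^ k * b ^ (n - k) * (n.choose k : F) := by
  rcases eq_or_ne a 0 with rfl | ha
  · simp only [map_zero, zero_mul, zero_add, ← C_pow, coeff_C]
    rcases Nat.eq_zero_or_pos k with rfl | hk0
    · simp
    · rw [if_neg hk0.ne', zero_pow hk0.ne', zero_mul, zero_mul]
  · have h1 : C a * X + C b = C a * (X + C (b / a)) := by
      rw [mul_add, ← C_mul, mul_div_cancel₀ _ ha]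
    have h2 : a ^ n = a ^ k * a ^ (n - k) := by rw [← pow_add]; congr 1; omega
    rw [h1, mul_pow, ← C_pow, coeff_C_mul, coeff_X_add_C_pow, div_pow, h2]
    field_simp


/-- in `F_q` with `q = p^{2k}` and `δ ≠ 0`, the element
`u^{2p^k} − δ·u²` is a nonzero square for every `u ≠ 0` iff `p^k ≡ 1 (mod 4)`
and `δ^{(p^k+1)/2} = −1`. -/
theorem nonzero_square_iff_delta_condition
    (p k : ℕ) (hp : p.Prime) (hodd : Odd p) (hk : 0 < k)
    (q : ℕ) (hq : q = p ^ (2 * k))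
    (F : Type*) [Field F] [Fintype F] (hF : Fintype.card F = q)
    (δ : F) (hδ : δ ≠ 0) :
    (∀ u : F, u ≠ 0 → ∃ b : F, b ≠ 0 ∧ b ^ 2 = u ^ (2 * p ^ k) - δ * u ^ 2) ↔
      (p ^ k % 4 = 1 ∧ δ ^ ((p ^ k + 1) / 2) = -1) := by
  classical
  set s : ℕ := p ^ k with hs
  have hp3 : 3 ≤ p := by
    rcases hodd with ⟨t, ht⟩
    have := hp.two_le
    omega
  have hsodd : s % 2 = 1 := Nat.odd_iff.mp (hodd.pow)
  have hs1 : 1 < s := Nat.one_lt_pow hk.ne' (by omega)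
  have hs3 : 3 ≤ s := by omega
  set c : ℕ := (s + 1) / 2 with hc
  have h2c : 2 * c = s + 1 := by omega
  have hc2 : 2 ≤ c := by omega
  set e : ℕ := (s - 1) * c with he
  obtain ⟨m, hm⟩ : ∃ m, s = m + 3 := ⟨s - 3, by omega⟩
  have hm1 : s - 1 = m + 2 := by omega
  have hm2 : 2 * c = m + 4 := by omega
  have hqss : q = s * s := by rw [hq, hs, two_mul, pow_add]
  have he2 : 2 * e + 1 = q := by
    rw [hqss, he, hm1, hm]
    have h4 : 2 * ((m + 2) * c) = (m + 2) * (2 * c) := by ring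
    rw [h4, hm2]; ring
  have hsc : s * c = e + c := by
    rw [he, hm1, hm]; ring
  -- characteristic
  have hcharr : CharP F (ringChar F) := ringChar.charP F
  obtain ⟨n, hrp, hcard⟩ := FiniteField.card F (ringChar F)
  have hrchar : ringChar F = p := by
    have hq2 : q = ringChar F ^ (n : ℕ) := by rw [← hF, hcard]
    have h1 : ringChar F ∣ q := by
      rw [hq2]; exact dvd_pow_self _ n.pos.ne'
    rw [hq] at h1
    exact (Nat.prime_dvd_prime_iff_eq hrp hp).mp (hrp.dvd_of_dvd_pow h1)
  haveI hCharP : CharP F p := hrchar ▸ hcharr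
  haveI : Fact p.Prime := ⟨hp⟩
  have hrne2 : ringChar F ≠ 2 := by rw [hrchar]; omega
  have htwo : (2 : F) ≠ 0 := by
    have h2 : ((2 : ℕ) : F) ≠ 0 := by
      rw [Ne, CharP.cast_eq_zero_iff F p]
      intro h
      have := Nat.le_of_dvd (by norm_num) h
      omega
    simpa using h2
  have frob : ∀ x y : F, (x - y) ^ s = x ^ s - y ^ s := by
    intro x y; rw [hs]; exact sub_pow_char_pow x y k
  have hxq : ∀ x : F, x ^ (s * s) = x := by
    intro x
    have := FiniteField.pow_card x
    rwa [hF, hqss] at this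
  have hu2e : ∀ x : F, x ≠ 0 → x ^ (2 * e) = 1 := by
    intro x hx
    have h1 := FiniteField.pow_card_sub_one_eq_one x hx
    have h2 : Fintype.card F - 1 = 2 * e := by rw [hF]; omega
    rwa [h2] at h1
  have hcard2 : Fintype.card F / 2 = e := by rw [hF]; omega
  -- square criterion
  have hsq : ∀ x : F, x ≠ 0 → (x ^ e = 1 ↔ ∃ b : F, b ≠ 0 ∧ b ^ 2 = x) := by
    intro x hx
    constructor
    · intro hxe
      obtain ⟨r, hr⟩ := (FiniteField.isSquare_iff hrne2 hx).mpr (by rw [hcard2]; exact hxe)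
      refine ⟨r, ?_, by rw [sq]; exact hr.symm⟩
      rintro rfl; rw [mul_zero] at hr; exact hx hr
    · rintro ⟨b, hb, rfl⟩
      rw [← pow_mul]
      exact hu2e b hb
  have hpF : ((p:ℕ) : F) = 0 := CharP.cast_eq_zero F p
  constructor
  · -- forward direction
    intro hyp
    set A : Finset F := (univ.erase (0:F)).image (fun u => u ^ (2*(s-1))) with hA
    have hne2 : e * 2 = 2 * (s-1) * c := by rw [he]; ring
    have hA1 : ∀ h ∈ A, h ^ c = 1 := by
      intro h hh
      rw [hA, mem_image] at hh
      obtain ⟨u, hu, rfl⟩ := hh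
      have hu0 : u ≠ 0 := (mem_erase.mp hu).1
      rw [← pow_mul, ← hne2, mul_comm e 2]
      exact hu2e u hu0
    have hAprop : ∀ h ∈ A, h - δ ≠ 0 ∧ (h - δ) ^ e = 1 := by
      intro h hh
      rw [hA, mem_image] at hh
      obtain ⟨u, hu, rfl⟩ := hh
      have hu0 : u ≠ 0 := (mem_erase.mp hu).1
      obtain ⟨b, hb, hb2⟩ := hyp u hu0
      have hexp : 2 + 2*(s-1) = 2*s := by omega
      have hdecomp : u ^ (2*s) - δ * u ^ 2 = u ^ 2 * (u ^ (2*(s-1)) - δ) := by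
        rw [mul_sub, ← pow_add, hexp]; ring
      rw [hdecomp] at hb2
      have hd0 : u ^ (2*(s-1)) - δ ≠ 0 := by
        intro h0
        rw [h0, mul_zero, pow_eq_zero_iff (by norm_num : (2:ℕ) ≠ 0)] at hb2
        exact hb hb2
      refine ⟨hd0, ?_⟩
      have h1 : (u ^ 2 * (u ^ (2*(s-1)) - δ)) ^ e = 1 := by
        rw [← hb2, ← pow_mul, mul_comm 2 e, pow_mul, ← pow_mul, mul_comm e 2]
        exact hu2e b hb
      rw [mul_pow, ← pow_mul, mul_comm 2 e, mul_comm] at h1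
      have h2 : u ^ (e * 2) = 1 := by rw [mul_comm e 2]; exact hu2e u hu0
      rw [h2, mul_one] at h1
      exact h1
    have hApos : 0 < 2*(s-1) := by omega
    have hAcard : c ≤ A.card := by
      have hbound : ∀ a ∈ (univ.erase (0:F)).image (fun u => u ^ (2*(s-1))),
          ((univ.erase (0:F)).filter (fun x => x ^ (2*(s-1)) = a)).card ≤ 2*(s-1) := by
        intro a _
        calc ((univ.erase (0:F)).filter (fun x => x ^ (2*(s-1)) = a)).card
            ≤ (nthRoots (2*(s-1)) a).toFinset.card := by
              apply Finset.card_le_card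
              intro x hx
              rw [Multiset.mem_toFinset, mem_nthRoots hApos]
              exact (mem_filter.mp hx).2
          _ ≤ Multiset.card (nthRoots (2*(s-1)) a) := Multiset.toFinset_card_le _
          _ ≤ 2*(s-1) := card_nthRoots _ _
      have h1 := Finset.card_le_mul_card_image (univ.erase (0:F)) (2*(s-1)) hbound
      have h2 : (univ.erase (0:F)).card = q - 1 := by
        rw [card_erase_of_mem (mem_univ _), card_univ, hF]
      have h3 : q - 1 = 2*(s-1) * c := by omega
      rw [h2, h3, ← hA] at h1
      exact Nat.le_of_mul_le_mul_left h1 hApos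
    set R : Finset F := univ.filter (fun x => x ^ c = 1) with hR
    have hAR : A ⊆ R := by
      intro x hx
      rw [hR, mem_filter]
      exact ⟨mem_univ _, hA1 x hx⟩
    have hRsub : R ⊆ (nthRoots c (1:F)).toFinset := by
      intro x hx
      rw [Multiset.mem_toFinset, mem_nthRoots (by omega : 0 < c)]
      exact (mem_filter.mp hx).2
    have hRcard : R.card ≤ c :=
      le_trans (Finset.card_le_card hRsub)
        (le_trans (Multiset.toFinset_card_le _) (card_nthRoots _ _))
    have hA_eq : A = R := Finset.eq_of_subset_of_card_le hAR (le_trans hRcard hAcard)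
    have hH : ∀ x : F, x ^ c = 1 → x - δ ≠ 0 ∧ (x - δ) ^ e = 1 := by
      intro x hx
      apply hAprop
      rw [hA_eq, hR, mem_filter]
      exact ⟨mem_univ _, hx⟩
    have hpoly : ∀ x : F, x ^ c = 1 → (1 - δ ^ s * x) ^ c = (x - δ) ^ c := by
      intro x hx
      have hxs : x ^ s * x = 1 := by
        have h1 : x ^ (s+1) = 1 := by rw [← h2c, mul_comm, pow_mul, hx, one_pow]
        rwa [pow_succ] at h1
      obtain ⟨hxd0, hxde⟩ := hH x hx
      have h1 : 1 - δ ^ s * x = x * ((x - δ) ^ s) := by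
        rw [frob]
        linear_combination -hxs
      have h2 : (1 - δ ^ s * x) ^ c = x ^ c * ((x - δ) ^ (s * c)) := by
        rw [h1, mul_pow, ← pow_mul]
      rwa [hx, one_mul, hsc, pow_add, hxde, one_mul] at h2
    set P : F[X] := (C (-(δ ^ s)) * X + C 1) ^ c - (C 1 * X + C (-δ)) ^ c
        - C ((-(δ ^ s)) ^ c - 1) * (X ^ c - 1) with hP
    have hPeval : ∀ x : F, x ^ c = 1 → P.eval x = 0 := by
      intro x hx
      have h1 := hpoly x hx
      simp only [hP, eval_sub, eval_mul, eval_add, eval_pow, eval_C, eval_X, eval_one]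
      rw [hx]
      have h2 : -(δ^s) * x + 1 = 1 - δ^s * x := by ring
      have h3 : (1:F) * x + -δ = x - δ := by ring
      rw [h2, h3, h1]; ring
    have hlinpow : ∀ a b : F, ((C a * X + C b) ^ c).natDegree ≤ c := by
      intro a b
      calc ((C a * X + C b) ^ c).natDegree ≤ c * (C a * X + C b).natDegree :=
            natDegree_pow_le
        _ ≤ c * 1 := Nat.mul_le_mul_left c natDegree_linear_le
        _ = c := mul_one c
    have hPdeg : P.natDegree ≤ c := by
      refine le_trans (natDegree_sub_le _ _) (max_le (le_trans (natDegree_sub_le _ _) (max_le ?_ ?_)) ?_)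
      · exact hlinpow _ _
      · exact hlinpow _ _
      · refine le_trans (natDegree_C_mul_le _ _) (le_trans (natDegree_sub_le _ _) ?_)
        simp [natDegree_X_pow]
    have hPcoeffc : P.coeff c = 0 := by
      simp only [hP, coeff_sub, coeff_C_mul]
      rw [coeff_linear_pow _ _ _ _ le_rfl, coeff_linear_pow _ _ _ _ le_rfl,
        coeff_X_pow, coeff_one, if_pos rfl, if_neg (by omega : ¬ c = 0)]
      simp [Nat.choose_self, Nat.sub_self]
    have hP0 : P = 0 := by
      by_contra hne
      have hsub : R ⊆ P.roots.toFinset := by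
        intro x hx
        rw [Multiset.mem_toFinset, mem_roots']
        exact ⟨hne, hPeval x (mem_filter.mp hx).2⟩
      have hdge : c ≤ P.natDegree :=
        le_trans hAcard (le_trans (le_of_eq (congrArg card hA_eq))
          (le_trans (Finset.card_le_card hsub)
            (le_trans (Multiset.toFinset_card_le _) (card_roots' P))))
      have hdeq : P.natDegree = c := le_antisymm hPdeg hdge
      have : P.leadingCoeff = 0 := by rw [leadingCoeff, hdeq, hPcoeffc]
      exact hne (leadingCoeff_eq_zero.mp this)
    -- cast facts
    have hsF : ((s:ℕ) : F) = 0 := by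
      rw [hs]
      push_cast
      rw [hpF]
      exact zero_pow hk.ne'
    have hcF : (2:F) * (c:F) = 1 := by
      have h1 : ((2*c : ℕ) : F) = ((s+1 : ℕ) : F) := by rw [h2c]
      push_cast at h1
      rw [hsF] at h1
      simpa using h1
    have hcne : ((c:ℕ) : F) ≠ 0 := by
      intro h
      rw [h, mul_zero] at hcF
      exact zero_ne_one hcF
    have hcoeff1 : -(δ ^ s) = (-δ) ^ (c - 1) := by
      have h1 : P.coeff 1 = 0 := by rw [hP0]; simp
      rw [hP, coeff_sub, coeff_sub, coeff_C_mul,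
        coeff_linear_pow _ _ _ 1 (by omega), coeff_linear_pow _ _ _ 1 (by omega),
        coeff_sub, coeff_X_pow, coeff_one,
        if_neg (by omega : ¬ (1:ℕ) = c), if_neg (by omega : ¬ (1:ℕ) = 0)] at h1
      simp only [pow_one, one_pow, one_mul, mul_one, Nat.choose_one_right, sub_zero, mul_zero] at h1
      have h2 : (-(δ ^ s) - (-δ) ^ (c-1)) * ((c:ℕ) : F) = 0 := by linear_combination h1
      rcases mul_eq_zero.mp h2 with h3 | h3
      · exact sub_eq_zero.mp h3
      · exact absurd h3 hcne
    have hδs1 : δ ^ s * δ = 1 := by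
      rcases Nat.lt_or_ge c 3 with hc3 | hc3
      · -- c = 2, s = 3
        have hceq : c = 2 := by omega
        have hseq : s = 3 := by omega
        exfalso
        rw [hceq] at hcoeff1
        have h1 : δ ^ s = δ := by
          simpa using hcoeff1
        rw [hseq] at h1
        have h3 : δ * δ ^ 2 = δ * 1 := by
          rw [mul_one]
          linear_combination h1
        have h2 : δ ^ c = 1 := by
          rw [hceq]
          exact mul_left_cancel₀ hδ h3
        exact (hH δ h2).1 (sub_self δ)
      · -- c ≥ 3
        have hchoose2 : (2:F) * ((c.choose 2 : ℕ) : F) = (c:F) * ((c:F) - 1) := by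
          have hev : Even ((c-1) * c) := by
            have h0 := Nat.even_mul_succ_self (c-1)
            rwa [Nat.sub_add_cancel (by omega : 1 ≤ c)] at h0
          have hdvd : 2 ∣ c * (c - 1) := by
            rw [mul_comm]
            exact hev.two_dvd
          have hnat : 2 * c.choose 2 = c * (c - 1) := by
            rw [Nat.choose_two_right]
            exact Nat.mul_div_cancel' hdvd
          have hcast := congrArg (Nat.cast : ℕ → F) hnat
          push_cast [Nat.cast_sub (by omega : 1 ≤ c)] at hcast
          exact hcast
        have hch2ne : ((c.choose 2 : ℕ) : F) ≠ 0 := by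
          intro h
          have hch0 : (0:F) = (c:F) * ((c:F) - 1) := by
            rw [← hchoose2, h, mul_zero]
          rcases mul_eq_zero.mp hch0.symm with h3 | h3
          · exact hcne h3
          · have h4 : ((c:ℕ):F) = 1 := by linear_combination h3
            have h5 := hcF
            rw [h4, mul_one] at h5
            have h6 : (1:F) = 0 := by linear_combination h5
            exact one_ne_zero h6
        have hcoeff2 : (-(δ ^ s))^2 = (-δ) ^ (c - 2) := by
          have h1 : P.coeff 2 = 0 := by rw [hP0]; simp
          rw [hP, coeff_sub, coeff_sub, coeff_C_mul,
            coeff_linear_pow _ _ _ 2 (by omega), coeff_linear_pow _ _ _ 2 (by omega),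
            coeff_sub, coeff_X_pow, coeff_one,
            if_neg (by omega : ¬ (2:ℕ) = c), if_neg (by omega : ¬ (2:ℕ) = 0)] at h1
          simp only [one_pow, one_mul, mul_one, sub_zero, mul_zero] at h1
          have h2 : ((-(δ ^ s))^2 - (-δ) ^ (c-2)) * ((c.choose 2 : ℕ) : F) = 0 := by
            linear_combination h1
          rcases mul_eq_zero.mp h2 with h3 | h3
          · exact sub_eq_zero.mp h3
          · exact absurd h3 hch2ne
        have h1 : (-δ) ^ (c-1) = (-δ) ^ (c-2) * (-δ) := by
          rw [← pow_succ]
          congr 1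
          omega
        have h2 : -(δ^s) = (-(δ^s))^2 * (-δ) := by
          conv_lhs => rw [hcoeff1, h1, ← hcoeff2]
        have hG : -(δ^s) ≠ 0 := neg_ne_zero.mpr (pow_ne_zero s hδ)
        have h3 : -(δ^s) * 1 = -(δ^s) * (-(δ^s) * (-δ)) := by
          rw [mul_one]
          linear_combination h2
        have h4 := mul_left_cancel₀ hG h3
        linear_combination -h4
    -- final step
    obtain ⟨hy0, hye⟩ := hH 1 (one_pow c)
    have hys : δ * (1 - δ) ^ s = -(1 - δ) := by
      rw [frob, one_pow]
      linear_combination -hδs1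
    have h7 : (δ * (1 - δ) ^ s) ^ c = (-(1 - δ)) ^ c := by rw [hys]
    rw [mul_pow, ← pow_mul, hsc, pow_add, hye, one_mul, neg_pow] at h7
    have hyc : (1 - δ) ^ c ≠ 0 := pow_ne_zero _ hy0
    have hδceq : δ ^ c = (-1) ^ c := mul_right_cancel₀ hyc h7
    have hcodd : c % 2 = 1 := by
      by_contra hco
      have hev : Even c := Nat.even_iff.mpr (by omega)
      rw [hev.neg_one_pow] at hδceq
      exact (hH δ hδceq).1 (sub_self δ)
    constructor
    · omega
    · rw [hδceq, (Nat.odd_iff.mpr hcodd).neg_one_pow]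
  · -- backward direction
    rintro ⟨h4, hδc'⟩
    intro u hu
    have hcodd : c % 2 = 1 := by omega
    have hoc : Odd c := Nat.odd_iff.mpr hcodd
    have hδs1 : δ ^ s * δ = 1 := by
      have h1 : δ ^ (s + 1) = 1 := by
        rw [← h2c, mul_comm, pow_mul, hδc', neg_one_sq]
      rwa [pow_succ] at h1
    set w : F := u ^ (2 * s) - δ * u ^ 2 with hw
    have harith : 2 * s * c = 2 * c + 2 * e := by rw [hm, he, hm1]; ring
    have hw0 : w ≠ 0 := by
      intro h0
      have h1 : δ * u ^ 2 = u ^ (2 * s) := by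
        rw [hw, sub_eq_zero] at h0; exact h0.symm
      have h2 : (δ * u ^ 2) ^ c = (u ^ (2 * s)) ^ c := by rw [h1]
      rw [mul_pow, ← pow_mul, ← pow_mul, hδc', harith, pow_add, hu2e u hu, mul_one] at h2
      have h5 : u ^ (2 * c) ≠ 0 := pow_ne_zero _ hu
      have h6 : (2 : F) * u ^ (2 * c) = 0 := by linear_combination -h2
      rcases mul_eq_zero.mp h6 with h | h
      · exact htwo h
      · exact h5 h
    have hws : w ^ s = u ^ 2 - δ ^ s * u ^ (2 * s) := by
      have h1 : (u ^ (2 * s)) ^ s = u ^ 2 := by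
        rw [← pow_mul]
        have h2 : 2 * s * s = s * s * 2 := by ring
        rw [h2, pow_mul, hxq]
      have h3 : (δ * u ^ 2) ^ s = δ ^ s * u ^ (2 * s) := by
        rw [mul_pow, ← pow_mul]
      rw [hw, frob, h1, h3]
    have hkey : δ * w ^ s = -w := by
      rw [hws, hw]; linear_combination (-(u ^ (2 * s))) * hδs1
    have h7 : (δ * w ^ s) ^ c = (-w) ^ c := by rw [hkey]
    rw [mul_pow, hδc', ← pow_mul, hoc.neg_pow] at h7
    have h8 : w ^ (s * c) = w ^ c := by linear_combination -h7
    rw [hsc, pow_add] at h8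
    have h10 : w ^ c ≠ 0 := pow_ne_zero _ hw0
    have h9 : w ^ e = 1 := mul_right_cancel₀ h10 (by rw [h8, one_mul])
    exact (hsq w hw0).mp h9
end

section
/- Let p be an odd prime, q = p^m, and let b, c ∈ F_{q²}* with N(b) = N(c). Let c₀ ∈ F_{q²}, let k be an integer with 0 < k < m, and set ℓ(x) = (b·x^q + c·x)^{p^k} − c₀·(b·x^q + c·x) and f(x) = x^{q+1} + ℓ(x²). Then f is a planar function on F_{q²} if and only if all three of the following hold: (i) (b^{−1}·c)^{(q+1)/2} = −1; (ii) for every ω ∈ F_{q²}* with ω^{p^k−1} = c₀ one has ω^{q−1} ≠ b^q·c^{−1}; (iii) for every ω ∈ F_{q²}* with ((b^{−1}·c^q)^{p^k} − 1)·ω^{p^k−1} = b^{−1}·c^q·c₀^q − c₀ one has ω^{q−1} ≠ b^q·c^{−1}. -/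
/-- In `F` with `card F = q²`, every `(q+1)`-st root of unity is a `(q-1)`-st power. -/
lemma aux_pow_surj (F : Type*) [Field F] [Fintype F] [DecidableEq F] (q : ℕ) (hq1 : 1 ≤ q)
    (hF : Fintype.card F = q ^ 2) (δ : F) (hδ : δ ≠ 0) (h : δ ^ (q + 1) = 1) :
    ∃ y : F, y ≠ 0 ∧ y ^ (q - 1) = δ := by
  obtain ⟨g, hg⟩ := IsCyclic.exists_monoid_generator (α := Fˣ)
  have hzp : ∀ x : Fˣ, x ∈ Subgroup.zpowers g := by
    intro x
    obtain ⟨n, hn⟩ := (Submonoid.mem_powers_iff _ _).mp (hg x)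
    exact ⟨(n : ℤ), by show g ^ (n : ℤ) = x; rw [zpow_natCast, hn]⟩
  have hord : orderOf g = q ^ 2 - 1 := by
    rw [orderOf_eq_card_of_forall_mem_zpowers hzp, Nat.card_eq_fintype_card, Fintype.card_units, hF]
  obtain ⟨t, ht⟩ := (Submonoid.mem_powers_iff _ _).mp (hg (Units.mk0 δ hδ))
  have hu : (Units.mk0 δ hδ) ^ (q + 1) = 1 := by
    ext
    push_cast
    exact h
  have hdvd : orderOf g ∣ t * (q + 1) :=
    orderOf_dvd_of_pow_eq_one (by rw [pow_mul, ht, hu])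
  rw [hord] at hdvd
  have hfact : q ^ 2 - 1 = (q - 1) * (q + 1) := by
    have e1 : q * (q + 1) = q ^ 2 + q := by ring
    rw [Nat.sub_one_mul, e1]
    have : 1 ≤ q ^ 2 := Nat.one_le_pow _ _ (by omega)
    omega
  rw [hfact] at hdvd
  have hd2 : (q - 1) ∣ t := by
    have := (Nat.mul_dvd_mul_iff_right (show 0 < q + 1 by omega)).mp hdvd
    exact this
  obtain ⟨s, hs⟩ := hd2
  refine ⟨((g ^ s : Fˣ) : F), Units.ne_zero _, ?_⟩
  have : (g ^ s) ^ (q - 1) = Units.mk0 δ hδ := by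
    rw [← pow_mul, mul_comm s (q - 1), ← hs, ht]
  calc ((g ^ s : Fˣ) : F) ^ (q - 1) = (((g ^ s) ^ (q - 1) : Fˣ) : F) := by push_cast; ring
    _ = δ := by rw [this]; rfl

/-- In `F` with `card F = q²`, `q` odd, every root of `X^((q+1)/2) = 1` is of the form
`(e^(q-1))^2`. -/
lemma aux_sqrt (F : Type*) [Field F] [Fintype F] [DecidableEq F] (q : ℕ) (hqo : q % 2 = 1) (hq1 : 1 ≤ q)
    (hF : Fintype.card F = q ^ 2) (δ : F) (hδ : δ ≠ 0) (h : δ ^ ((q + 1) / 2) = 1) :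
    ∃ e : F, e ≠ 0 ∧ (e ^ (q - 1)) ^ 2 = δ := by
  obtain ⟨g, hg⟩ := IsCyclic.exists_monoid_generator (α := Fˣ)
  have hzp : ∀ x : Fˣ, x ∈ Subgroup.zpowers g := by
    intro x
    obtain ⟨n, hn⟩ := (Submonoid.mem_powers_iff _ _).mp (hg x)
    exact ⟨(n : ℤ), by show g ^ (n : ℤ) = x; rw [zpow_natCast, hn]⟩
  have hord : orderOf g = q ^ 2 - 1 := by
    rw [orderOf_eq_card_of_forall_mem_zpowers hzp, Nat.card_eq_fintype_card, Fintype.card_units, hF]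
  obtain ⟨t, ht⟩ := (Submonoid.mem_powers_iff _ _).mp (hg (Units.mk0 δ hδ))
  have hu : (Units.mk0 δ hδ) ^ ((q + 1) / 2) = 1 := by
    ext
    push_cast
    exact h
  have hdvd : orderOf g ∣ t * ((q + 1) / 2) :=
    orderOf_dvd_of_pow_eq_one (by rw [pow_mul, ht, hu])
  rw [hord] at hdvd
  have hfact : q ^ 2 - 1 = ((q - 1) * 2) * ((q + 1) / 2) := by
    have e1 : ((q - 1) * 2) * ((q + 1) / 2) = (q - 1) * (2 * ((q + 1) / 2)) := by ring
    have e2 : 2 * ((q + 1) / 2) = q + 1 := by omega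
    have e3 : q * (q + 1) = q ^ 2 + q := by ring
    rw [e1, e2, Nat.sub_one_mul, e3]
    have : 1 ≤ q ^ 2 := Nat.one_le_pow _ _ (by omega)
    omega
  rw [hfact] at hdvd
  have hd2 : (q - 1) * 2 ∣ t := by
    exact (Nat.mul_dvd_mul_iff_right (show 0 < (q + 1) / 2 by omega)).mp hdvd
  obtain ⟨s, hs⟩ := hd2
  refine ⟨((g ^ s : Fˣ) : F), Units.ne_zero _, ?_⟩
  have : ((g ^ s) ^ (q - 1)) ^ 2 = Units.mk0 δ hδ := by
    rw [← pow_mul, ← pow_mul, show s * ((q - 1) * 2) = t by rw [hs]; ring, ht]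
  calc (((g ^ s : Fˣ) : F) ^ (q - 1)) ^ 2 = ((((g ^ s) ^ (q - 1)) ^ 2 : Fˣ) : F) := by
        push_cast; ring
    _ = δ := by rw [this]; rfl

/-- for `ℓ(x) = (b·x^q + c·x)^{p^k} − c₀·(b·x^q + c·x)` with
`N(b) = N(c)`, `b, c ≠ 0` and `0 < k < m`, the function `x^{q+1} + ℓ(x²)` is planar
on `F_{q²}` iff the three listed conditions hold. -/
theorem planar_iff_three_conditions
    (p m k : ℕ) (hp : p.Prime) (hodd : Odd p) (hm : 0 < m) (hk0 : 0 < k) (hkm : k < m)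
    (q : ℕ) (hq : q = p ^ m)
    (F : Type*) [Field F] [Fintype F] (hF : Fintype.card F = q ^ 2)
    (b c c₀ : F) (hb : b ≠ 0) (hc : c ≠ 0) (hbc : b ^ (q + 1) = c ^ (q + 1))
    (ℓ : F → F)
    (hℓ : ∀ x, ℓ x = (b * x ^ q + c * x) ^ p ^ k - c₀ * (b * x ^ q + c * x))
    (f : F → F) (hf : ∀ x, f x = x ^ (q + 1) + ℓ (x ^ 2)) :
    (∀ e : F, e ≠ 0 → Function.Bijective (fun x => f (x + e) - f x)) ↔
      ((b⁻¹ * c) ^ ((q + 1) / 2) = -1 ∧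
        (∀ ω : F, ω ≠ 0 → ω ^ (p ^ k - 1) = c₀ → ω ^ (q - 1) ≠ b ^ q * c⁻¹) ∧
        (∀ ω : F, ω ≠ 0 →
          ((b⁻¹ * c ^ q) ^ p ^ k - 1) * ω ^ (p ^ k - 1) = b⁻¹ * c ^ q * c₀ ^ q - c₀ →
          ω ^ (q - 1) ≠ b ^ q * c⁻¹)) := by
  classical
  haveI fp : Fact p.Prime := ⟨hp⟩
  have hp2 : p ≠ 2 := by
    rintro rfl
    rw [Nat.odd_iff] at hodd
    omega
  have hp3 : 3 ≤ p := by have := hp.two_le; omega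
  have hq3 : 3 ≤ q := by
    rw [hq]
    calc 3 ≤ p := hp3
    _ ≤ p ^ m := Nat.le_self_pow (by omega) p
  have hqodd : q % 2 = 1 := by
    rw [hq, Nat.pow_mod]
    rw [Nat.odd_iff] at hodd
    rw [hodd, Nat.one_pow, Nat.one_mod_eq_one.mpr (by omega)]
  have hqne : q ≠ 0 := by omega
  have hpk1 : 1 ≤ p ^ k := Nat.one_le_pow _ _ hp.pos
  have hpkne : p ^ k ≠ 0 := by omega
  -- characteristic p
  haveI hcharF : CharP F (ringChar F) := ringChar.charP F
  have hrp : (ringChar F).Prime := CharP.char_is_prime F (ringChar F)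
  obtain ⟨n, hrp2, hcard⟩ := FiniteField.card F (ringChar F)
  have hpr : p = ringChar F := by
    have h1 : p ∣ (ringChar F) ^ (n : ℕ) := by
      rw [← hcard, hF, hq, ← pow_mul]
      exact dvd_pow_self p (by positivity)
    exact (Nat.prime_dvd_prime_iff_eq hp hrp).mp (hp.dvd_of_dvd_pow h1)
  haveI hchar : CharP F p := by rw [hpr]; exact hcharF
  have frobq_add : ∀ x y : F, (x + y) ^ q = x ^ q + y ^ q := by
    intro x y; rw [hq]; exact add_pow_char_pow x y p m
  have frobq_sub : ∀ x y : F, (x - y) ^ q = x ^ q - y ^ q := by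
    intro x y; rw [hq]; exact sub_pow_char_pow x y m
  have frobk_add : ∀ x y : F, (x + y) ^ p ^ k = x ^ p ^ k + y ^ p ^ k := by
    intro x y; exact add_pow_char_pow x y p k
  have hqq : ∀ x : F, (x ^ q) ^ q = x := by
    intro x; rw [← pow_mul, ← sq, ← hF]; exact FiniteField.pow_card x
  have h2 : (2 : F) ≠ 0 := by
    intro h
    have h1 : ((2 : ℕ) : F) = 0 := by exact_mod_cast h
    have := (CharP.cast_eq_zero_iff F p 2).mp h1
    have := Nat.le_of_dvd (by norm_num) this
    omega
  have h2q : (2 : F) ^ q = 2 := by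
    rw [hq, show (2 : F) = 1 + 1 by norm_num, add_pow_char_pow (1:F) 1 p m]
    norm_num
  have hℓ0 : ℓ 0 = 0 := by
    rw [hℓ]
    simp [zero_pow hqne, zero_pow hpkne]
  have hℓadd : ∀ u v : F, ℓ (u + v) = ℓ u + ℓ v := by
    intro u v
    have h1 : b * (u + v) ^ q + c * (u + v) = (b * u ^ q + c * u) + (b * v ^ q + c * v) := by
      rw [frobq_add]; ring
    rw [hℓ, hℓ, hℓ, h1, frobk_add]
    ring
  have hdiff : ∀ e x : F, f (x + e) - f x =
      (e * x ^ q + e ^ q * x + ℓ (2 * e * x)) + (e ^ q * e + ℓ (e ^ 2)) := by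
    intro e x
    have h1 : (x + e) ^ 2 = (x ^ 2 + 2 * e * x) + e ^ 2 := by ring
    rw [hf, hf, h1, pow_succ, pow_succ, frobq_add, hℓadd, hℓadd]
    ring
  have hfact : (q - 1) + (q - 1) * q = q ^ 2 - 1 := by
    obtain ⟨r, rfl⟩ : ∃ r, q = r + 1 := ⟨q - 1, by omega⟩
    have e1 : (r + 1) ^ 2 = (r + r * (r + 1)) + 1 := by ring
    simp [e1, Nat.sub_one_mul]
  have hlam1 : ∀ e : F, e ≠ 0 → e ^ (q - 1) * (e ^ (q - 1)) ^ q = 1 := by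
    intro e he
    have h1 : e ^ (q ^ 2 - 1) = 1 := by rw [← hF]; exact FiniteField.pow_card_sub_one_eq_one e he
    rw [← pow_mul, ← pow_add, hfact]
    exact h1
  have hkey : ∀ e x : F, 2 * e ^ (q - 1) * (e * x ^ q + e ^ q * x + ℓ (2 * e * x)) =
      (2 * e * x) ^ q + (e ^ (q - 1)) ^ 2 * (2 * e * x) + 2 * e ^ (q - 1) * ℓ (2 * e * x) := by
    intro e x
    have he1 : e ^ (q - 1) * e = e ^ q := by
      rw [← pow_succ]
      congr 1
      omega
    rw [mul_pow, mul_pow, h2q]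
    linear_combination (2 * x ^ q - 2 * e ^ (q - 1) * x) * he1
  -- the core kernel-triviality lemma
  have key : ∀ e x : F, e ≠ 0 →
      (b⁻¹ * c) ^ ((q + 1) / 2) = -1 →
      (∀ ω : F, ω ≠ 0 →
        ((b⁻¹ * c ^ q) ^ p ^ k - 1) * ω ^ (p ^ k - 1) = b⁻¹ * c ^ q * c₀ ^ q - c₀ →
        ω ^ (q - 1) ≠ b ^ q * c⁻¹) →
      e * x ^ q + e ^ q * x + ℓ (2 * e * x) = 0 → x = 0 := by
    intro e x he h1 h3 heq
    by_contra hx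
    have hy0 : (2 : F) * e * x ≠ 0 := mul_ne_zero (mul_ne_zero h2 he) hx
    set y : F := 2 * e * x with hy
    set lam : F := e ^ (q - 1) with hlamdef
    have hlam0 : lam ≠ 0 := pow_ne_zero _ he
    set ν : F := lam ^ q with hνdef
    have hν0 : ν ≠ 0 := pow_ne_zero _ hlam0
    have hμ : lam * ν = 1 := hlam1 e he
    have eq0 : y ^ q + lam ^ 2 * y + 2 * lam * ℓ y = 0 := by
      have hk := hkey e x
      rw [← hy, ← hlamdef, heq, mul_zero] at hk
      linear_combination -hk
    set z : F := b * y ^ q + c * y with hzdef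
    have hℓy : ℓ y = z ^ p ^ k - c₀ * z := by rw [hℓ, ← hzdef]
    by_cases hz0 : z = 0
    · -- kernel case z = 0
      have hzy : ℓ y = 0 := by rw [hℓy, hz0]; simp [zero_pow hpkne]
      have hyq : y ^ q = -(lam ^ 2) * y := by
        rw [hzy] at eq0
        linear_combination eq0
      have hcb : c = b * lam ^ 2 := by
        have h5 : (c - b * lam ^ 2) * y = 0 := by
          have h6 : b * y ^ q + c * y = 0 := by rw [← hzdef]; exact hz0
          linear_combination h6 - b * hyq
        rcases mul_eq_zero.mp h5 with h7 | h7
        · linear_combination h7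
        · exact absurd h7 hy0
      have hbci : b⁻¹ * c = lam ^ 2 := by
        rw [hcb]
        field_simp
      have hcontr : (1 : F) = -1 := by
        rw [← h1, hbci, ← pow_mul, show 2 * ((q + 1) / 2) = q + 1 by omega, pow_succ,
          ← hνdef, mul_comm, hμ]
      exact h2 (by linear_combination hcontr)
    · -- z ≠ 0 case
      set R : F := 2 * c₀ * z - 2 * z ^ p ^ k with hRdef
      have eqy : y ^ q = lam * R - lam ^ 2 * y := by
        rw [hℓy] at eq0
        rw [hRdef]
        linear_combination eq0
      have hsub : y = ν * R ^ q - ν ^ 2 * y ^ q := by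
        have h6 := congrArg (· ^ q) eqy
        rw [hqq, frobq_sub, mul_pow, mul_pow] at h6
        have e2 : (lam ^ 2) ^ q = ν ^ 2 := by rw [hνdef]; exact pow_right_comm lam 2 q
        rw [e2, ← hνdef] at h6
        exact h6
      have e1 : lam ^ 2 * ν ^ 2 = 1 := by rw [← mul_pow, hμ, one_pow]
      have h5 : ν * R ^ q = ν * R := by
        have h6 : y = ν * R ^ q - ν ^ 2 * (lam * R - lam ^ 2 * y) := by rw [← eqy]; exact hsub
        linear_combination -h6 - y * e1 + R * ν * hμ
      have hRq : R ^ q = R := mul_left_cancel₀ hν0 h5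
      set d : F := b ^ q * c⁻¹ with hd
      have hcq : c ^ q * c = b ^ q * b := by rw [← pow_succ, ← pow_succ]; exact hbc.symm
      have hdc : d * c = b ^ q := by rw [hd]; field_simp
      have hdb : d * b = c ^ q := by
        rw [hd]
        field_simp
        linear_combination -hcq
      have hzq : z ^ q = d * z := by
        have h7 : z ^ q = b ^ q * y + c ^ q * y ^ q := by
          rw [hzdef, frobq_add (b * y ^ q) (c * y), mul_pow b (y ^ q) q, mul_pow c y q, hqq y]
        have h8 : c * z ^ q = c * (d * z) := by
          rw [h7, hzdef]
          linear_combination (y ^ q) * hcq - (b * y ^ q + c * y) * hdc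
        exact mul_left_cancel₀ hc h8
      have hzq1 : z ^ (q - 1) = d := by
        have h9 : z ^ (q - 1) * z = d * z := by
          rw [← pow_succ, show q - 1 + 1 = q by omega]
          exact hzq
        exact mul_right_cancel₀ hz0 h9
      have hRqval : R ^ q = 2 * c₀ ^ q * (d * z) - 2 * (d * z) ^ p ^ k := by
        rw [hRdef, frobq_sub, mul_pow, mul_pow, mul_pow, h2q, ← pow_mul, mul_comm (p ^ k) q,
          pow_mul, hzq]
      have h10 : 2 * ((d ^ p ^ k - 1) * z ^ p ^ k) = 2 * ((d * c₀ ^ q - c₀) * z) := by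
        have h11 := hRq
        rw [hRqval, mul_pow d z (p ^ k)] at h11
        linear_combination -h11 - hRdef
      have h11 : (d ^ p ^ k - 1) * z ^ p ^ k = (d * c₀ ^ q - c₀) * z := mul_left_cancel₀ h2 h10
      have h12 : (d ^ p ^ k - 1) * z ^ (p ^ k - 1) = d * c₀ ^ q - c₀ := by
        have h13 : ((d ^ p ^ k - 1) * z ^ (p ^ k - 1)) * z = (d * c₀ ^ q - c₀) * z := by
          rw [mul_assoc, ← pow_succ, show p ^ k - 1 + 1 = p ^ k by omega]
          exact h11
        exact mul_right_cancel₀ hz0 h13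
      have hd' : b⁻¹ * c ^ q = d := by
        rw [hd]
        field_simp
        linear_combination hcq
      exact h3 z hz0 (by rw [hd']; exact h12) hzq1

  constructor
  · -- planar → three conditions
    intro H
    have hnotinj : ∀ e x : F, e ≠ 0 → x ≠ 0 →
        e * x ^ q + e ^ q * x + ℓ (2 * e * x) = 0 → False := by
      intro e x he hx hLe
      have hL0 : e * (0 : F) ^ q + e ^ q * 0 + ℓ (2 * e * 0) = 0 := by
        rw [zero_pow hqne, mul_zero, mul_zero, mul_zero, hℓ0]
        ring
      have := (H e he).injective (a₁ := x) (a₂ := 0)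
        (by show f (x + e) - f x = f (0 + e) - f 0; rw [hdiff e x, hdiff e 0, hLe, hL0])
      exact hx this
    have hi : (b⁻¹ * c) ^ ((q + 1) / 2) = -1 := by
      have hbc0 : b⁻¹ * c ≠ 0 := mul_ne_zero (inv_ne_zero hb) hc
      have hs2 : ((b⁻¹ * c) ^ ((q + 1) / 2) - 1) * ((b⁻¹ * c) ^ ((q + 1) / 2) + 1) = 0 := by
        have e2 : ((b⁻¹ * c) ^ ((q + 1) / 2)) ^ 2 = 1 := by
          rw [← pow_mul, show (q + 1) / 2 * 2 = q + 1 by omega, mul_pow, inv_pow, hbc]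
          exact inv_mul_cancel₀ (pow_ne_zero _ hc)
        linear_combination e2
      rcases mul_eq_zero.mp hs2 with h | h
      · exfalso
        have hs1 : (b⁻¹ * c) ^ ((q + 1) / 2) = 1 := by linear_combination h
        obtain ⟨e, he0, hesq⟩ := aux_sqrt F q hqodd (by omega) hF _ hbc0 hs1
        obtain ⟨y, hy0, hyq1⟩ := aux_pow_surj F q (by omega) hF (-(b⁻¹ * c))
          (neg_ne_zero.mpr hbc0)
          (by
            have hev : Even (q + 1) := Nat.even_iff.mpr (by omega)
            rw [hev.neg_pow, show q + 1 = (q + 1) / 2 * 2 by omega, pow_mul, hs1, one_pow])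
        have h2e : (2 : F) * e ≠ 0 := mul_ne_zero h2 he0
        set x₀ : F := y / (2 * e) with hx₀d
        have hx₀ : x₀ ≠ 0 := div_ne_zero hy0 h2e
        have hyx : 2 * e * x₀ = y := by
          rw [hx₀d, mul_div_assoc']
          exact mul_div_cancel_left₀ y h2e
        have hyql : y ^ q = -(b⁻¹ * c) * y := by
          calc y ^ q = y ^ (q - 1) * y := by rw [← pow_succ, show q - 1 + 1 = q by omega]
          _ = -(b⁻¹ * c) * y := by rw [hyq1]
        have hbb : b * b⁻¹ = 1 := mul_inv_cancel₀ hb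
        have hzy : b * y ^ q + c * y = 0 := by
          rw [hyql]
          linear_combination (-(c * y)) * hbb
        have hly : ℓ y = 0 := by rw [hℓ, hzy]; simp [zero_pow hpkne]
        have hLe : e * x₀ ^ q + e ^ q * x₀ + ℓ (2 * e * x₀) = 0 := by
          have hk := hkey e x₀
          rw [hyx] at hk
          rw [hyx]
          have hz2 : y ^ q + (e ^ (q - 1)) ^ 2 * y + 2 * e ^ (q - 1) * ℓ y = 0 := by
            rw [hyql, hesq, hly]
            ring
          have h15 : 2 * e ^ (q - 1) * (e * x₀ ^ q + e ^ q * x₀ + ℓ y) = 0 := by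
            rw [hk]; exact hz2
          have h2l : (2 : F) * e ^ (q - 1) ≠ 0 := mul_ne_zero h2 (pow_ne_zero _ he0)
          exact (mul_eq_zero.mp h15).resolve_left h2l
        exact hnotinj e x₀ he0 hx₀ hLe
      · linear_combination h
    have hiii : ∀ ω : F, ω ≠ 0 →
        ((b⁻¹ * c ^ q) ^ p ^ k - 1) * ω ^ (p ^ k - 1) = b⁻¹ * c ^ q * c₀ ^ q - c₀ →
        ω ^ (q - 1) ≠ b ^ q * c⁻¹ := by
      intro z hz0 hωeq hωd
      set d : F := b ^ q * c⁻¹ with hd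
      have hcq : c ^ q * c = b ^ q * b := by rw [← pow_succ, ← pow_succ]; exact hbc.symm
      have hdc : d * c = b ^ q := by rw [hd]; field_simp
      have hdb : d * b = c ^ q := by
        rw [hd]
        field_simp
        linear_combination -hcq
      have hd' : b⁻¹ * c ^ q = d := by
        rw [hd]
        field_simp
        linear_combination hcq
      rw [hd'] at hωeq
      have hcb : c - b ≠ 0 := by
        intro hcb0
        have hcb1 : c = b := by linear_combination hcb0
        rw [hcb1, inv_mul_cancel₀ hb, one_pow] at hi
        exact h2 (by linear_combination hi)
      have hzq : z ^ q = d * z := by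
        calc z ^ q = z ^ (q - 1) * z := by rw [← pow_succ, show q - 1 + 1 = q by omega]
        _ = d * z := by rw [hωd, hd]
      set R : F := 2 * c₀ * z - 2 * z ^ p ^ k with hRdef
      have hRq : R ^ q = R := by
        have hRqv : R ^ q = 2 * c₀ ^ q * (d * z) - 2 * (d * z) ^ p ^ k := by
          rw [hRdef, frobq_sub, mul_pow, mul_pow, mul_pow, h2q, ← pow_mul,
            mul_comm (p ^ k) q, pow_mul, hzq]
        rw [hRqv, hRdef, mul_pow d z (p ^ k)]
        have h17 : z ^ p ^ k = z ^ (p ^ k - 1) * z := by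
          rw [← pow_succ, show p ^ k - 1 + 1 = p ^ k by omega]
        rw [h17]
        linear_combination (-2 * z) * hωeq
      have hcbq : c ^ q - b ^ q ≠ 0 := by
        have e3 : (c - b) ^ q = c ^ q - b ^ q := frobq_sub c b
        rw [← e3]
        exact pow_ne_zero _ hcb
      set yy : F := (z - b * R) / (c - b) with hyy
      have hyq : yy ^ q = (c * R - z) / (c - b) := by
        rw [hyy, div_pow, frobq_sub (z) (b * R), mul_pow b R q, hRq, hzq, frobq_sub c b,
          div_eq_div_iff hcbq hcb]
        have hbq1 : b ^ q * b = c ^ q * c := hcq.symm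
        linear_combination z * hdc - z * hdb - R * hcq
      have hzz : b * yy ^ q + c * yy = z := by
        rw [hyq, hyy]
        field_simp
        ring
      have hRsum : yy ^ q + yy = R := by
        rw [hyq, hyy]
        field_simp
        ring
      have hyy0 : yy ≠ 0 := by
        intro h0
        apply hz0
        rw [← hzz, h0, zero_pow hqne]
        ring
      set x₀ : F := yy / 2 with hx₀d
      have hx₀ : x₀ ≠ 0 := div_ne_zero hyy0 h2
      have hyx : 2 * (1 : F) * x₀ = yy := by
        rw [hx₀d, mul_one, mul_div_assoc']
        exact mul_div_cancel_left₀ yy h2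
      have hly : ℓ yy = z ^ p ^ k - c₀ * z := by rw [hℓ, hzz]
      have hLe : (1 : F) * x₀ ^ q + (1 : F) ^ q * x₀ + ℓ (2 * 1 * x₀) = 0 := by
        have hk := hkey 1 x₀
        rw [hyx] at hk
        rw [hyx]
        have h15 : 2 * (1 : F) ^ (q - 1) * ((1 : F) * x₀ ^ q + (1 : F) ^ q * x₀ + ℓ yy) = 0 := by
          rw [hk]
          simp only [one_pow, one_mul, mul_one]
          rw [hly]
          linear_combination hRsum + hRdef
        have h2l : (2 : F) * (1 : F) ^ (q - 1) ≠ 0 := by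
          rw [one_pow, mul_one]; exact h2
        exact (mul_eq_zero.mp h15).resolve_left h2l
      exact hnotinj 1 x₀ one_ne_zero hx₀ hLe
    refine ⟨hi, ?_, hiii⟩
    intro ω hω0 hc₀ hωd
    have hcq2 : c ^ q * c = b ^ q * b := by rw [← pow_succ, ← pow_succ]; exact hbc.symm
    have hd' : b⁻¹ * c ^ q = b ^ q * c⁻¹ := by
      field_simp
      linear_combination hcq2
    apply hiii ω hω0 ?_ hωd
    rw [hd', ← hc₀]
    have hq1' : (ω ^ (p ^ k - 1)) ^ q = (ω ^ q) ^ (p ^ k - 1) := by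
      rw [← pow_mul, ← pow_mul, mul_comm]
    have hωq : ω ^ q = (b ^ q * c⁻¹) * ω := by
      calc ω ^ q = ω ^ (q - 1) * ω := by rw [← pow_succ, show q - 1 + 1 = q by omega]
      _ = (b ^ q * c⁻¹) * ω := by rw [hωd]
    rw [hq1', hωq, mul_pow]
    have hdd : (b ^ q * c⁻¹) * (b ^ q * c⁻¹) ^ (p ^ k - 1) = (b ^ q * c⁻¹) ^ p ^ k := by
      rw [← pow_succ', show p ^ k - 1 + 1 = p ^ k by omega]
    linear_combination (-(ω ^ (p ^ k - 1))) * hdd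
  · -- three conditions → planar
    rintro ⟨hi, -, hiii⟩
    intro e he
    have hinj : Function.Injective (fun x => f (x + e) - f x) := by
      intro x₁ x₂ hx
      simp only at hx
      rw [hdiff e x₁, hdiff e x₂] at hx
      have h16 : e * x₁ ^ q + e ^ q * x₁ + ℓ (2 * e * x₁)
          = e * x₂ ^ q + e ^ q * x₂ + ℓ (2 * e * x₂) := by
        linear_combination hx
      have h18 : ℓ (2 * e * x₁) = ℓ (2 * e * (x₁ - x₂)) + ℓ (2 * e * x₂) := by
        rw [← hℓadd]
        congr 1
        ring
      have h17 : e * (x₁ - x₂) ^ q + e ^ q * (x₁ - x₂) + ℓ (2 * e * (x₁ - x₂)) = 0 := by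
        rw [frobq_sub]
        linear_combination h16 - h18
      have := key e (x₁ - x₂) he hi hiii h17
      exact sub_eq_zero.mp this
    exact Finite.injective_iff_bijective.mp hinj
end

section
/- Let p be an odd prime, q a power of p, and let α ∈ F_q be such that α² − 1 is a nonzero square in F_q. Let ℓ : F_{q²} → F_{q²} be an F_p-linear bijection such that ℓ(u) = α·u for every u ∈ F_q. Then x^{q+1} + ℓ(x²) is a planar function on F_{q²}. -/
/-- if `α ∈ F_q` with `α² − 1` a nonzero square in `F_q`, and `ℓ` is an
`F_p`-linear bijection of `F_{q²}` with `ℓ(u) = α·u` for all `u ∈ F_q`, then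
`x^{q+1} + ℓ(x²)` is planar on `F_{q²}`. -/
theorem planar_of_scalar_on_subfield
    (p m : ℕ) (hp : p.Prime) (hodd : Odd p) (hm : 0 < m)
    (q : ℕ) (hq : q = p ^ m)
    (F : Type*) [Field F] [Fintype F] (hF : Fintype.card F = q ^ 2)
    (α : F) (hα : α ^ q = α)
    (hsq : ∃ b : F, b ≠ 0 ∧ b ^ q = b ∧ b ^ 2 = α ^ 2 - 1)
    (ℓ : F → F) (hℓ : ∀ x y, ℓ (x + y) = ℓ x + ℓ y) (hbij : Function.Bijective ℓ)
    (hfix : ∀ u : F, u ^ q = u → ℓ u = α * u)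
    (f : F → F) (hf : ∀ x, f x = x ^ (q + 1) + ℓ (x ^ 2)) :
    ∀ c : F, c ≠ 0 → Function.Bijective (fun x => f (x + c) - f x) := by
  intro c hc
  -- characteristic of F is p
  have hcard : Fintype.card F = p ^ (2 * m) := by
    rw [hF, hq, ← pow_mul, mul_comm]
  haveI hch : CharP F (ringChar F) := ringChar.charP F
  have hrp : (ringChar F).Prime := CharP.char_is_prime F (ringChar F)
  obtain ⟨n, hn, hcard'⟩ := FiniteField.card F (ringChar F)
  have hrc : ringChar F = p := by
    have hdvd : p ∣ (ringChar F) ^ (n : ℕ) := by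
      rw [← hcard', hcard]
      exact dvd_pow_self p (by omega)
    have := hp.dvd_of_dvd_pow hdvd
    exact ((Nat.prime_dvd_prime_iff_eq hp hrp).mp this).symm
  haveI hchp : CharP F p := hrc ▸ hch
  haveI : Fact p.Prime := ⟨hp⟩
  -- basic facts
  have hadd : ∀ a b : F, (a + b) ^ q = a ^ q + b ^ q := by
    intro a b; rw [hq]; exact add_pow_char_pow a b p m
  have hsub : ∀ a b : F, (a - b) ^ q = a ^ q - b ^ q := by
    intro a b; rw [hq]; exact sub_pow_char_pow a b m
  have hqq : ∀ z : F, (z ^ q) ^ q = z := by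
    intro z
    rw [← pow_mul, ← pow_two]
    rw [← hF]; exact FiniteField.pow_card z
  have h2 : (2 : F) ≠ 0 := by
    intro h
    have h2' : (p : ℕ) ∣ 2 := (CharP.cast_eq_zero_iff F p 2).mp (by exact_mod_cast h)
    have : p = 2 := (Nat.prime_dvd_prime_iff_eq hp Nat.prime_two).mp h2'
    rw [this] at hodd
    exact (Nat.not_odd_iff_even.mpr (by norm_num)) hodd
  have h2q : (2 : F) ^ q = 2 := by
    have := hadd 1 1
    norm_num at this
    exact this
  have hα0 : α ≠ 0 := by
    intro h
    have h1 : ℓ 1 = α * 1 := hfix 1 (one_pow q)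
    have h0 : ℓ 0 = α * 0 := hfix 0 (by rw [zero_pow (by rw [hq]; exact pow_ne_zero _ hp.pos.ne')])
    rw [h] at h1 h0
    simp at h1 h0
    exact one_ne_zero (hbij.1 (h1.trans h0.symm))
  have hℓ0 : ℓ 0 = 0 := by
    have h := hℓ 0 0
    rw [add_zero] at h
    exact (left_eq_add.mp h)
  have hℓsub : ∀ a b : F, ℓ (a - b) = ℓ a - ℓ b := by
    intro a b
    have h := hℓ (a - b) b
    rw [sub_add_cancel] at h
    linear_combination -h
  have hcq : c ^ q ≠ 0 := pow_ne_zero _ hc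
  -- the key kernel computation
  have hkey : ∀ x : F, c * x ^ q + c ^ q * x + ℓ (2 * (c * x)) = 0 → x = 0 := by
    intro x heq
    by_contra hx
    set s : F := -(c * x ^ q + c ^ q * x) with hs_def
    have hs : ℓ (2 * (c * x)) = s := by rw [hs_def]; linear_combination heq
    have hoddq : Odd q := by rw [hq]; exact hodd.pow
    have hsq_s : s ^ q = s := by
      rw [hs_def, hoddq.neg_pow, hadd, mul_pow, mul_pow, hqq x, hqq c]
      ring
    have ht : (s * α⁻¹) ^ q = s * α⁻¹ := by
      rw [mul_pow, hsq_s, inv_pow, hα]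
    have hℓt : ℓ (s * α⁻¹) = s := by
      rw [hfix _ ht, ← mul_assoc, mul_comm α s, mul_assoc, mul_inv_cancel₀ hα0, mul_one]
    have h2cx : 2 * (c * x) = s * α⁻¹ := hbij.1 (hs.trans hℓt.symm)
    have hfixq : (2 * (c * x)) ^ q = 2 * (c * x) := by rw [h2cx, ht]
    have hcx : c ^ q * x ^ q = c * x := by
      have h' : 2 * (c ^ q * x ^ q) = 2 * (c * x) := by
        rw [← hfixq, mul_pow, mul_pow, h2q]
      exact mul_left_cancel₀ h2 h'
    have hE : α * (2 * (c * x)) = -(c * x ^ q + c ^ q * x) := by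
      rw [h2cx, ← mul_assoc, mul_comm α s, mul_assoc, mul_inv_cancel₀ hα0, mul_one]
    -- eliminate x^q using hcx multiplied relation
    have hE2 : 2 * α * (c ^ q * (c * x)) = -(c ^ 2 * x + (c ^ q) ^ 2 * x) := by
      linear_combination c ^ q * hE - c * hcx
    have hE3 : 2 * α * (c ^ q * c) = -(c ^ 2 + (c ^ q) ^ 2) := by
      exact mul_right_cancel₀ hx (show 2 * α * (c ^ q * c) * x = -(c ^ 2 + (c ^ q) ^ 2) * x by linear_combination hE2)
    obtain ⟨b, hb0, hbq, hbsq⟩ := hsq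
    set C : F := c ^ q with hC
    set d : F := c ^ 2 - C ^ 2 with hd
    set e : F := 2 * (C * c * b) with he
    have hd2 : d ^ 2 = e ^ 2 := by
      rw [hd, he]
      linear_combination (c ^ 2 + C ^ 2 - 2 * α * (C * c)) * hE3 - (4 * C ^ 2 * c ^ 2) * hbsq
    have hdq : d ^ q = -d := by
      rw [hd, hsub, pow_right_comm, hC, pow_right_comm, hqq]
      ring
    have heq2 : e ^ q = e := by
      rw [he, mul_pow, mul_pow, mul_pow, h2q, hC, hqq, hbq]
      ring
    have he0 : e ≠ 0 := by
      rw [he, hC]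
      intro h
      rcases mul_eq_zero.mp h with h' | h'
      · exact h2 h'
      · rcases mul_eq_zero.mp h' with h'' | h''
        · rcases mul_eq_zero.mp h'' with h3 | h3
          · exact hcq h3
          · exact hc h3
        · exact hb0 h''
    have h3 : (d - e) * (d + e) = 0 := by linear_combination hd2
    have hde : d = e ∨ d = -e := by
      rcases mul_eq_zero.mp h3 with h | h
      · exact Or.inl (sub_eq_zero.mp h)
      · exact Or.inr (eq_neg_of_add_eq_zero_left h)
    have hd0 : d = 0 := by
      rcases hde with h | h
      · have : -d = e := by rw [← hdq, h, heq2]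
        have h2d : 2 * d = 0 := by linear_combination h - this
        rcases mul_eq_zero.mp h2d with h' | h'
        · exact absurd h' h2
        · exact h'
      · have : -d = -e := by rw [← hdq, h, hoddq.neg_pow, heq2]
        have h2d : 2 * d = 0 := by linear_combination h - this
        rcases mul_eq_zero.mp h2d with h' | h'
        · exact absurd h' h2
        · exact h'
    rcases hde with h | h
    · exact he0 (h.symm.trans hd0)
    · exact he0 (neg_eq_zero.mp (by rw [← h, hd0]))
  -- injectivity of the difference map
  have hinj : Function.Injective (fun x => f (x + c) - f x) := by
    intro x y hxy
    simp only [hf] at hxy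
    have e1 : ℓ ((x + c) ^ 2) = ℓ (x ^ 2) + ℓ (2 * (c * x)) + ℓ (c ^ 2) := by
      rw [show (x + c) ^ 2 = x ^ 2 + (2 * (c * x) + c ^ 2) by ring, hℓ, hℓ]
      ring
    have e1' : ℓ ((y + c) ^ 2) = ℓ (y ^ 2) + ℓ (2 * (c * y)) + ℓ (c ^ 2) := by
      rw [show (y + c) ^ 2 = y ^ 2 + (2 * (c * y) + c ^ 2) by ring, hℓ, hℓ]
      ring
    have e2 : (x + c) ^ (q + 1) = (x ^ q + c ^ q) * (x + c) := by
      rw [pow_succ, hadd]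
    have e2' : (y + c) ^ (q + 1) = (y ^ q + c ^ q) * (y + c) := by
      rw [pow_succ, hadd]
    rw [e1, e1', e2, e2', pow_succ x, pow_succ y] at hxy
    have hz : c * (x - y) ^ q + c ^ q * (x - y) + ℓ (2 * (c * (x - y))) = 0 := by
      rw [hsub, show 2 * (c * (x - y)) = 2 * (c * x) - 2 * (c * y) by ring, hℓsub]
      linear_combination hxy
    exact sub_eq_zero.mp (hkey (x - y) hz)
  exact Finite.injective_iff_bijective.mp hinj
end

section
/- Let p be an odd prime, q a power of p, and b ∈ F_{q²}*. Then the function x^{q+1} + b·x² is a planar function on F_{q²} if and only if 1 − N(b)^{−1} is a nonzero square in F_q. -/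
open scoped Classical

lemma aux_cycl {F : Type*} [Field F] [Fintype F] {q : ℕ} (hq : 2 ≤ q)
    (hF : Fintype.card F = q ^ 2) (τ : F) (hτ : τ ^ (q + 1) = 1) :
    ∃ x : F, x ≠ 0 ∧ x ^ (q - 1) = τ := by
  classical
  have hτ0 : τ ≠ 0 := by
    rintro rfl
    rw [zero_pow (by omega)] at hτ
    exact zero_ne_one hτ
  obtain ⟨g, hg⟩ := IsCyclic.exists_generator (α := Fˣ)
  have hord : (orderOf g : ℤ) = (q : ℤ) ^ 2 - 1 := by
    rw [orderOf_eq_card_of_forall_mem_zpowers hg, Nat.card_eq_fintype_card,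
      Fintype.card_units, hF,
      Nat.cast_sub (Nat.one_le_pow _ _ (by omega))]
    push_cast; ring
  obtain ⟨k, hk⟩ := hg (Units.mk0 τ hτ0)
  simp only [] at hk
  have h1 : (g ^ k) ^ ((q : ℤ) + 1) = 1 := by
    rw [hk]
    have h0 : (Units.mk0 τ hτ0) ^ (q + 1) = 1 := Units.ext (by simpa using hτ)
    rw [show ((q : ℤ) + 1) = ((q + 1 : ℕ) : ℤ) by push_cast; ring, zpow_natCast, h0]
  rw [← zpow_mul] at h1
  have h2 : (orderOf g : ℤ) ∣ k * ((q : ℤ) + 1) := orderOf_dvd_iff_zpow_eq_one.mpr h1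
  rw [hord] at h2
  have h3 : ((q : ℤ) - 1) * ((q : ℤ) + 1) ∣ k * ((q : ℤ) + 1) := by
    have he : (q : ℤ) ^ 2 - 1 = ((q : ℤ) - 1) * ((q : ℤ) + 1) := by ring
    rwa [he] at h2
  have h4 : ((q : ℤ) - 1) ∣ k := (mul_dvd_mul_iff_right (by positivity : ((q:ℤ) + 1) ≠ 0)).mp h3
  obtain ⟨j, hj⟩ := h4
  refine ⟨((g ^ j : Fˣ) : F), Units.ne_zero _, ?_⟩
  have h5 : (g ^ j) ^ ((q : ℤ) - 1) = Units.mk0 τ hτ0 := by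
    rw [← zpow_mul, mul_comm, ← hj, hk]
  have h6 : ((q : ℤ) - 1) = ((q - 1 : ℕ) : ℤ) := by omega
  have h7 : (g ^ j) ^ (q - 1) = Units.mk0 τ hτ0 := by
    rw [← zpow_natCast, ← h6, h5]
  calc ((g ^ j : Fˣ) : F) ^ (q - 1) = (((g ^ j) ^ (q - 1) : Fˣ) : F) := by
        rw [Units.val_pow_eq_pow_val]
    _ = τ := by rw [h7]; rfl

lemma aux_sq {F : Type*} [Field F] [Fintype F] {q : ℕ} (hq : 2 ≤ q) (hqodd : Odd q)
    (hF : Fintype.card F = q ^ 2) (z : F) (hz : z ^ q = z) : ∃ w : F, w ^ 2 = z := by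
  classical
  rcases eq_or_ne z 0 with rfl | hz0
  · exact ⟨0, by ring⟩
  obtain ⟨g, hg⟩ := IsCyclic.exists_generator (α := Fˣ)
  have hord : (orderOf g : ℤ) = (q : ℤ) ^ 2 - 1 := by
    rw [orderOf_eq_card_of_forall_mem_zpowers hg, Nat.card_eq_fintype_card,
      Fintype.card_units, hF,
      Nat.cast_sub (Nat.one_le_pow _ _ (by omega))]
    push_cast; ring
  obtain ⟨k, hk⟩ := hg (Units.mk0 z hz0)
  simp only [] at hk
  have hz1 : z ^ (q - 1) = 1 := by
    have h : z ^ (q - 1) * z = 1 * z := by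
      rw [← pow_succ, show q - 1 + 1 = q by omega, hz, one_mul]
    exact mul_right_cancel₀ hz0 h
  have h1 : (g ^ k) ^ ((q : ℤ) - 1) = 1 := by
    rw [hk]
    have h0 : (Units.mk0 z hz0) ^ (q - 1) = 1 := Units.ext (by simpa using hz1)
    rw [show ((q : ℤ) - 1) = ((q - 1 : ℕ) : ℤ) by omega, zpow_natCast, h0]
  rw [← zpow_mul] at h1
  have h2 : (orderOf g : ℤ) ∣ k * ((q : ℤ) - 1) := orderOf_dvd_iff_zpow_eq_one.mpr h1
  rw [hord] at h2
  have h3 : ((q : ℤ) + 1) * ((q : ℤ) - 1) ∣ k * ((q : ℤ) - 1) := by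
    have he : (q : ℤ) ^ 2 - 1 = ((q : ℤ) + 1) * ((q : ℤ) - 1) := by ring
    rwa [he] at h2
  have h4 : ((q : ℤ) + 1) ∣ k :=
    (mul_dvd_mul_iff_right (by
      have : (2 : ℤ) ≤ (q : ℤ) := by exact_mod_cast hq
      omega : ((q:ℤ) - 1) ≠ 0)).mp h3
  have h5 : (2 : ℤ) ∣ k := by
    refine dvd_trans ?_ h4
    obtain ⟨t, ht⟩ := hqodd
    exact ⟨(t : ℤ) + 1, by push_cast [ht]; ring⟩
  obtain ⟨j, hj⟩ := h5
  refine ⟨((g ^ j : Fˣ) : F), ?_⟩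
  have h6 : (g ^ j) ^ (2 : ℕ) = Units.mk0 z hz0 := by
    rw [← zpow_natCast, ← zpow_mul, mul_comm, Nat.cast_ofNat, ← hj, hk]
  calc ((g ^ j : Fˣ) : F) ^ 2 = (((g ^ j) ^ (2:ℕ) : Fˣ) : F) := by
        rw [Units.val_pow_eq_pow_val]
    _ = z := by rw [h6]; rfl


/-- for `b ∈ F_{q²}*`, the function `x^{q+1} + b·x²` is planar on
`F_{q²}` iff `1 − N(b)⁻¹` is a nonzero square in `F_q`. -/
theorem planar_monomial_linear_term
    (p m : ℕ) (hp : p.Prime) (hodd : Odd p) (hm : 0 < m)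
    (q : ℕ) (hq : q = p ^ m)
    (F : Type*) [Field F] [Fintype F] (hF : Fintype.card F = q ^ 2)
    (b : F) (hb : b ≠ 0)
    (f : F → F) (hf : ∀ x, f x = x ^ (q + 1) + b * x ^ 2) :
    (∀ c : F, c ≠ 0 → Function.Bijective (fun x => f (x + c) - f x)) ↔
      (∃ e : F, e ≠ 0 ∧ e ^ q = e ∧ e ^ 2 = 1 - (b ^ (q + 1))⁻¹) := by
  -- basic numeric facts
  have hp3 : 3 ≤ p := by
    rcases hp.two_le.lt_or_eq with h | h
    · omega
    · exfalso; rw [← h] at hodd; exact (Nat.not_odd_iff_even.mpr even_two) hodd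
  have hq3 : 3 ≤ q := le_trans hp3 (hq ▸ Nat.le_self_pow hm.ne' p)
  have qodd : Odd q := hq ▸ hodd.pow
  -- characteristic
  haveI : Fact p.Prime := ⟨hp⟩
  have hcard : Fintype.card F = p ^ (2 * m) := by
    rw [hF, hq, ← pow_mul, mul_comm]
  have hcharp : CharP F p := by
    have h0 : ((p : F)) ^ (2 * m) = 0 := by
      have h := FiniteField.cast_card_eq_zero F
      rw [hcard] at h; push_cast at h; exact h
    have hp0 : (p : F) = 0 := pow_eq_zero_iff (by omega) |>.mp h0
    have hdvd : ringChar F ∣ p := ringChar.dvd (by exact_mod_cast hp0)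
    have hrc : ringChar F = p := by
      rcases hp.eq_one_or_self_of_dvd _ hdvd with h | h
      · exact absurd h (CharP.ringChar_ne_one)
      · exact h
    have := ringChar.charP F
    rwa [hrc] at this
  haveI := hcharp
  haveI : ExpChar F p := ExpChar.prime hp
  -- Frobenius-type facts
  have hadd : ∀ x y : F, (x + y) ^ q = x ^ q + y ^ q := by
    intro x y; rw [hq]; exact add_pow_char_pow (R := F) x y p m
  have hneg : ∀ x : F, (-x) ^ q = -(x ^ q) := fun x => qodd.neg_pow x
  have h2q : (2 : F) ^ q = 2 := by
    have h := hadd 1 1; norm_num at h; exact h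
  have hqq : ∀ x : F, (x ^ q) ^ q = x := by
    intro x
    rw [← pow_mul, show q * q = Fintype.card F by rw [hF]; ring, FiniteField.pow_card]
  have h20 : (2 : F) ≠ 0 := by
    intro h
    have hdvd : (p : ℕ) ∣ 2 := (CharP.cast_eq_zero_iff F p 2).mp (by exact_mod_cast h)
    exact absurd (Nat.le_of_dvd two_pos hdvd) (by omega)
  have hβ0 : b ^ (q + 1) ≠ 0 := pow_ne_zero _ hb
  have hβq : (b ^ (q + 1)) ^ q = b ^ (q + 1) := by
    have h1 : (b ^ (q + 1)) ^ q = (b ^ q) ^ q * b ^ q := by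
      rw [← mul_pow, ← pow_succ]
    rw [h1, hqq, mul_comm, ← pow_succ]
  -- the key expansion of the difference map
  have key : ∀ c x : F, f (x + c) - f x =
      c * x ^ q + (c ^ q + 2 * b * c) * x + (c ^ (q + 1) + b * c ^ 2) := by
    intro c x
    rw [hf, hf]
    have h1 : (x + c) ^ (q + 1) = (x ^ q + c ^ q) * (x + c) := by
      rw [pow_succ, hadd]
    rw [h1, pow_succ x q, pow_succ c q]
    ring
  constructor
  · -- planar → square exists
    intro hplanar
    by_contra hno
    push_neg at hno
    -- build a kernel element
    have hS : ∃ c x : F, c ≠ 0 ∧ x ≠ 0 ∧ c * x ^ q + (c ^ q + 2 * b * c) * x = 0 := by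
      have hev : Even (q + 1) := by
        rcases qodd with ⟨t, ht⟩; exact ⟨t + 1, by omega⟩
      rcases eq_or_ne (b ^ (q + 1)) 1 with hβ1 | hβ1
      · -- N(b) = 1 case
        have hτ : (-b) ^ (q + 1) = 1 := by
          rw [hev.neg_pow, hβ1]
        obtain ⟨c, hc0, hc1⟩ := aux_cycl (by omega) hF (-b) hτ
        have hcq : c ^ q = -(b * c) := by
          rw [show q = (q - 1) + 1 by omega, pow_succ, hc1]; ring
        exact ⟨c, c, hc0, hc0, by rw [hcq]; ring⟩
      · -- N(b) ≠ 1 case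
        set z : F := 1 - (b ^ (q + 1))⁻¹ with hzdef
        have hz0 : z ≠ 0 := by
          rw [hzdef]
          intro h
          apply hβ1
          have : (b ^ (q + 1))⁻¹ = 1 := by linear_combination -h
          rwa [inv_eq_one] at this
        have hβinvq : ((b ^ (q + 1))⁻¹) ^ q = (b ^ (q + 1))⁻¹ := by
          rw [inv_pow, hβq]
        have hzq : z ^ q = z := by
          rw [hzdef, sub_eq_add_neg, hadd, one_pow, hneg, hβinvq, ← sub_eq_add_neg]
        obtain ⟨w, hw⟩ := aux_sq (by omega) qodd hF z hzq
        have hw0 : w ≠ 0 := by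
          intro h; apply hz0; rw [← hw, h]; ring
        have hwK : w ^ q ≠ w := by
          intro h
          exact hno w hw0 h (by rw [hw])
        have hwq : w ^ q = -w := by
          have h1 : (w ^ q) ^ 2 = w ^ 2 := by
            rw [← pow_mul, mul_comm, pow_mul, hw, hzq, ← hw]
          have h2 : (w ^ q - w) * (w ^ q + w) = 0 := by linear_combination h1
          rcases mul_eq_zero.mp h2 with h | h
          · exact absurd (by linear_combination h) hwK
          · linear_combination h
        have hβz : b ^ (q + 1) * (1 - z) = 1 := by
          rw [hzdef]
          field_simp
          ring
        have hw1q : (w - 1) ^ q = -w - 1 := by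
          rw [sub_eq_add_neg, hadd, hwq, hneg 1, one_pow]
          ring
        have hw2q : (w + 1) ^ q = -w + 1 := by
          rw [hadd, hwq, one_pow]
        have hμ1 : (b * (w - 1)) ^ (q + 1) = 1 := by
          rw [pow_succ, mul_pow, hw1q]
          linear_combination hβz - b ^ (q + 1) * hw
        obtain ⟨c, hc0, hcμ⟩ := aux_cycl (by omega) hF (b * (w - 1)) hμ1
        have hcq : c ^ q = b * (w - 1) * c := by
          rw [show q = (q - 1) + 1 by omega, pow_succ, hcμ]
        have hτ1 : (-(b * (w + 1))) ^ (q + 1) = 1 := by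
          rw [hev.neg_pow, pow_succ, mul_pow, hw2q]
          linear_combination hβz - b ^ (q + 1) * hw
        obtain ⟨x, hx0, hxτ⟩ := aux_cycl (by omega) hF (-(b * (w + 1))) hτ1
        have hxq : x ^ q = -(b * (w + 1)) * x := by
          rw [show q = (q - 1) + 1 by omega, pow_succ, hxτ]
        exact ⟨c, x, hc0, hx0, by rw [hxq, hcq]; ring⟩
    obtain ⟨c, x, hc, hx0, hker⟩ := hS
    have heq : f (x + c) - f x = f (0 + c) - f 0 := by
      rw [key, key, zero_pow (by omega : q ≠ 0)]
      linear_combination hker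
    have := (hplanar c hc).injective heq
    exact hx0 this
  · -- square exists → planar
    rintro ⟨e, he0, heq, he2⟩ c hc
    rw [← Finite.injective_iff_bijective]
    intro x₁ x₂ hx
    by_contra hne
    have hd0 : x₁ - x₂ ≠ 0 := sub_ne_zero.mpr hne
    set d : F := x₁ - x₂ with hddef
    have heq2 : c * x₁ ^ q + (c ^ q + 2 * b * c) * x₁ = c * x₂ ^ q + (c ^ q + 2 * b * c) * x₂ := by
      have h := hx
      simp only at h
      rw [key, key] at h
      linear_combination h
    have hdq : d ^ q = x₁ ^ q - x₂ ^ q := by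
      have h1 : x₁ = d + x₂ := by rw [hddef]; ring
      have h2 : x₁ ^ q = d ^ q + x₂ ^ q := by rw [h1, hadd]
      linear_combination -h2
    have hker : c * d ^ q + (c ^ q + 2 * b * c) * d = 0 := by
      rw [hdq, hddef]
      linear_combination heq2
    -- derive contradiction
    have hbe : b ^ (q + 1) * e ^ 2 = b ^ (q + 1) - 1 := by
      rw [he2]
      field_simp
    have h5 : c * d ^ q = -((c ^ q + 2 * b * c) * d) := by linear_combination hker
    have hAq : (c ^ q + 2 * b * c) ^ q = c + 2 * b ^ q * c ^ q := by
      rw [hadd, hqq, mul_pow, mul_pow, h2q]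
    have h6 : c ^ q * d = -((c + 2 * b ^ q * c ^ q) * d ^ q) := by
      have h := congrArg (· ^ q) h5
      rw [mul_pow, hqq, hneg, mul_pow, hAq] at h
      linear_combination h
    have h7 : (c * d ^ q) * (c ^ q * d) =
        (-((c ^ q + 2 * b * c) * d)) * (-((c + 2 * b ^ q * c ^ q) * d ^ q)) := by
      rw [h5, h6]
    have hdd : d ^ q * d ≠ 0 := mul_ne_zero (pow_ne_zero _ hd0) hd0
    have h8 : c ^ q * c = (c ^ q + 2 * b * c) * (c + 2 * b ^ q * c ^ q) :=
      mul_right_cancel₀ hdd (by linear_combination h7)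
    have h9 : (2:F) * (b * c ^ 2 + b ^ q * (c ^ q) ^ 2 + 2 * b ^ (q+1) * (c ^ q * c)) = 2 * 0 := by
      linear_combination -h8
    have h9' : b * c ^ 2 + b ^ q * (c ^ q) ^ 2 + 2 * b ^ (q+1) * (c ^ q * c) = 0 :=
      mul_left_cancel₀ h20 h9
    have h11 : (b ^ q * c ^ q + b ^ (q+1) * c) ^ 2 = (b ^ (q+1) * e * c) ^ 2 := by
      linear_combination (b ^ q) * h9' - b ^ (q + 1) * c ^ 2 * hbe
    have h12 : (b ^ q * c ^ q + b ^ (q+1) * c - b ^ (q+1) * e * c) *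
        (b ^ q * c ^ q + b ^ (q+1) * c + b ^ (q+1) * e * c) = 0 := by
      linear_combination h11
    have core : ∀ ε : F, ε ^ q = ε → ε ^ 2 = e ^ 2 →
        b ^ q * c ^ q = b ^ (q+1) * (ε - 1) * c → False := by
      intro ε hεq hε2 hs
      have hcq : c ^ q = b * (ε - 1) * c :=
        mul_left_cancel₀ (pow_ne_zero q hb) (by linear_combination hs)
      have hε1 : (ε - 1) ^ q = ε - 1 := by
        rw [sub_eq_add_neg, hadd, hεq, hneg 1, one_pow, ← sub_eq_add_neg]
      have h13 : c = b ^ q * (ε - 1) * c ^ q := by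
        have h := congrArg (· ^ q) hcq
        rw [hqq, mul_pow, mul_pow, hε1] at h
        linear_combination h
      have h14 : c = b ^ (q+1) * (ε - 1) ^ 2 * c := by
        rw [hcq] at h13
        linear_combination h13
      have h15 : b ^ (q+1) * (ε - 1) ^ 2 = 1 :=
        mul_right_cancel₀ hc (by linear_combination -h14)
      have hA2 : (2:F) * (b ^ (q+1) * (1 - ε)) = 2 * 1 := by
        linear_combination h15 - hbe - b ^ (q + 1) * hε2
      have hA : b ^ (q+1) * (1 - ε) = 1 := mul_left_cancel₀ h20 hA2
      have hε0 : ε = 0 := by linear_combination (1 - ε) * hA - h15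
      have : e ^ 2 = 0 := by rw [← hε2, hε0]; ring
      exact he0 (pow_eq_zero_iff (by norm_num : (2:ℕ) ≠ 0) |>.mp this)
    rcases mul_eq_zero.mp h12 with h | h
    · exact core e heq rfl (by linear_combination h)
    · exact core (-e) (by rw [hneg, heq]) (by ring) (by linear_combination h)
end

section
/- Let p be an odd prime, q a power of p, and let ℓ : F_{q²} → F_{q²} be an F_p-linear bijection with inverse ℓ^{−1}. Then the function x^{q+1} + ℓ(x²) is a planar function on F_{q²} if and only if u² − N(ℓ^{−1}(u)) is a nonzero square in F_q for every u ∈ F_q*. -/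
section Aux
variable {F : Type*} [Field F] [Fintype F]

lemma additive_inj_iff (g : F → F) (hg : ∀ x y, g (x + y) = g x + g y) :
    Function.Injective g ↔ ∀ x, g x = 0 → x = 0 := by
  have h0 : g 0 = 0 := by
    have := hg 0 0
    simpa using this.symm
  constructor
  · intro hinj x hx
    exact hinj (by rw [hx, h0])
  · intro hker x y hxy
    have hneg : g (-y) = - g y := by
      have := hg y (-y)
      rw [add_neg_cancel, h0] at this
      linear_combination -this
    have hz : g (x - y) = 0 := by
      rw [sub_eq_add_neg, hg, hneg, hxy, add_neg_cancel]
    have := hker _ hz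
    exact sub_eq_zero.mp this

lemma pow_sub_one_surj (q : ℕ) (hq2 : 2 ≤ q) (hcard : Fintype.card F = q ^ 2)
    (w : F) (hw : w ^ (q + 1) = 1) : ∃ c : F, c ≠ 0 ∧ c ^ (q - 1) = w := by
  have hw0 : w ≠ 0 := by
    intro h
    rw [h, zero_pow (by omega : q + 1 ≠ 0)] at hw
    exact zero_ne_one hw
  classical
  obtain ⟨g, hg⟩ := IsCyclic.exists_generator (α := Fˣ)
  set wu : Fˣ := Units.mk0 w hw0 with hwu
  obtain ⟨i, hi⟩ : ∃ i : ℕ, g ^ i = wu := by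
    have h1 : wu ∈ Submonoid.powers g := mem_powers_iff_mem_zpowers.mpr (hg wu)
    exact (Submonoid.mem_powers_iff wu g).mp h1
  have hord : orderOf g = q ^ 2 - 1 := by
    rw [orderOf_eq_card_of_forall_mem_zpowers hg, Nat.card_eq_fintype_card,
      Fintype.card_units, hcard]
  have hwu1 : wu ^ (q + 1) = 1 := by
    apply Units.ext
    rw [Units.val_pow_eq_pow_val, Units.val_one]
    simpa [hwu] using hw
  have hdvd : q ^ 2 - 1 ∣ i * (q + 1) := by
    rw [← hord]
    apply orderOf_dvd_of_pow_eq_one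
    rw [pow_mul, hi, hwu1]
  have hfact : (q - 1) * (q + 1) = q ^ 2 - 1 := by
    obtain ⟨k, rfl⟩ : ∃ k, q = k + 2 := ⟨q - 2, by omega⟩
    have e1 : k + 2 - 1 = k + 1 := by omega
    have e2 : k + 2 + 1 = k + 3 := by omega
    rw [e1, e2]
    have : (k + 2) ^ 2 = (k + 1) * (k + 3) + 1 := by ring
    omega
  have hdvd2 : (q - 1) * (q + 1) ∣ i * (q + 1) := by rw [hfact]; exact hdvd
  have hdvd3 : q - 1 ∣ i := (Nat.mul_dvd_mul_iff_right (by omega : 0 < q + 1)).mp hdvd2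
  obtain ⟨j, hj⟩ := hdvd3
  refine ⟨((g ^ j : Fˣ) : F), Units.ne_zero _, ?_⟩
  have : (g ^ j) ^ (q - 1) = wu := by
    rw [← pow_mul, mul_comm, ← hj, hi]
  rw [← Units.val_pow_eq_pow_val, this]
  simp [hwu]

lemma sqrt_neg (q : ℕ) (hq3 : 3 ≤ q) (hqodd : Odd q) (hcard : Fintype.card F = q ^ 2)
    (hchar2 : ringChar F ≠ 2)
    (D : F) (hD : D ^ q = D)
    (hnb : ∀ b : F, b ≠ 0 → b ^ q = b → b ^ 2 ≠ D) :
    ∃ e : F, e ^ 2 = D ∧ e ^ q = -e := by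
  by_cases hD0 : D = 0
  · exact ⟨0, by simp [hD0], by simp [zero_pow (show q ≠ 0 by omega)]⟩
  · have hDq1 : D ^ (q - 1) = 1 := by
      have h1 : D ^ (q - 1) * D = 1 * D := by
        rw [one_mul, ← pow_succ, show q - 1 + 1 = q by omega, hD]
      exact mul_right_cancel₀ hD0 h1
    have hsq : IsSquare D := by
      rw [FiniteField.isSquare_iff hchar2 hD0, hcard]
      obtain ⟨t, ht⟩ : ∃ t, q + 1 = 2 * t := by
        obtain ⟨s, hs⟩ := hqodd
        exact ⟨s + 1, by omega⟩
      have hdiv : q ^ 2 / 2 = (q - 1) * t := by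
        have h2 : q ^ 2 = 2 * ((q - 1) * t) + 1 := by
          obtain ⟨r, hr⟩ : ∃ r, q = r + 1 := ⟨q - 1, by omega⟩
          subst hr
          have : (r + 1) ^ 2 = r * (r + 2) + 1 := by ring
          have h3 : r + 2 = 2 * t := by omega
          simp only [Nat.add_sub_cancel]
          rw [this, h3]
          ring
        omega
      rw [hdiv, pow_mul, hDq1, one_pow]
    obtain ⟨e, he⟩ := hsq
    have he2 : e ^ 2 = D := by rw [he]; ring
    have hsq2 : (e ^ q) ^ 2 = e ^ 2 := by
      rw [← pow_mul, mul_comm, pow_mul, he2, hD]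
    have hfac : (e ^ q - e) * (e ^ q + e) = 0 := by ring_nf; linear_combination hsq2
    rcases mul_eq_zero.mp hfac with h | h
    · exfalso
      have heq : e ^ q = e := sub_eq_zero.mp h
      have he0 : e ≠ 0 := by
        intro h0
        apply hD0
        rw [← he2, h0]
        simp
      exact hnb e he0 heq he2
    · exact ⟨e, he2, eq_neg_of_add_eq_zero_left h⟩

end Aux

/-- for a linearized permutation `ℓ` of `F_{q²}` with inverse `ℓinv`,
the function `x^{q+1} + ℓ(x²)` is planar on `F_{q²}` iff `u² − N(ℓ⁻¹(u))` is a
nonzero square in `F_q` for every `u ∈ F_q*`. -/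
theorem planar_iff_inverse_condition
    (p m : ℕ) (hp : p.Prime) (hodd : Odd p) (hm : 0 < m)
    (q : ℕ) (hq : q = p ^ m)
    (F : Type*) [Field F] [Fintype F] (hF : Fintype.card F = q ^ 2)
    (ℓ ℓinv : F → F) (hℓ : ∀ x y, ℓ (x + y) = ℓ x + ℓ y)
    (hli : Function.LeftInverse ℓinv ℓ) (hri : Function.RightInverse ℓinv ℓ)
    (f : F → F) (hf : ∀ x, f x = x ^ (q + 1) + ℓ (x ^ 2)) :
    (∀ c : F, c ≠ 0 → Function.Bijective (fun x => f (x + c) - f x)) ↔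
      (∀ u : F, u ≠ 0 → u ^ q = u →
        ∃ b : F, b ≠ 0 ∧ b ^ q = b ∧ b ^ 2 = u ^ 2 - (ℓinv u) ^ (q + 1)) := by
  have hp2 : 2 ≤ p := hp.two_le
  have hp3 : 3 ≤ p := by
    have := Nat.odd_iff.mp hodd
    omega
  have hq3 : 3 ≤ q := by
    rw [hq]
    calc 3 ≤ p := hp3
      _ ≤ p ^ m := Nat.le_self_pow (by omega) p
  have hqodd : Odd q := by rw [hq]; exact hodd.pow
  haveI hp' : Fact p.Prime := ⟨hp⟩
  have hrc : ringChar F = p := by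
    have hprime : (ringChar F).Prime := CharP.char_is_prime F (ringChar F)
    have hdvd : ringChar F ∣ q ^ 2 := by
      have hcast : ((q ^ 2 : ℕ) : F) = 0 := by
        rw [← hF]; exact FiniteField.cast_card_eq_zero F
      exact (CharP.cast_eq_zero_iff F (ringChar F) (q ^ 2)).mp hcast
    rw [hq, ← pow_mul] at hdvd
    exact (Nat.prime_dvd_prime_iff_eq hprime hp).mp (hprime.dvd_of_dvd_pow hdvd)
  haveI hcharp : CharP F p := hrc ▸ ringChar.charP F
  have hchar2 : ringChar F ≠ 2 := by
    rw [hrc]; omega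
  have h2 : (2 : F) ≠ 0 := Ring.two_ne_zero hchar2
  have hmap_add : ∀ x y : F, (x + y) ^ q = x ^ q + y ^ q := by
    intro x y; rw [hq]; exact add_pow_char_pow (R := F) (p := p) (n := m) (x := x) (y := y)
  have hmap_neg : ∀ x : F, (-x) ^ q = -(x ^ q) := fun x => hqodd.neg_pow x
  have hqq : ∀ x : F, (x ^ q) ^ q = x := by
    intro x
    rw [← pow_mul]
    have hqmul : q * q = Fintype.card F := by rw [hF]; ring
    rw [hqmul]
    exact FiniteField.pow_card x
  have h2q : (2 : F) ^ q = 2 := by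
    have h1 : (2 : F) = 1 + 1 := by norm_num
    rw [h1, hmap_add, one_pow]
  have hsq_fix : ∀ c : F, (c ^ (q + 1)) ^ q = c ^ (q + 1) := by
    intro c
    rw [pow_succ, mul_pow, hqq, mul_comm]
  have hpow2q : ∀ x : F, (x ^ 2) ^ q = (x ^ q) ^ 2 := by
    intro x; rw [← pow_mul, mul_comm, pow_mul]
  have hℓ0 : ℓ 0 = 0 := by
    have := hℓ 0 0; simpa using this.symm
  have hinv0 : ℓinv 0 = 0 := by
    rw [← hℓ0, hli 0, hℓ0]
  have hdiff : ∀ c x : F, f (x + c) - f x =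
      (c * x ^ q + c ^ q * x + ℓ (2 * (c * x))) + (c ^ (q + 1) + ℓ (c ^ 2)) := by
    intro c x
    have e2 : ℓ ((x + c) ^ 2) = ℓ (x ^ 2) + (ℓ (2 * (c * x)) + ℓ (c ^ 2)) := by
      rw [← hℓ, ← hℓ]
      congr 1
      ring
    have e3 : (x + c) ^ (q + 1) = x ^ q * x + (c * x ^ q + c ^ q * x + c ^ q * c) := by
      rw [pow_succ, hmap_add]
      ring
    rw [hf, hf, e2, e3, pow_succ, pow_succ]
    ring
  have hbij : ∀ c : F, Function.Bijective (fun x => f (x + c) - f x) ↔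
      (∀ x : F, c * x ^ q + c ^ q * x + ℓ (2 * (c * x)) = 0 → x = 0) := by
    intro c
    have hLadd : ∀ x y : F,
        (c * (x + y) ^ q + c ^ q * (x + y) + ℓ (2 * (c * (x + y)))) =
          (c * x ^ q + c ^ q * x + ℓ (2 * (c * x)))
            + (c * y ^ q + c ^ q * y + ℓ (2 * (c * y))) := by
      intro x y
      rw [hmap_add]
      have h4 : 2 * (c * (x + y)) = 2 * (c * x) + 2 * (c * y) := by ring
      rw [h4, hℓ]
      ring
    have heq : (fun x => f (x + c) - f x)
        = (fun y => y + (c ^ (q + 1) + ℓ (c ^ 2)))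
            ∘ (fun x => c * x ^ q + c ^ q * x + ℓ (2 * (c * x))) :=
      funext fun x => hdiff c x
    rw [heq]
    have h5 := Function.Bijective.of_comp_iff'
      (Equiv.addRight (c ^ (q + 1) + ℓ (c ^ 2))).bijective
      (fun x => c * x ^ q + c ^ q * x + ℓ (2 * (c * x)))
    exact h5.trans (Finite.injective_iff_bijective.symm.trans (additive_inj_iff _ hLadd))
  constructor
  · -- planar → condition
    intro hpl u hu0 huq
    by_contra hnb'
    push_neg at hnb'
    set a := ℓinv u with hadef
    clear_value a
    have ha0 : a ≠ 0 := by
      intro h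
      apply hu0
      rw [← hri u, ← hadef, h, hℓ0]
    set D := u ^ 2 - a ^ (q + 1) with hDdef
    have hDq : D ^ q = D := by
      rw [hDdef, sub_eq_add_neg, hmap_add, hmap_neg, hpow2q, huq, hsq_fix, ← sub_eq_add_neg]
    obtain ⟨e, he2, heqn⟩ := sqrt_neg q hq3 hqodd hF hchar2 D hDq hnb'
    set w := (e - u) * a⁻¹ with hw
    have haN : a ^ (q + 1) ≠ 0 := pow_ne_zero _ ha0
    have hwq : w ^ q = (-e - u) * (a ^ q)⁻¹ := by
      rw [hw, mul_pow, inv_pow]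
      congr 1
      rw [sub_eq_add_neg, hmap_add, hmap_neg, heqn, huq]
      ring
    have hprod : (-e - u) * (e - u) = a ^ (q + 1) := by
      linear_combination -he2 - hDdef
    have hw1 : w ^ (q + 1) = 1 := by
      rw [pow_succ, hwq, hw, mul_mul_mul_comm, hprod, ← mul_inv, ← pow_succ]
      exact mul_inv_cancel₀ haN
    obtain ⟨c, hc0, hcw⟩ := pow_sub_one_surj q (by omega) hF w hw1
    set x := a * (2 * c)⁻¹ with hx
    have h2c : (2 : F) * c ≠ 0 := mul_ne_zero h2 hc0
    have hx0 : x ≠ 0 := mul_ne_zero ha0 (inv_ne_zero h2c)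
    have hax : 2 * (c * x) = a := by
      rw [hx]
      field_simp
    have hℓax : ℓ (2 * (c * x)) = u := by
      rw [hax, hadef, hri u]
    have hquad : a * w ^ 2 + 2 * u * w + a ^ q = 0 := by
      have haw : a * w = e - u := by
        rw [hw, mul_comm (e - u) a⁻¹, ← mul_assoc, mul_inv_cancel₀ ha0, one_mul]
      have h6 : a * (a * w ^ 2 + 2 * u * w + a ^ q) = 0 := by
        have h7 : a * (a * w ^ 2 + 2 * u * w + a ^ q)
            = (a * w) ^ 2 + 2 * u * (a * w) + a ^ (q + 1) := by ring
        rw [h7, haw]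
        linear_combination he2 + hDdef
      rcases mul_eq_zero.mp h6 with h | h
      · exact absurd h ha0
      · exact h
    have hc2w : c ^ 2 * w = c ^ (q + 1) := by
      rw [← hcw, ← pow_add]
      congr 1
      omega
    have hc2w2 : c ^ 2 * w ^ 2 = c ^ (2 * q) := by
      rw [← hcw, ← pow_mul, ← pow_add]
      congr 1
      omega
    have key : a * c ^ (2 * q) + 2 * u * c ^ (q + 1) + a ^ q * c ^ 2 = 0 := by
      linear_combination c ^ 2 * hquad - a * hc2w2 - 2 * u * hc2w
    have hxq : x ^ q = a ^ q * (2 * c ^ q)⁻¹ := by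
      rw [hx, mul_pow, inv_pow, mul_pow, h2q]
    have hker : c * x ^ q + c ^ q * x + ℓ (2 * (c * x)) = 0 := by
      rw [hℓax, hxq, hx]
      have hcq0 : (c : F) ^ q ≠ 0 := pow_ne_zero _ hc0
      field_simp
      linear_combination key
    have := ((hbij c).mp (hpl c hc0)) x hker
    exact hx0 this
  · -- condition → planar
    intro hcond c hc
    rw [hbij c]
    intro x hx
    set a := 2 * (c * x) with hadef
    clear_value a
    set u := ℓ a with hudef
    clear_value u
    have huq : u ^ q = u := by
      have hueq : u = -(c * x ^ q + c ^ q * x) := by linear_combination hx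
      rw [hueq, hmap_neg, hmap_add, mul_pow, mul_pow, hqq, hqq]
      ring
    by_cases hu0 : u = 0
    · have ha0 : a = 0 := by
        have h1 : ℓinv u = a := by rw [hudef]; exact hli a
        rw [hu0, hinv0] at h1
        exact h1.symm
      rw [hadef] at ha0
      rcases mul_eq_zero.mp ha0 with h | h
      · exact absurd h h2
      · rcases mul_eq_zero.mp h with h' | h'
        · exact absurd h' hc
        · exact h'
    · exfalso
      obtain ⟨b, hb0, hbq, hb2⟩ := hcond u hu0 huq
      have hainv : ℓinv u = a := by rw [hudef]; exact hli a
      rw [hainv] at hb2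
      have haq : a ^ q = 2 * (c ^ q * x ^ q) := by
        rw [hadef, mul_pow, mul_pow, h2q]
      have hxeq : c * x ^ q + c ^ q * x = -u := by linear_combination hx
      have hkey : c ^ 2 * a ^ q + c ^ (2 * q) * a + 2 * c ^ (q + 1) * u = 0 := by
        linear_combination c ^ 2 * haq + c ^ (2 * q) * hadef + 2 * c ^ (q + 1) * hxeq
      set Z := c ^ 2 * a ^ q + c ^ (q + 1) * u with hZdef
      clear_value Z
      have hZq : Z ^ q = c ^ (2 * q) * a + c ^ (q + 1) * u := by
        rw [hZdef, hmap_add, mul_pow, mul_pow, hqq, hsq_fix, huq, pow_mul]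
      have hZplus : Z + Z ^ q = 0 := by
        rw [hZq, hZdef]
        linear_combination hkey
      have hZq_neg : Z ^ q = -Z := eq_neg_of_add_eq_zero_right hZplus
      have hZZ : Z * Z ^ q = -(c ^ (q + 1) * b) ^ 2 := by
        rw [hZq, hZdef]
        linear_combination c ^ (q + 1) * u * hkey + c ^ (2 * (q + 1)) * hb2
      have hZ2 : Z ^ 2 = (c ^ (q + 1) * b) ^ 2 := by
        rw [hZq_neg] at hZZ
        linear_combination -hZZ
      have hB0 : c ^ (q + 1) * b ≠ 0 := mul_ne_zero (pow_ne_zero _ hc) hb0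
      have hBq : (c ^ (q + 1) * b) ^ q = c ^ (q + 1) * b := by
        rw [mul_pow, hsq_fix, hbq]
      have hfac : (Z - c ^ (q + 1) * b) * (Z + c ^ (q + 1) * b) = 0 := by
        linear_combination hZ2
      have hZfix : Z ^ q = Z := by
        rcases mul_eq_zero.mp hfac with h | h
        · have hZb : Z = c ^ (q + 1) * b := sub_eq_zero.mp h
          rw [hZb, hBq]
        · have hZb : Z = -(c ^ (q + 1) * b) := eq_neg_of_add_eq_zero_left h
          rw [hZb, hmap_neg, hBq]
      have h2Z : (2 : F) * Z = 0 := by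
        linear_combination hZq_neg - hZfix
      have hZ0 : Z = 0 := by
        rcases mul_eq_zero.mp h2Z with h | h
        · exact absurd h h2
        · exact h
      have hBsq : (c ^ (q + 1) * b) ^ 2 = 0 := by
        rw [← hZ2, hZ0]
        ring
      exact hB0 (pow_eq_zero_iff (by norm_num : (2 : ℕ) ≠ 0) |>.mp hBsq)
end

section
/- Let p be an odd prime, q a power of p, and let ℓ : F_{q²} → F_{q²} be an F_p-linear map such that ℓ(F_{q²}) ∩ F_q = {0} and such that −N(u) is a nonzero square in F_q for every nonzero u ∈ F_{q²} with ℓ(u) = 0. Then x^{q+1} + ℓ(x²) is a planar function on F_{q²}. -/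
/-- if `ℓ(F_{q²}) ∩ F_q = {0}` and `−N(u)` is a nonzero square in `F_q`
for every nonzero root `u` of `ℓ`, then `x^{q+1} + ℓ(x²)` is planar on `F_{q²}`. -/
theorem planar_of_kernel_condition
    (p m : ℕ) (hp : p.Prime) (hodd : Odd p) (hm : 0 < m)
    (q : ℕ) (hq : q = p ^ m)
    (F : Type*) [Field F] [Fintype F] (hF : Fintype.card F = q ^ 2)
    (ℓ : F → F) (hℓ : ∀ x y, ℓ (x + y) = ℓ x + ℓ y)
    (himage : ∀ x : F, (ℓ x) ^ q = ℓ x → ℓ x = 0)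
    (hker : ∀ u : F, u ≠ 0 → ℓ u = 0 →
      ∃ b : F, b ≠ 0 ∧ b ^ q = b ∧ b ^ 2 = -(u ^ (q + 1)))
    (f : F → F) (hf : ∀ x, f x = x ^ (q + 1) + ℓ (x ^ 2)) :
    ∀ c : F, c ≠ 0 → Function.Bijective (fun x => f (x + c) - f x) := by
  intro c hc
  haveI : Fact p.Prime := ⟨hp⟩
  -- characteristic of F is p
  have hcard : Fintype.card F = p ^ (2 * m) := by rw [hF, hq, ← pow_mul, Nat.mul_comm]
  have hrp : ringChar F = p := by
    have h1 : (ringChar F).Prime := CharP.char_is_prime F (ringChar F)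
    have h2 : ringChar F ∣ p ^ (2 * m) := by
      rw [← hcard]
      exact (ringChar.spec F (Fintype.card F)).mp (FiniteField.cast_card_eq_zero F)
    have h3 : ringChar F ∣ p := h1.dvd_of_dvd_pow h2
    exact (Nat.prime_dvd_prime_iff_eq h1 hp).mp h3
  haveI hCharP : CharP F p := hrp ▸ ringChar.charP F
  -- Frobenius is additive
  have hfrob : ∀ a b : F, (a + b) ^ q = a ^ q + b ^ q := by
    intro a b; rw [hq]; exact add_pow_char_pow a b p m
  -- every element is fixed by x ↦ x^(q*q)
  have hcd : ∀ a : F, a ^ (q * q) = a := by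
    intro a
    have := FiniteField.pow_card a
    rwa [hF, pow_two] at this
  -- 2 ≠ 0 in F
  have h2 : (2 : F) ≠ 0 := by
    intro h
    have hdvd : p ∣ 2 := (CharP.cast_eq_zero_iff F p 2).mp (by exact_mod_cast h)
    have : p = 2 := (Nat.prime_dvd_prime_iff_eq hp Nat.prime_two).mp hdvd
    rw [this] at hodd
    exact (Nat.not_odd_iff_even.mpr even_two) hodd
  -- 2^q = 2
  have h2q : (2 : F) ^ q = 2 := by
    have := hfrob 1 1
    norm_num at this
    linear_combination this
  -- q is odd
  have hqodd : Odd q := by rw [hq]; exact hodd.pow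
  -- ℓ 0 = 0
  have hℓ0 : ℓ 0 = 0 := by
    have h := hℓ 0 0
    rw [add_zero] at h
    exact (right_eq_add.mp h)
  -- the linear part
  have Dadd : ∀ a b : F,
      c * (a + b) ^ q + c ^ q * (a + b) + ℓ (2 * c * (a + b))
        = (c * a ^ q + c ^ q * a + ℓ (2 * c * a)) + (c * b ^ q + c ^ q * b + ℓ (2 * c * b)) := by
    intro a b
    rw [hfrob a b, show 2 * c * (a + b) = 2 * c * a + 2 * c * b by ring, hℓ]
    ring
  -- kernel of the linear part is trivial
  have Dker : ∀ x : F, c * x ^ q + c ^ q * x + ℓ (2 * c * x) = 0 → x = 0 := by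
    intro x hx
    -- c * x^q + c^q * x is fixed by Frobenius
    have htq : (c * x ^ q + c ^ q * x) ^ q = c * x ^ q + c ^ q * x := by
      rw [hfrob, mul_pow, mul_pow, ← pow_mul, ← pow_mul, hcd x, hcd c]
      ring
    have hℓeq : ℓ (2 * c * x) = -(c * x ^ q + c ^ q * x) :=
      eq_neg_of_add_eq_zero_right hx
    have hℓz : ℓ (2 * c * x) = 0 := by
      apply himage
      rw [hℓeq, hqodd.neg_pow, htq]
    have ht0 : c * x ^ q + c ^ q * x = 0 := by
      rw [hℓz, add_zero] at hx
      exact hx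
    by_contra hx0
    have hu : 2 * c * x ≠ 0 := mul_ne_zero (mul_ne_zero h2 hc) hx0
    obtain ⟨b, hb0, hbq, hb2⟩ := hker (2 * c * x) hu (by rw [hℓz])
    have hcx : c * x ^ q = -(c ^ q * x) := eq_neg_of_add_eq_zero_left ht0
    -- b² = (2 c^q x)²
    have hfin : b ^ 2 = (2 * c ^ q * x) ^ 2 := by
      have expand : (2 * c * x) ^ (q + 1) = 2 ^ q * 2 * (c ^ q * x) * (c * x ^ q) := by
        rw [pow_succ, mul_pow, mul_pow]; ring
      rw [hb2, expand, h2q, hcx]; ring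
    -- (2 c^q x)^q = -(2 c^q x)
    have hwq : (2 * c ^ q * x) ^ q = -(2 * c ^ q * x) := by
      rw [mul_pow, mul_pow, ← pow_mul, hcd c, h2q]
      calc 2 * c * x ^ q = 2 * (c * x ^ q) := by ring
        _ = -(2 * c ^ q * x) := by rw [hcx]; ring
    -- w := 2 c^q x is fixed by Frobenius in both cases
    have hcases : b = 2 * c ^ q * x ∨ b = -(2 * c ^ q * x) := by
      have hzz : (b - 2 * c ^ q * x) * (b + 2 * c ^ q * x) = 0 := by
        linear_combination hfin
      rcases mul_eq_zero.mp hzz with h | h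
      · exact Or.inl (sub_eq_zero.mp h)
      · exact Or.inr (eq_neg_of_add_eq_zero_left h)
    have hwfix : (2 * c ^ q * x) ^ q = 2 * c ^ q * x := by
      rcases hcases with h | h
      · rw [← h, hbq, h]
      · have := hbq
        rw [h, hqodd.neg_pow] at this
        exact neg_inj.mp this
    have hw0 : (2 : F) * (2 * c ^ q * x) = 0 := by
      linear_combination hwq - hwfix
    have : (2 * c ^ q * x) = 0 := by
      rcases mul_eq_zero.mp hw0 with h | h
      · exact absurd h h2
      · exact h
    exact mul_ne_zero (mul_ne_zero h2 (pow_ne_zero q hc)) hx0 this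
  -- the difference map is the linear part plus a constant
  have hmap : ∀ x : F, f (x + c) - f x
      = (c * x ^ q + c ^ q * x + ℓ (2 * c * x)) + (c ^ (q + 1) + ℓ (c ^ 2)) := by
    intro x
    rw [hf, hf]
    have e1 : (x + c) ^ (q + 1) = x ^ (q + 1) + c * x ^ q + c ^ q * x + c ^ (q + 1) := by
      rw [pow_succ, hfrob, pow_succ x, pow_succ c]; ring
    have e2 : ℓ ((x + c) ^ 2) = ℓ (x ^ 2) + (ℓ (2 * c * x) + ℓ (c ^ 2)) := by
      rw [show (x + c) ^ 2 = x ^ 2 + (2 * c * x + c ^ 2) by ring, hℓ, hℓ]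
    rw [e1, e2]; ring
  -- injectivity
  have hinj : Function.Injective (fun x => f (x + c) - f x) := by
    intro a b hab
    simp only at hab
    rw [hmap a, hmap b] at hab
    have hDeq : c * a ^ q + c ^ q * a + ℓ (2 * c * a)
        = c * b ^ q + c ^ q * b + ℓ (2 * c * b) := add_right_cancel hab
    have hsum := Dadd (a - b) b
    rw [sub_add_cancel] at hsum
    have hD0 : c * (a - b) ^ q + c ^ q * (a - b) + ℓ (2 * c * (a - b)) = 0 := by
      linear_combination hDeq - hsum
    have := Dker (a - b) hD0
    exact sub_eq_zero.mp this
  exact Finite.injective_iff_bijective.mp hinj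
end

section
/- Let p be an odd prime, q = p^m, and let e be an integer with 0 < e < 2m such that d = 2m/gcd(e, 2m) is odd. Let ℓ : F_{q²} → F_{q²} be any F_p-linear map and set f(x) = x^{q+1} + ℓ(x²). Then there do not exist F_p-linear bijections ℓ₀, ℓ₁ : F_{q²} → F_{q²} such that ℓ₀(f(x)) = ℓ₁(x)^{p^e+1} for all x ∈ F_{q²}. -/
namespace NEM


/-- p-adic digit uniqueness for sums of two powers, ordered version. -/
private lemma digit_aux {p : ℕ} (hp : 3 ≤ p) {a b s t : ℕ} (hab : a ≤ b) (hst : s ≤ t)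
    (has : a ≤ s) (h : p ^ a + p ^ b = p ^ s + p ^ t) : a = s ∧ b = t := by
  have hp2 : 2 ≤ p := by omega
  have hpos : 0 < p ^ a := pow_pos (by omega) _
  have hes : a = s := by
    by_contra hne
    have hlt : a < s := lt_of_le_of_ne has hne
    have h1 : p ^ (a + 1) ∣ p ^ s + p ^ t :=
      dvd_add (pow_dvd_pow p hlt) (pow_dvd_pow p (lt_of_lt_of_le hlt hst))
    rw [← h] at h1
    have h2 : p ^ a * p ^ (b - a) = p ^ b := by
      rw [← pow_add]; congr 1; omega
    have h3 : p ^ a + p ^ b = p ^ a * (1 + p ^ (b - a)) := by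
      rw [mul_add, mul_one, h2]
    rw [h3, pow_succ] at h1
    have h4 : p ∣ 1 + p ^ (b - a) := by
      have := (mul_dvd_mul_iff_left (a := p ^ a) (by omega)).mp h1
      exact this
    rcases Nat.eq_or_lt_of_le hab with rfl | hblt
    · simp at h4
      have := Nat.le_of_dvd (by omega) h4
      omega
    · have : p ∣ p ^ (b - a) := dvd_pow_self p (by omega)
      have h5 : p ∣ 1 := (Nat.dvd_add_right this).mp (by rwa [add_comm] at h4)
      have := Nat.le_of_dvd one_pos h5
      omega
  refine ⟨hes, ?_⟩
  subst hes
  have : p ^ b = p ^ t := by omega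
  exact Nat.pow_right_injective hp2 this

/-- p-adic digit uniqueness for sums of two powers. -/
private lemma digit_eq {p : ℕ} (hp : 3 ≤ p) {a b s t : ℕ} (h : p ^ a + p ^ b = p ^ s + p ^ t) :
    (a = s ∧ b = t) ∨ (a = t ∧ b = s) := by
  have main : ∀ a b s t : ℕ, a ≤ b → s ≤ t → p ^ a + p ^ b = p ^ s + p ^ t →
      a = s ∧ b = t := by
    intro a b s t hab hst h
    rcases le_total a s with has | hsa
    · exact digit_aux hp hab hst has h
    · obtain ⟨h1, h2⟩ := digit_aux hp hst hab hsa h.symm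
      exact ⟨h1.symm, h2.symm⟩
  rcases le_total a b with hab | hba
  · rcases le_total s t with hst | hts
    · exact Or.inl (main a b s t hab hst h)
    · obtain ⟨h1, h2⟩ := main a b t s hab hts (by omega)
      exact Or.inr ⟨h1, h2⟩
  · rcases le_total s t with hst | hts
    · obtain ⟨h1, h2⟩ := main b a s t hba hst (by omega)
      exact Or.inr ⟨h2, h1⟩
    · obtain ⟨h1, h2⟩ := main b a t s hba hts (by omega)
      exact Or.inl ⟨h2, h1⟩

private lemma cast_pred_pow {p n : ℕ} (hp : 1 ≤ p) :
    ((p ^ n - 1 : ℕ) : ℤ) = (p : ℤ) ^ n - 1 := by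
  have : 1 ≤ p ^ n := Nat.one_le_pow _ _ (by omega)
  push_cast [this]
  ring

/-- Main congruence-to-equality lemma for exponents. -/
private lemma keyM {p n : ℕ} (hp : 3 ≤ p) (hn : 0 < n) {a b s t : ℕ}
    (ha : a < n) (hb : b < n) (hs : s < n) (ht : t < n)
    (hdvd : ((p ^ n - 1 : ℕ) : ℤ) ∣ ((p : ℤ) ^ a + (p : ℤ) ^ b - ((p : ℤ) ^ s + (p : ℤ) ^ t))) :
    (a = s ∧ b = t) ∨ (a = t ∧ b = s) := by
  set P : ℤ := (p : ℤ) with hP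
  have hP3 : (3 : ℤ) ≤ P := by rw [hP]; exact_mod_cast hp
  have hP1 : (1 : ℤ) ≤ P := by omega
  have hle : ∀ {x : ℕ}, x < n → P ^ x ≤ P ^ (n - 1) := by
    intro x hx
    exact pow_le_pow_right₀ hP1 (by omega)
  have hge : ∀ x : ℕ, (1 : ℤ) ≤ P ^ x := fun x => one_le_pow₀ hP1
  have hsplit : P ^ n = P ^ (n - 1) * P := by
    rw [← pow_succ]; congr 1; omega
  have h1 : P ^ (n-1) * 1 ≤ P ^ (n-1) * P := by
    have := hge (n - 1)
    nlinarith
  have habs : |(P ^ a + P ^ b - (P ^ s + P ^ t))| < ((p ^ n - 1 : ℕ) : ℤ) := by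
    rw [cast_pred_pow (by omega)]
    rw [abs_lt]
    constructor
    · have h2 := hle ha; have h3 := hle hb; have h4 := hle hs; have h5 := hle ht
      have h6 := hge a; have h7 := hge b; have h8 := hge s; have h9 := hge t
      have h10 := hge (n-1)
      rw [hsplit]; nlinarith
    · have h2 := hle ha; have h3 := hle hb; have h4 := hle hs; have h5 := hle ht
      have h8 := hge s; have h9 := hge t
      have h10 := hge (n-1)
      rw [hsplit]; nlinarith
  have hz := Int.eq_zero_of_abs_lt_dvd hdvd habs
  have hnat : p ^ a + p ^ b = p ^ s + p ^ t := by
    have h' : (↑(p ^ a + p ^ b) : ℤ) = (↑(p ^ s + p ^ t) : ℤ) := by push_cast; linarith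
    exact_mod_cast h'
  exact digit_eq hp hnat

/-- Congruent exponents give congruent powers mod `p^n - 1`. -/
private lemma pow_modEq {p n : ℕ} (hp : 1 ≤ p) (hn : 0 < n) {a b : ℕ} (hab : a % n = b % n) :
    ((p ^ n - 1 : ℕ) : ℤ) ∣ ((p : ℤ) ^ a - (p : ℤ) ^ b) := by
  have key : ∀ x : ℕ, ((p ^ n - 1 : ℕ) : ℤ) ∣ ((p : ℤ) ^ x - (p : ℤ) ^ (x % n)) := by
    intro x
    have hrw : (p:ℤ) ^ x - (p:ℤ) ^ (x % n) = (((p:ℤ) ^ n) ^ (x / n) - 1) * (p:ℤ) ^ (x % n) := by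
      rw [sub_mul, one_mul, ← pow_mul, ← pow_add]
      congr 2
      exact (Nat.div_add_mod x n).symm
    rw [cast_pred_pow hp, hrw]
    exact Dvd.dvd.mul_right (by simpa using sub_dvd_pow_sub_pow ((p:ℤ)^n) 1 (x / n)) _
  have h1 := key a
  have h2 := key b
  rw [hab] at h1
  simpa using dvd_sub h1 h2



open Finset

private lemma sum_units_zpow (F : Type*) [Field F] [Fintype F] [DecidableEq F] (z : ℤ) :
    ∑ u : Fˣ, ((u ^ z : Fˣ) : F)
      = if ((Fintype.card F - 1 : ℕ) : ℤ) ∣ z then (-1 : F) else 0 := by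
  classical
  by_cases hdvd : ((Fintype.card F - 1 : ℕ) : ℤ) ∣ z
  · rw [if_pos hdvd]
    obtain ⟨w, rfl⟩ := hdvd
    have hone : ∀ u : Fˣ, u ^ (((Fintype.card F - 1 : ℕ) : ℤ) * w) = 1 := by
      intro u
      rw [zpow_mul]
      have : u ^ ((Fintype.card F - 1 : ℕ) : ℤ) = 1 := by
        rw [zpow_natCast, ← Fintype.card_units (α := F), pow_card_eq_one]
      rw [this, one_zpow]
    have : ∑ u : Fˣ, ((u ^ (((Fintype.card F - 1 : ℕ) : ℤ) * w) : Fˣ) : F)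
        = ∑ _u : Fˣ, (1 : F) := by
      apply Finset.sum_congr rfl
      intro u _
      rw [hone u]
      simp
    rw [this, Finset.sum_const, Finset.card_univ, Fintype.card_units (α := F), nsmul_eq_mul, mul_one]
    have hcast : ((Fintype.card F - 1 : ℕ) : F) = ((Fintype.card F : ℕ) : F) - 1 := by
      have : 1 ≤ Fintype.card F := Fintype.card_pos
      push_cast [this]
      ring
    rw [hcast, FiniteField.cast_card_eq_zero]
    ring
  · rw [if_neg hdvd]
    obtain ⟨g, hg⟩ := IsCyclic.exists_generator (α := Fˣ)
    have horder : orderOf g = Fintype.card F - 1 := by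
      rw [orderOf_eq_card_of_forall_mem_zpowers hg, Nat.card_eq_fintype_card,
        Fintype.card_units]
    have hgz : g ^ z ≠ 1 := by
      intro hcon
      exact hdvd (by rw [← horder]; exact orderOf_dvd_iff_zpow_eq_one.mpr hcon)
    have hre : ∑ u : Fˣ, (((g * u) ^ z : Fˣ) : F) = ∑ u : Fˣ, ((u ^ z : Fˣ) : F) :=
      Fintype.sum_bijective (fun u => g * u) (Group.mulLeft_bijective g) _ _ (fun u => rfl)
    have hfac : ∀ u : Fˣ, (((g * u) ^ z : Fˣ) : F) = ((g ^ z : Fˣ) : F) * ((u ^ z : Fˣ) : F) := by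
      intro u
      rw [mul_zpow]
      push_cast
      ring
    rw [Finset.sum_congr rfl (fun u _ => hfac u), ← Finset.mul_sum] at hre
    have hfactor : (((g ^ z : Fˣ) : F) - 1) * ∑ u : Fˣ, ((u ^ z : Fˣ) : F) = 0 := by
      rw [sub_mul, one_mul, hre]
      ring
    rcases mul_eq_zero.mp hfactor with h | h
    · exfalso
      apply hgz
      have hval : ((g ^ z : Fˣ) : F) = 1 := sub_eq_zero.mp h
      exact Units.ext (by simpa using hval)
    · exact h

/-- Every additive self-map of a finite field of order `p^n` is given by a
linearized polynomial with `n` coefficients. -/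
private lemma exists_linearized {F : Type*} [Field F] [Fintype F] {p n : ℕ} [NeZero n]
    (hp : p.Prime) (hn : 0 < n) (hcard : Fintype.card F = p ^ n) [CharP F p]
    (g : F → F) (hg : ∀ x y, g (x + y) = g x + g y) :
    ∃ c : ZMod n → F, ∀ x, g x = ∑ i : ZMod n, c i * x ^ p ^ (i.val) := by
  classical
  haveI : Fact p.Prime := ⟨hp⟩
  haveI : Module (ZMod p) F := AddCommGroup.zmodModule (by
    intro x
    rw [nsmul_eq_mul]
    simp [CharP.cast_eq_zero F p])
  haveI : Module.Finite (ZMod p) F := Module.Finite.of_finite (R := ZMod p) (M := F)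
  have hrank : Module.finrank (ZMod p) F = n := by
    have h1 : Fintype.card F = Fintype.card (ZMod p) ^ Module.finrank (ZMod p) F :=
      Module.card_eq_pow_finrank
    rw [ZMod.card, hcard] at h1
    exact (Nat.pow_right_injective hp.two_le h1.symm)
  let b : Module.Basis (Fin n) (ZMod p) F := Module.finBasisOfFinrankEq (ZMod p) F hrank
  -- the evaluation map from coefficient vectors to additive maps
  let Ψ : (ZMod n → F) → (F →ₗ[ZMod p] F) := fun c =>
    AddMonoidHom.toZModLinearMap p (AddMonoidHom.mk'
      (fun x => ∑ i : ZMod n, c i * x ^ p ^ (i.val))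
      (by
        intro x y
        rw [← Finset.sum_add_distrib]
        exact Finset.sum_congr rfl fun i _ => by rw [add_pow_char_pow, mul_add]))
  have hΨ : ∀ c x, (Ψ c : F →ₗ[ZMod p] F) x = ∑ i : ZMod n, c i * x ^ p ^ (i.val) := fun c x => rfl
  have hinj : Function.Injective Ψ := by
    intro c c' hcc
    have hfun : ∀ x : F, ∑ i : ZMod n, (c i - c' i) * x ^ p ^ (i.val) = 0 := by
      intro x
      have h1 : (Ψ c : F →ₗ[ZMod p] F) x = (Ψ c' : F →ₗ[ZMod p] F) x := by rw [hcc]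
      rw [hΨ, hΨ] at h1
      rw [← sub_eq_zero] at h1
      rw [← h1, ← Finset.sum_sub_distrib]
      exact Finset.sum_congr rfl fun i _ => by ring
    set Q : Polynomial F := ∑ i : ZMod n, Polynomial.C (c i - c' i) * Polynomial.X ^ (p ^ (i.val))
      with hQ
    have heval : ∀ x : F, Q.eval x = 0 := by
      intro x
      rw [hQ, Polynomial.eval_finset_sum]
      simpa using hfun x
    have hdeg : Q.natDegree < Fintype.card F := by
      have h1 : Q.natDegree ≤ p ^ (n - 1) := by
        apply Polynomial.natDegree_sum_le_of_forall_le
        intro i _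
        apply le_trans (Polynomial.natDegree_C_mul_le _ _)
        rw [Polynomial.natDegree_X_pow]
        exact Nat.pow_le_pow_right hp.pos (by have := ZMod.val_lt i; omega)
      have h2 : p ^ (n - 1) < p ^ n := pow_lt_pow_right₀ hp.one_lt (by omega)
      omega
    have hQ0 : Q = 0 :=
      Polynomial.eq_zero_of_natDegree_lt_card_of_eval_eq_zero Q Function.injective_id
        (fun x => heval x) (by simpa using hdeg)
    funext i
    have hcoeff := congrArg (fun P => Polynomial.coeff P (p ^ (i.val))) hQ0
    simp only [hQ, Polynomial.finset_sum_coeff, Polynomial.coeff_C_mul,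
      Polynomial.coeff_X_pow, Polynomial.coeff_zero] at hcoeff
    rw [Finset.sum_eq_single i] at hcoeff
    · rw [if_pos rfl, mul_one] at hcoeff
      exact sub_eq_zero.mp hcoeff
    · intro j _ hji
      have hne : ¬ (p ^ (i.val) = p ^ (j.val)) := fun hcon =>
        hji (ZMod.val_injective n (Nat.pow_right_injective hp.two_le hcon.symm))
      rw [if_neg hne, mul_zero]
    · intro h
      exact absurd (Finset.mem_univ i) h
  -- cardinality argument
  let E1 : (Fin n → F) ≃ₗ[ZMod p] (F →ₗ[ZMod p] F) := b.constr (ZMod p)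
  let Θ : (ZMod n → F) → (Fin n → F) := fun c => E1.symm (Ψ c)
  have hΘinj : Function.Injective Θ := fun c c' h => hinj (E1.symm.injective h)
  have hcards : Fintype.card (ZMod n → F) = Fintype.card (Fin n → F) := by
    rw [Fintype.card_fun, Fintype.card_fun, ZMod.card, Fintype.card_fin]
  have hΘbij : Function.Bijective Θ :=
    (Fintype.bijective_iff_injective_and_card Θ).mpr ⟨hΘinj, hcards⟩
  -- conclude
  let ghom : F →ₗ[ZMod p] F := AddMonoidHom.toZModLinearMap p (AddMonoidHom.mk' g (fun x y => hg x y))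
  obtain ⟨c, hc⟩ := hΘbij.surjective (E1.symm ghom)
  refine ⟨c, fun x => ?_⟩
  have : Ψ c = ghom := E1.symm.injective hc
  have hx := congrArg (fun φ : F →ₗ[ZMod p] F => φ x) this
  have hx' : (Ψ c : F →ₗ[ZMod p] F) x = g x := hx
  rw [hΨ] at hx'
  exact hx'.symm


private lemma charP_of_card {F : Type*} [Field F] [Fintype F] {p n : ℕ}
    (hp : p.Prime) (hn : 0 < n) (h : Fintype.card F = p ^ n) : CharP F p := by
  obtain ⟨k, hk1, hk2⟩ := FiniteField.card F (ringChar F)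
  have hdvd : p ∣ ringChar F ^ (k : ℕ) := by
    rw [← hk2, h]
    exact dvd_pow_self p hn.ne'
  have hpd : p ∣ ringChar F := hp.dvd_of_dvd_pow hdvd
  have hpr : p = ringChar F := (Nat.prime_dvd_prime_iff_eq hp hk1).mp hpd
  rw [hpr]
  exact ringChar.charP F

end NEM

/-- for `0 < e < 2m` with `d = 2m/gcd(e,2m)` odd, no function of the
form `x^{q+1} + ℓ(x²)` on `F_{q²}` is linearly equivalent to the monomial
`x^{p^e+1}`, i.e. there are no `F_p`-linear bijections `ℓ₀, ℓ₁` with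
`ℓ₀(f(x)) = ℓ₁(x)^{p^e+1}` for all `x`. -/
theorem not_equivalent_to_monomial
    (p m e : ℕ) (hp : p.Prime) (hodd : Odd p) (hm : 0 < m)
    (he0 : 0 < e) (he2 : e < 2 * m) (hd : Odd (2 * m / Nat.gcd e (2 * m)))
    (q : ℕ) (hq : q = p ^ m)
    (F : Type*) [Field F] [Fintype F] (hF : Fintype.card F = q ^ 2)
    (ℓ : F → F) (hℓ : ∀ x y, ℓ (x + y) = ℓ x + ℓ y)
    (f : F → F) (hf : ∀ x, f x = x ^ (q + 1) + ℓ (x ^ 2)) :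
    ¬∃ ℓ₀ ℓ₁ : F → F,
      (∀ x y, ℓ₀ (x + y) = ℓ₀ x + ℓ₀ y) ∧ Function.Bijective ℓ₀ ∧
      (∀ x y, ℓ₁ (x + y) = ℓ₁ x + ℓ₁ y) ∧ Function.Bijective ℓ₁ ∧
      (∀ x : F, ℓ₀ (f x) = (ℓ₁ x) ^ (p ^ e + 1)) := by
  rintro ⟨ℓ₀, ℓ₁, hℓ₀add, hℓ₀bij, hℓ₁add, hℓ₁bij, heqn⟩
  classical
  set n := 2 * m with hn_def
  have hn : 0 < n := by omega
  haveI : NeZero n := ⟨by omega⟩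
  have hp2ne : p ≠ 2 := by
    rintro rfl
    rw [Nat.odd_iff] at hodd
    omega
  have hp3 : 3 ≤ p := by
    have := hp.two_le
    omega
  have hcard : Fintype.card F = p ^ n := by
    rw [hF, hq, ← pow_mul]
    congr 1
    omega
  haveI hchar : CharP F p := NEM.charP_of_card hp hn hcard
  haveI : Fact p.Prime := ⟨hp⟩
  have h2F : (2 : F) ≠ 0 := by
    intro hcon
    have h1 : (p : ℕ) ∣ 2 := (CharP.cast_eq_zero_iff F p 2).mp (by exact_mod_cast hcon)
    have := Nat.le_of_dvd (by norm_num) h1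
    omega
  obtain ⟨bb, hbb⟩ := NEM.exists_linearized hp hn hcard ℓ₀ hℓ₀add
  obtain ⟨AA, hAA⟩ := NEM.exists_linearized hp hn hcard (fun z => ℓ₀ (ℓ z))
    (fun x y => by
      show ℓ₀ (ℓ (x + y)) = ℓ₀ (ℓ x) + ℓ₀ (ℓ y)
      rw [hℓ, hℓ₀add])
  obtain ⟨cc, hcc⟩ := NEM.exists_linearized hp hn hcard ℓ₁ hℓ₁add
  have hfun : ∀ x : F,
      (∑ j : ZMod n, bb j * x ^ ((q + 1) * p ^ (j.val)))
        + (∑ i : ZMod n, AA i * x ^ (2 * p ^ (i.val)))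
      = ∑ i : ZMod n, ∑ j : ZMod n,
          (cc i) ^ (p ^ e) * cc j * x ^ (p ^ (i.val + e) + p ^ (j.val)) := by
    intro x
    have h1 : ℓ₀ (f x) = ℓ₀ (x ^ (q + 1)) + ℓ₀ (ℓ (x ^ 2)) := by
      rw [hf, hℓ₀add]
    have h2 : ℓ₀ (x ^ (q + 1)) = ∑ j : ZMod n, bb j * x ^ ((q + 1) * p ^ (j.val)) := by
      rw [hbb]
      exact Finset.sum_congr rfl fun j _ => by rw [← pow_mul]
    have h3 : ℓ₀ (ℓ (x ^ 2)) = ∑ i : ZMod n, AA i * x ^ (2 * p ^ (i.val)) := by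
      rw [hAA (x ^ 2)]
      exact Finset.sum_congr rfl fun i _ => by rw [← pow_mul]
    have h4 : (ℓ₁ x) ^ (p ^ e + 1) = ∑ i : ZMod n, ∑ j : ZMod n,
        (cc i) ^ (p ^ e) * cc j * x ^ (p ^ (i.val + e) + p ^ (j.val)) := by
      rw [pow_add, pow_one, hcc]
      have h5 : (∑ i : ZMod n, cc i * x ^ p ^ (i.val)) ^ (p ^ e)
          = ∑ i : ZMod n, (cc i) ^ (p ^ e) * x ^ (p ^ (i.val + e)) := by
        rw [sum_pow_char_pow]
        apply Finset.sum_congr rfl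
        intro i _
        rw [mul_pow, ← pow_mul, ← pow_add]
      rw [h5, Finset.sum_mul_sum]
      apply Finset.sum_congr rfl
      intro i _
      apply Finset.sum_congr rfl
      intro j _
      rw [pow_add (a := x)]
      ring
    rw [← h2, ← h3, ← h1, heqn x, h4]
  have hμμ : (m : ZMod n) + (m : ZMod n) = 0 := by
    have h1 : ((m : ℕ) : ZMod n) + ((m : ℕ) : ZMod n) = ((2 * m : ℕ) : ZMod n) := by
      push_cast
      ring
    rw [h1, ← hn_def]
    exact ZMod.natCast_self n
  have hterm : ∀ (co : F) (A : ℕ) (k : ℕ),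
      (∑ u : Fˣ, co * ((u : F)) ^ A * (((u⁻¹ : Fˣ) : F)) ^ k)
        = co * (if ((p ^ n - 1 : ℕ) : ℤ) ∣ ((A : ℤ) - (k : ℤ)) then (-1 : F) else 0) := by
    intro co A k
    have hu : ∀ u : Fˣ, co * ((u : F)) ^ A * (((u⁻¹ : Fˣ) : F)) ^ k
        = co * ((u ^ ((A : ℤ) - (k : ℤ)) : Fˣ) : F) := by
      intro u
      have h1 : ((u ^ ((A : ℤ) - (k : ℤ)) : Fˣ) : F) = (u : F) ^ A * ((u : F) ^ k)⁻¹ := by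
        rw [zpow_sub, zpow_natCast, zpow_natCast]
        simp [div_eq_mul_inv]
      rw [h1, Units.val_inv_eq_inv_val, inv_pow, mul_assoc]
    rw [Finset.sum_congr rfl (fun u _ => hu u), ← Finset.mul_sum, NEM.sum_units_zpow F _, hcard]
  have hE : ∀ s t : ZMod n, s ≠ t → s - t ≠ (m : ZMod n) →
      cc (s - (e : ZMod n)) ^ (p ^ e) * cc t + cc (t - (e : ZMod n)) ^ (p ^ e) * cc s = 0 := by
    intro s t hst hsm
    set k : ℕ := p ^ (s.val) + p ^ (t.val) with hk
    have hkc : ((k : ℕ) : ℤ) = (p : ℤ) ^ (s.val) + (p : ℤ) ^ (t.val) := by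
      rw [hk]
      push_cast
      ring
    have hsum : ∑ u : Fˣ,
        ((∑ j : ZMod n, bb j * ((u : F)) ^ ((q + 1) * p ^ (j.val)))
          + ∑ i : ZMod n, AA i * ((u : F)) ^ (2 * p ^ (i.val))) * (((u⁻¹ : Fˣ) : F)) ^ k
        = ∑ u : Fˣ, (∑ i : ZMod n, ∑ j : ZMod n,
            (cc i) ^ (p ^ e) * cc j * ((u : F)) ^ (p ^ (i.val + e) + p ^ (j.val)))
            * (((u⁻¹ : Fˣ) : F)) ^ k :=
      Finset.sum_congr rfl fun u _ => by rw [hfun ((u : F))]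
    have hzero1 : ∀ j : ZMod n,
        ¬ (((p ^ n - 1 : ℕ) : ℤ) ∣ (((q + 1) * p ^ (j.val) : ℕ) : ℤ) - (k : ℤ)) := by
      intro j hdvd
      have hsplitA : (((q + 1) * p ^ (j.val) : ℕ) : ℤ)
          = (p : ℤ) ^ (m + j.val) + (p : ℤ) ^ (j.val) := by
        rw [hq]
        push_cast
        rw [pow_add]
        ring
      have hab : (m + j.val) % n = ((j + (m : ZMod n)).val) % n := by
        rw [ZMod.val_add, ZMod.val_cast_of_lt (by omega : m < n),
          Nat.mod_mod_of_dvd _ dvd_rfl, Nat.add_comm j.val m]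
      have hred := NEM.pow_modEq (p := p) (by omega) hn hab
      have hdvd2 : ((p ^ n - 1 : ℕ) : ℤ) ∣
          ((p : ℤ) ^ ((j + (m : ZMod n)).val) + (p : ℤ) ^ (j.val)
            - ((p : ℤ) ^ (s.val) + (p : ℤ) ^ (t.val))) := by
        have h12 := dvd_sub hdvd hred
        have h13 : (((q + 1) * p ^ (j.val) : ℕ) : ℤ) - (k : ℤ)
            - ((p : ℤ) ^ (m + j.val) - (p : ℤ) ^ ((j + (m : ZMod n)).val))
            = (p : ℤ) ^ ((j + (m : ZMod n)).val) + (p : ℤ) ^ (j.val)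
              - ((p : ℤ) ^ (s.val) + (p : ℤ) ^ (t.val)) := by
          rw [hsplitA, hkc]
          ring
        rwa [h13] at h12
      rcases NEM.keyM hp3 hn (ZMod.val_lt _) (ZMod.val_lt _) (ZMod.val_lt _) (ZMod.val_lt _)
          hdvd2 with ⟨h1, h2⟩ | ⟨h1, h2⟩
      · have hs' : j + (m : ZMod n) = s := ZMod.val_injective n h1
        have ht' : j = t := ZMod.val_injective n h2
        apply hsm
        rw [← hs', ← ht']
        exact add_sub_cancel_left j (m : ZMod n)
      · have ht' : j + (m : ZMod n) = t := ZMod.val_injective n h1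
        have hs' : j = s := ZMod.val_injective n h2
        apply hsm
        rw [← ht', ← hs']
        have h14 : j - (j + (m : ZMod n)) = -(m : ZMod n) := by ring
        rw [h14, neg_eq_of_add_eq_zero_left hμμ]
    have hzero2 : ∀ i : ZMod n,
        ¬ (((p ^ n - 1 : ℕ) : ℤ) ∣ ((2 * p ^ (i.val) : ℕ) : ℤ) - (k : ℤ)) := by
      intro i hdvd
      have hdvd2 : ((p ^ n - 1 : ℕ) : ℤ) ∣
          ((p : ℤ) ^ (i.val) + (p : ℤ) ^ (i.val)
            - ((p : ℤ) ^ (s.val) + (p : ℤ) ^ (t.val))) := by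
        have h13 : ((2 * p ^ (i.val) : ℕ) : ℤ) - (k : ℤ)
            = (p : ℤ) ^ (i.val) + (p : ℤ) ^ (i.val)
              - ((p : ℤ) ^ (s.val) + (p : ℤ) ^ (t.val)) := by
          rw [hkc]
          push_cast
          ring
        rwa [h13] at hdvd
      rcases NEM.keyM hp3 hn (ZMod.val_lt _) (ZMod.val_lt _) (ZMod.val_lt _) (ZMod.val_lt _)
          hdvd2 with ⟨h1, h2⟩ | ⟨h1, h2⟩
      · exact hst ((ZMod.val_injective n h1).symm.trans (ZMod.val_injective n h2))
      · exact hst ((ZMod.val_injective n h2).symm.trans (ZMod.val_injective n h1))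
    have hL : ∑ u : Fˣ,
        ((∑ j : ZMod n, bb j * ((u : F)) ^ ((q + 1) * p ^ (j.val)))
          + ∑ i : ZMod n, AA i * ((u : F)) ^ (2 * p ^ (i.val))) * (((u⁻¹ : Fˣ) : F)) ^ k
        = 0 := by
      have h1 : ∀ u : Fˣ,
          ((∑ j : ZMod n, bb j * ((u : F)) ^ ((q + 1) * p ^ (j.val)))
            + ∑ i : ZMod n, AA i * ((u : F)) ^ (2 * p ^ (i.val))) * (((u⁻¹ : Fˣ) : F)) ^ k
          = (∑ j : ZMod n, bb j * ((u : F)) ^ ((q + 1) * p ^ (j.val)) * (((u⁻¹ : Fˣ) : F)) ^ k)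
            + ∑ i : ZMod n, AA i * ((u : F)) ^ (2 * p ^ (i.val)) * (((u⁻¹ : Fˣ) : F)) ^ k := by
        intro u
        rw [add_mul, Finset.sum_mul, Finset.sum_mul]
      rw [Finset.sum_congr rfl (fun u _ => h1 u), Finset.sum_add_distrib]
      have h2 : ∑ u : Fˣ, ∑ j : ZMod n,
          bb j * ((u : F)) ^ ((q + 1) * p ^ (j.val)) * (((u⁻¹ : Fˣ) : F)) ^ k = 0 := by
        rw [Finset.sum_comm]
        apply Finset.sum_eq_zero
        intro j _
        rw [hterm, if_neg (hzero1 j), mul_zero]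
      have h3 : ∑ u : Fˣ, ∑ i : ZMod n,
          AA i * ((u : F)) ^ (2 * p ^ (i.val)) * (((u⁻¹ : Fˣ) : F)) ^ k = 0 := by
        rw [Finset.sum_comm]
        apply Finset.sum_eq_zero
        intro i _
        rw [hterm, if_neg (hzero2 i), mul_zero]
      rw [h2, h3, add_zero]
    have hRterm : ∀ i j : ZMod n,
        (cc i) ^ (p ^ e) * cc j *
          (if ((p ^ n - 1 : ℕ) : ℤ) ∣ ((p ^ (i.val + e) + p ^ (j.val) : ℕ) : ℤ) - (k : ℤ)
            then (-1 : F) else 0)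
        = (if i = s - (e : ZMod n) ∧ j = t then -((cc i) ^ (p ^ e) * cc j) else 0)
          + (if i = t - (e : ZMod n) ∧ j = s then -((cc i) ^ (p ^ e) * cc j) else 0) := by
      intro i j
      have hab : (i.val + e) % n = ((i + (e : ZMod n)).val) % n := by
        rw [ZMod.val_add, ZMod.val_cast_of_lt (by omega : e < n),
          Nat.mod_mod_of_dvd _ dvd_rfl]
      have hred := NEM.pow_modEq (p := p) (by omega) hn hab
      have hiff : (((p ^ n - 1 : ℕ) : ℤ) ∣ ((p ^ (i.val + e) + p ^ (j.val) : ℕ) : ℤ) - (k : ℤ))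
          ↔ ((i = s - (e : ZMod n) ∧ j = t) ∨ (i = t - (e : ZMod n) ∧ j = s)) := by
        constructor
        · intro hdvd
          have hdvd2 : ((p ^ n - 1 : ℕ) : ℤ) ∣
              ((p : ℤ) ^ ((i + (e : ZMod n)).val) + (p : ℤ) ^ (j.val)
                - ((p : ℤ) ^ (s.val) + (p : ℤ) ^ (t.val))) := by
            have h12 := dvd_sub hdvd hred
            have h13 : ((p ^ (i.val + e) + p ^ (j.val) : ℕ) : ℤ) - (k : ℤ)
                - ((p : ℤ) ^ (i.val + e) - (p : ℤ) ^ ((i + (e : ZMod n)).val))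
                = (p : ℤ) ^ ((i + (e : ZMod n)).val) + (p : ℤ) ^ (j.val)
                  - ((p : ℤ) ^ (s.val) + (p : ℤ) ^ (t.val)) := by
              rw [hkc]
              push_cast
              ring
            rwa [h13] at h12
          rcases NEM.keyM hp3 hn (ZMod.val_lt _) (ZMod.val_lt _) (ZMod.val_lt _)
              (ZMod.val_lt _) hdvd2 with ⟨h1, h2⟩ | ⟨h1, h2⟩
          · exact Or.inl ⟨eq_sub_of_add_eq (ZMod.val_injective n h1),
              ZMod.val_injective n h2⟩
          · exact Or.inr ⟨eq_sub_of_add_eq (ZMod.val_injective n h1),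
              ZMod.val_injective n h2⟩
        · intro hor
          have key : ∀ a b2 : ZMod n, i = a - (e : ZMod n) → j = b2 →
              k = p ^ (a.val) + p ^ (b2.val) →
              ((p ^ n - 1 : ℕ) : ℤ) ∣ ((p ^ (i.val + e) + p ^ (j.val) : ℕ) : ℤ) - (k : ℤ) := by
            intro a b2 hia hjb hk2
            have hia2 : i + (e : ZMod n) = a := by
              rw [hia]
              ring
            have h13 : ((p ^ (i.val + e) + p ^ (j.val) : ℕ) : ℤ) - (k : ℤ)
                = (p : ℤ) ^ (i.val + e) - (p : ℤ) ^ ((i + (e : ZMod n)).val) := by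
              rw [hk2, hia2, hjb]
              push_cast
              ring
            rw [h13]
            exact hred
          rcases hor with ⟨h1, h2⟩ | ⟨h1, h2⟩
          · exact key s t h1 h2 rfl
          · exact key t s h1 h2 (by rw [hk]; ring)
      by_cases hcnd : ((p ^ n - 1 : ℕ) : ℤ) ∣ ((p ^ (i.val + e) + p ^ (j.val) : ℕ) : ℤ) - (k : ℤ)
      · rw [if_pos hcnd]
        rcases hiff.mp hcnd with ⟨h1, h2⟩ | ⟨h1, h2⟩
        · rw [if_pos ⟨h1, h2⟩, if_neg (fun hcon => hst (hcon.2.symm.trans h2)), add_zero]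
          ring
        · rw [if_neg (fun hcon => hst (h2.symm.trans hcon.2)), if_pos ⟨h1, h2⟩, zero_add]
          ring
      · rw [if_neg hcnd, mul_zero,
          if_neg (fun hcon => hcnd (hiff.mpr (Or.inl hcon))),
          if_neg (fun hcon => hcnd (hiff.mpr (Or.inr hcon))), add_zero]
    have hcollapse : ∀ (a b2 : ZMod n) (v : ZMod n → ZMod n → F),
        (∑ i : ZMod n, ∑ j : ZMod n, if i = a ∧ j = b2 then v i j else 0) = v a b2 := by
      intro a b2 v
      rw [Finset.sum_eq_single a]
      · rw [Finset.sum_eq_single b2]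
        · rw [if_pos ⟨rfl, rfl⟩]
        · intro j _ hj
          exact if_neg (fun h => hj h.2)
        · intro h
          exact absurd (Finset.mem_univ b2) h
      · intro i _ hi
        exact Finset.sum_eq_zero fun j _ => if_neg (fun h => hi h.1)
      · intro h
        exact absurd (Finset.mem_univ a) h
    have hR : ∑ u : Fˣ, (∑ i : ZMod n, ∑ j : ZMod n,
          (cc i) ^ (p ^ e) * cc j * ((u : F)) ^ (p ^ (i.val + e) + p ^ (j.val)))
          * (((u⁻¹ : Fˣ) : F)) ^ k
        = -((cc (s - (e : ZMod n))) ^ (p ^ e) * cc t)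
          + -((cc (t - (e : ZMod n))) ^ (p ^ e) * cc s) := by
      have h1 : ∀ u : Fˣ, (∑ i : ZMod n, ∑ j : ZMod n,
            (cc i) ^ (p ^ e) * cc j * ((u : F)) ^ (p ^ (i.val + e) + p ^ (j.val)))
            * (((u⁻¹ : Fˣ) : F)) ^ k
          = ∑ i : ZMod n, ∑ j : ZMod n,
            (cc i) ^ (p ^ e) * cc j * ((u : F)) ^ (p ^ (i.val + e) + p ^ (j.val))
              * (((u⁻¹ : Fˣ) : F)) ^ k := by
        intro u
        rw [Finset.sum_mul]
        exact Finset.sum_congr rfl fun i _ => by rw [Finset.sum_mul]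
      rw [Finset.sum_congr rfl (fun u _ => h1 u), Finset.sum_comm]
      have h2 : ∀ i : ZMod n, ∑ u : Fˣ, ∑ j : ZMod n,
            (cc i) ^ (p ^ e) * cc j * ((u : F)) ^ (p ^ (i.val + e) + p ^ (j.val))
              * (((u⁻¹ : Fˣ) : F)) ^ k
          = ∑ j : ZMod n, ((cc i) ^ (p ^ e) * cc j) *
              (if ((p ^ n - 1 : ℕ) : ℤ) ∣ ((p ^ (i.val + e) + p ^ (j.val) : ℕ) : ℤ) - (k : ℤ)
                then (-1 : F) else 0) := by
        intro i
        rw [Finset.sum_comm]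
        exact Finset.sum_congr rfl fun j _ => hterm _ _ _
      rw [Finset.sum_congr rfl (fun i _ => h2 i)]
      rw [Finset.sum_congr rfl (fun i _ => Finset.sum_congr rfl (fun j _ => hRterm i j))]
      rw [Finset.sum_congr rfl (fun i _ => Finset.sum_add_distrib), Finset.sum_add_distrib]
      rw [hcollapse (s - (e : ZMod n)) t (fun i j => -((cc i) ^ (p ^ e) * cc j)),
        hcollapse (t - (e : ZMod n)) s (fun i j => -((cc i) ^ (p ^ e) * cc j))]
    rw [hL, hR] at hsum
    linear_combination hsum
  have hεval : ((e : ZMod n)).val = e := ZMod.val_cast_of_lt (by omega)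
  have hε0 : (e : ZMod n) ≠ 0 := by
    intro hcon
    have h1 : ((e : ZMod n)).val = 0 := by rw [hcon, ZMod.val_zero]
    omega
  have hdord : Odd (addOrderOf (e : ZMod n)) := by
    rw [ZMod.addOrderOf_coe e (by omega : n ≠ 0), Nat.gcd_comm]
    exact hd
  have h2ε : (e : ZMod n) + (e : ZMod n) ≠ 0 := by
    intro hcon
    have hdvd : addOrderOf (e : ZMod n) ∣ 2 :=
      addOrderOf_dvd_of_nsmul_eq_zero (by rw [two_nsmul]; exact hcon)
    have h1 : addOrderOf (e : ZMod n) = 1 := by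
      rcases (Nat.dvd_prime Nat.prime_two).mp hdvd with h | h
      · exact h
      · rw [h] at hdord
        exact absurd hdord (by decide)
    exact hε0 (AddMonoid.addOrderOf_eq_one_iff.mp h1)
  have h4ε : ((e : ZMod n) + (e : ZMod n)) + ((e : ZMod n) + (e : ZMod n)) ≠ 0 := by
    intro hcon
    have hdvd : addOrderOf (e : ZMod n) ∣ 4 := by
      apply addOrderOf_dvd_of_nsmul_eq_zero
      have h4 : (4 : ℕ) • (e : ZMod n)
          = ((e : ZMod n) + (e : ZMod n)) + ((e : ZMod n) + (e : ZMod n)) := by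
        rw [show (4 : ℕ) = 2 + 2 from rfl, add_nsmul, two_nsmul]
      rw [h4]
      exact hcon
    have h2dvd : ¬ (2 ∣ addOrderOf (e : ZMod n)) := by
      rw [Nat.odd_iff] at hdord
      omega
    have hdvd2 : addOrderOf (e : ZMod n) ∣ 2 ^ 2 := by
      rw [show (2 : ℕ) ^ 2 = 4 by norm_num]
      exact hdvd
    rcases (Nat.dvd_prime_pow Nat.prime_two).mp hdvd2 with ⟨ii, hii, hieq⟩
    rcases Nat.eq_zero_or_pos ii with rfl | hpos
    · simp at hieq
      exact hε0 hieq
    · exact h2dvd (by rw [hieq]; exact dvd_pow_self 2 hpos.ne')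
  have hεμ : (e : ZMod n) ≠ (m : ZMod n) := by
    intro hcon
    exact h2ε (by rw [hcon]; exact hμμ)
  have h2εμ : (e : ZMod n) + (e : ZMod n) ≠ (m : ZMod n) := by
    intro hcon
    exact h4ε (by rw [hcon]; exact hμμ)
  have hnegμ : -(m : ZMod n) = (m : ZMod n) := neg_eq_of_add_eq_zero_left hμμ
  obtain ⟨x₀, hx₀⟩ := hℓ₁bij.2 1
  have hex : ∃ i : ZMod n, cc i ≠ 0 := by
    by_contra hcon
    push_neg at hcon
    have h1 := hcc x₀
    rw [hx₀, Finset.sum_eq_zero (fun i _ => by rw [hcon i, zero_mul])] at h1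
    exact one_ne_zero h1
  obtain ⟨i₀, hi₀⟩ := hex
  have hstep : ∀ i : ZMod n, cc i ≠ 0 →
      cc (i + (e : ZMod n)) ≠ 0 ∧ cc (i - (e : ZMod n)) ≠ 0 := by
    intro i hi
    have hne1 : i + (e : ZMod n) ≠ i := by
      intro hcon
      apply hε0
      have h1 : i + (e : ZMod n) = i + 0 := by rw [add_zero]; exact hcon
      exact add_left_cancel h1
    have hcnd : (i + (e : ZMod n)) - i ≠ (m : ZMod n) := by
      rw [add_sub_cancel_left]
      exact hεμ
    have h := hE (i + (e : ZMod n)) i hne1 hcnd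
    rw [add_sub_cancel_right] at h
    have hne : cc (i - (e : ZMod n)) ^ (p ^ e) * cc (i + (e : ZMod n)) ≠ 0 := by
      intro hcon
      rw [hcon, add_zero] at h
      exact (mul_ne_zero (pow_ne_zero _ hi) hi) h
    constructor
    · intro hcon
      exact hne (by rw [hcon, mul_zero])
    · intro hcon
      exact hne (by rw [hcon, zero_pow (by positivity), zero_mul])
  have hd1 : cc (i₀ - (e : ZMod n)) ≠ 0 := (hstep i₀ hi₀).2
  have hd3 : cc (i₀ + (e : ZMod n)) ≠ 0 := (hstep i₀ hi₀).1
  have hsub1 : i₀ - (e : ZMod n) ≠ i₀ := by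
    intro hcon
    exact hε0 (sub_eq_self.mp hcon)
  have hc1 : (i₀ - (e : ZMod n)) - i₀ ≠ (m : ZMod n) := by
    intro hcon
    apply hεμ
    have h1 : (i₀ - (e : ZMod n)) - i₀ = -(e : ZMod n) := by ring
    rw [h1, ← hnegμ] at hcon
    exact neg_injective hcon
  have e1 := hE (i₀ - (e : ZMod n)) i₀ hsub1 hc1
  have hsub2 : i₀ - (e : ZMod n) ≠ i₀ + (e : ZMod n) := by
    intro hcon
    apply h2ε
    have h1 : i₀ + (e : ZMod n) - (i₀ - (e : ZMod n)) = (e : ZMod n) + (e : ZMod n) := by ring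
    rw [← h1, hcon, sub_self]
  have hc2 : (i₀ - (e : ZMod n)) - (i₀ + (e : ZMod n)) ≠ (m : ZMod n) := by
    intro hcon
    apply h2εμ
    have h1 : (i₀ - (e : ZMod n)) - (i₀ + (e : ZMod n))
        = -((e : ZMod n) + (e : ZMod n)) := by ring
    rw [h1, ← hnegμ] at hcon
    exact neg_injective hcon
  have e2 := hE (i₀ - (e : ZMod n)) (i₀ + (e : ZMod n)) hsub2 hc2
  rw [add_sub_cancel_right] at e2
  have hsub3 : i₀ ≠ i₀ + (e : ZMod n) := by
    intro hcon
    apply hε0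
    have h1 : i₀ + 0 = i₀ + (e : ZMod n) := by rw [add_zero]; exact hcon
    exact (add_left_cancel h1).symm
  have hc3 : i₀ - (i₀ + (e : ZMod n)) ≠ (m : ZMod n) := by
    intro hcon
    apply hεμ
    have h1 : i₀ - (i₀ + (e : ZMod n)) = -(e : ZMod n) := by ring
    rw [h1, ← hnegμ] at hcon
    exact neg_injective hcon
  have e3 := hE i₀ (i₀ + (e : ZMod n)) hsub3 hc3
  rw [add_sub_cancel_right] at e3
  have hzero : (2 : F) * (cc (i₀ - (e : ZMod n)) ^ (p ^ e) * cc (i₀ - (e : ZMod n))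
      * cc (i₀ + (e : ZMod n))) = 0 := by
    linear_combination (cc (i₀ + (e : ZMod n))) * e1 - (cc i₀) * e2
      + (cc (i₀ - (e : ZMod n))) * e3
  have hprod : cc (i₀ - (e : ZMod n)) ^ (p ^ e) * cc (i₀ - (e : ZMod n))
      * cc (i₀ + (e : ZMod n)) ≠ 0 :=
    mul_ne_zero (mul_ne_zero (pow_ne_zero _ hd1) hd1) hd3
  rcases mul_eq_zero.mp hzero with h | h
  · exact h2F h
  · exact hprod h
end

section
/- Let p be an odd prime, k ≥ 1, m = 2k, q = p^m, and let b, c ∈ F_{q²} with N(b) ≠ N(c). Set ℓ(x) = (b·x^q + c·x)^{p^k} and f(x) = x^{q+1} + ℓ(x²). Then for every integer e ≥ 0 such that 2m/gcd(e, 2m) is odd (where gcd(0, 2m) = 2m), there do not exist F_p-linear bijections ℓ₀, ℓ₁ : F_{q²} → F_{q²} with ℓ₀(f(x)) = ℓ₁(x)^{p^e+1} for all x ∈ F_{q²}. In particular, f is not linearly equivalent to any planar monomial x^{p^e+1}. -/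
open Finset

set_option linter.unusedSectionVars false

private lemma aux_gcddvd (p g : ℕ) (hp : 2 ≤ p) (hg : 0 < g) :
    ∀ b, (p ^ g - 1 ∣ p ^ b - 1) → g ∣ b := by
  intro b
  induction b using Nat.strong_induction_on with
  | _ b ih =>
    intro hdvd
    by_cases hb : b < g
    · have h1 : p ^ b - 1 < p ^ g - 1 := by
        have := Nat.pow_lt_pow_right (by omega : 1 < p) hb
        have := Nat.one_le_pow b p (by omega : 0 < p)
        omega
      have h0 : p ^ b - 1 = 0 := Nat.eq_zero_of_dvd_of_lt hdvd h1
      have hble : p ^ b ≤ 1 := by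
        have := Nat.one_le_pow b p (by omega : 0 < p); omega
      have hb0 : b = 0 := by
        by_contra hb0
        have := Nat.one_lt_pow hb0 (by omega : 1 < p)
        omega
      simp [hb0]
    · push_neg at hb
      set A := p ^ (b - g) with hA
      have hAB : A * p ^ g = p ^ b := by rw [← pow_add]; congr 1; omega
      have hA1 : 1 ≤ A := Nat.one_le_pow _ _ (by omega : 0 < p)
      have hB1 : 1 ≤ p ^ g := Nat.one_le_pow _ _ (by omega : 0 < p)
      have hpb1 : 1 ≤ p ^ b := Nat.one_le_pow _ _ (by omega : 0 < p)
      have h5 : A * (p ^ g - 1) + A = A * p ^ g := by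
        rw [← Nat.mul_succ]; congr 1; omega
      have h6 : A * (p ^ g - 1) = p ^ b - A := by omega
      have key : p ^ b - 1 - A * (p ^ g - 1) = A - 1 := by omega
      have hdvd2 : p ^ g - 1 ∣ A - 1 := by
        rw [← key]
        exact Nat.dvd_sub hdvd (dvd_mul_left _ A)
      obtain ⟨t, ht⟩ := ih (b - g) (by omega) hdvd2
      exact ⟨t + 1, by rw [Nat.mul_succ]; omega⟩

section Aux

variable {F : Type*} [Field F] [Fintype F] (p : ℕ) [Fact p.Prime] [CharP F p]

private lemma aux_pow_card_pow (n : ℕ) (hcard : Fintype.card F = p ^ n) (t : ℕ) (x : F) :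
    x ^ (p ^ n) ^ t = x := by
  induction t with
  | zero => simp
  | succ s ih =>
    rw [pow_succ, pow_mul, ih, ← hcard, FiniteField.pow_card]

private lemma aux_pow_pmod (n : ℕ) (hcard : Fintype.card F = p ^ n) (a : ℕ) (x : F) :
    x ^ p ^ a = x ^ p ^ (a % n) := by
  have h1 : p ^ a = (p ^ n) ^ (a / n) * p ^ (a % n) := by
    rw [← pow_mul, ← pow_add]
    congr 1
    exact (Nat.div_add_mod a n).symm
  rw [h1, pow_mul, aux_pow_card_pow p n hcard]

private lemma aux_mon_shift (n : ℕ) [NeZero n] (hcard : Fintype.card F = p ^ n)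
    (i : ZMod n) (t : ℕ) (x : F) :
    (x ^ p ^ i.val) ^ p ^ t = x ^ p ^ ((i + (t : ZMod n)).val) := by
  rw [← pow_mul, ← pow_add, aux_pow_pmod p n hcard (i.val + t) x, ZMod.val_add,
    ZMod.val_natCast, Nat.add_mod_mod, ← aux_pow_pmod p n hcard]

end Aux

section Aux2

variable {F : Type*} [Field F] [Fintype F] (p : ℕ) [Fact p.Prime] [CharP F p]

private lemma aux_indep (hp3 : 3 ≤ p) (n : ℕ) [NeZero n] (hn0 : 0 < n) (hcard : Fintype.card F = p ^ n)
    (co : ZMod n → F) (h : ∀ x : F, ∑ i : ZMod n, co i * x ^ p ^ i.val = 0) :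
    ∀ i, co i = 0 := by
  classical
  set Φ : ZMod n → (F →* F) := fun i => powMonoidHom (p ^ i.val) with hΦ
  have hinj : Function.Injective Φ := by
    intro i j hij
    obtain ⟨u, hu⟩ := IsCyclic.exists_generator (α := Fˣ)
    have horder : orderOf u = p ^ n - 1 := by
      rw [orderOf_eq_card_of_forall_mem_zpowers hu, Nat.card_eq_fintype_card,
        Fintype.card_units, hcard]
    have hfun : ((u : F)) ^ p ^ i.val = ((u : F)) ^ p ^ j.val := by
      have := congrArg (fun φ => φ.toFun (u : F)) hij
      simpa [hΦ, powMonoidHom] using this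
    have huu : u ^ p ^ i.val = u ^ p ^ j.val := by
      ext; push_cast; exact hfun
    have hmod : p ^ i.val ≡ p ^ j.val [MOD orderOf u] := by
      rwa [← pow_eq_pow_iff_modEq]
    have hlt : ∀ s : ZMod n, p ^ s.val < p ^ n - 1 := by
      intro s
      have h1 : p ^ s.val ≤ p ^ (n - 1) :=
        Nat.pow_le_pow_right (by omega) (by have := ZMod.val_lt s; omega)
      have h2 : p ^ (n - 1) * 3 ≤ p ^ (n - 1) * p := Nat.mul_le_mul_left _ hp3
      have h3 : p ^ (n - 1) * p = p ^ n := by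
        rw [← pow_succ]; congr 1; omega
      have h4 : 1 ≤ p ^ (n-1) := Nat.one_le_pow _ _ (by omega)
      omega
    have heq : p ^ i.val = p ^ j.val := by
      have h1 := hlt i
      have h2 := hlt j
      rw [horder] at hmod
      unfold Nat.ModEq at hmod
      rwa [Nat.mod_eq_of_lt h1, Nat.mod_eq_of_lt h2] at hmod
    have := Nat.pow_right_injective (by omega : 2 ≤ p) heq
    exact ZMod.val_injective n this
  have hli : LinearIndependent F (fun i : ZMod n => ⇑(Φ i)) :=
    (linearIndependent_monoidHom F F).comp Φ hinj
  have := Fintype.linearIndependent_iff.1 hli co ?_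
  · exact this
  · funext x
    have hx := h x
    simpa [hΦ, powMonoidHom, Finset.sum_apply] using hx

private lemma aux_indep2 (hp3 : 3 ≤ p) (n : ℕ) [NeZero n] (hn0 : 0 < n) (hcard : Fintype.card F = p ^ n)
    (c : ZMod n → ZMod n → F)
    (h : ∀ x y : F, ∑ s : ZMod n, ∑ t : ZMod n, c s t * x ^ p ^ s.val * y ^ p ^ t.val = 0) :
    ∀ s t, c s t = 0 := by
  have step1 : ∀ (x : F) (t : ZMod n), ∑ s : ZMod n, c s t * x ^ p ^ s.val = 0 := by
    intro x t
    have h2 : ∀ y : F, ∑ tt : ZMod n, (∑ s : ZMod n, c s tt * x ^ p ^ s.val) * y ^ p ^ tt.val = 0 := by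
      intro y
      have := h x y
      rw [Finset.sum_comm] at this
      simpa [Finset.sum_mul] using this
    exact aux_indep p hp3 n hn0 hcard _ h2 t
  intro s t
  exact aux_indep p hp3 n hn0 hcard (fun ss => c ss t) (fun x => step1 x t) s

end Aux2

section Aux3

variable {F : Type*} [Field F] [Fintype F] (p : ℕ) [Fact p.Prime] [CharP F p]

private lemma aux_repr (hp3 : 3 ≤ p) (n : ℕ) [NeZero n] (hn0 : 0 < n)
    (hcard : Fintype.card F = p ^ n) (h : F → F) (hadd : ∀ x y, h (x + y) = h x + h y) :
    ∃ a : ZMod n → F, ∀ x, h x = ∑ i : ZMod n, a i * x ^ p ^ i.val := by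
  classical
  letI : Algebra (ZMod p) F := ZMod.algebra F p
  have hdd : Module.finrank (ZMod p) F = n := by
    have hc := Module.card_eq_pow_finrank (K := ZMod p) (V := F)
    rw [ZMod.card, hcard] at hc
    exact (Nat.pow_right_injective (by omega : 2 ≤ p) hc.symm)
  set bb := Module.finBasis (ZMod p) F with hbb
  -- the type of additive maps
  set A := {hh : F → F // ∀ x y, hh (x + y) = hh x + hh y} with hA
  set WW : (ZMod n → F) → (F → F) := fun a x => ∑ i : ZMod n, a i * x ^ p ^ i.val with hWW
  have hWadd : ∀ a, ∀ x y : F, WW a (x + y) = WW a x + WW a y := by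
    intro a x y
    simp only [hWW]
    rw [← Finset.sum_add_distrib]
    refine Finset.sum_congr rfl fun i _ => ?_
    rw [add_pow_char_pow, mul_add]
  have hWinj : Function.Injective WW := by
    intro a a' heq
    have : ∀ x : F, ∑ i : ZMod n, (a i - a' i) * x ^ p ^ i.val = 0 := by
      intro x
      have h1 : WW a x = WW a' x := by rw [heq]
      simp only [hWW] at h1
      simp only [sub_mul]
      rw [Finset.sum_sub_distrib, h1, sub_self]
    have h2 := aux_indep p hp3 n hn0 hcard _ this
    funext i
    exact sub_eq_zero.mp (h2 i)
  set W' : (ZMod n → F) → A := fun a => ⟨WW a, hWadd a⟩ with hW'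
  have hW'inj : Function.Injective W' := by
    intro a a' heq
    exact hWinj (congrArg Subtype.val heq)
  set ev : A → (Fin (Module.finrank (ZMod p) F) → F) := fun hh i => hh.1 (bb i) with hev
  have hevinj : Function.Injective ev := by
    intro h1 h2 heq
    apply Subtype.ext
    funext x
    have hx : ∑ i, bb.repr x i • bb i = x := Module.Basis.sum_repr bb x
    have key : ∀ (hh : A), hh.1 x = ∑ i, (bb.repr x i).val • hh.1 (bb i) := by
      intro hh
      set H := AddMonoidHom.mk' hh.1 (fun x y => hh.2 x y) with hH
      calc hh.1 x = H (∑ i, bb.repr x i • bb i) := by rw [hx]; rfl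
        _ = ∑ i, H (bb.repr x i • bb i) := map_sum H _ _
        _ = ∑ i, (bb.repr x i).val • hh.1 (bb i) := by
            refine Finset.sum_congr rfl fun i _ => ?_
            have hsm : (bb.repr x i) • (bb i) = ((bb.repr x i).val : ℕ) • (bb i) := by
              have hz : (bb.repr x i) • (bb i) = ZMod.cast (bb.repr x i) * (bb i) := rfl
              rw [hz, ← ZMod.natCast_val, nsmul_eq_mul]
            rw [hsm, AddMonoidHom.map_nsmul]
            rfl
    rw [key h1, key h2]
    refine Finset.sum_congr rfl fun i _ => ?_
    have : h1.1 (bb i) = h2.1 (bb i) := congrFun heq i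
    rw [this]
  have hcardA1 : Fintype.card A ≤ Fintype.card (Fin (Module.finrank (ZMod p) F) → F) :=
    Fintype.card_le_of_injective ev hevinj
  have hcardA2 : Fintype.card (ZMod n → F) ≤ Fintype.card A :=
    Fintype.card_le_of_injective W' hW'inj
  have hcards : Fintype.card (ZMod n → F) = Fintype.card (Fin (Module.finrank (ZMod p) F) → F) := by
    rw [Fintype.card_fun, Fintype.card_fun, ZMod.card, Fintype.card_fin, hdd]
  have hbij : Function.Bijective W' :=
    (Fintype.bijective_iff_injective_and_card W').2 ⟨hW'inj, by omega⟩
  obtain ⟨a, ha⟩ := hbij.2 ⟨h, hadd⟩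
  exact ⟨a, fun x => by
    have : WW a x = h x := congrFun (congrArg Subtype.val ha) x
    rw [← this]⟩

end Aux3

section KeyA

variable {F : Type*} [Field F] [Fintype F] (p k : ℕ) [Fact p.Prime] [CharP F p]

private lemma keyA (hp3 : 3 ≤ p) (hk : 0 < k) (hcard : Fintype.card F = p ^ (4*k))
    (b c : F) (hbc : b ^ (p^(2*k) + 1) ≠ c ^ (p^(2*k) + 1))
    (P P₀ : F → F)
    (hPa : ∀ x y, P (x + y) = P x + P y)
    (hP₀a : ∀ x y, P₀ (x + y) = P₀ x + P₀ y)
    (hiden : ∀ x y : F,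
      (P x)^(p^(2*k)) * y + (P x) * y^(p^(2*k)) + 2*(b^(p^k))*((P x)*y)^(p^(3*k))
          + 2*(c^(p^k))*((P x)*y)^(p^k)
      = P₀ (x^(p^(2*k)) * y + x * y^(p^(2*k)) + 2*(b^(p^k))*(x*y)^(p^(3*k))
          + 2*(c^(p^k))*(x*y)^(p^k))) :
    ∃ α : F, α ^ (p^(2*k)) = α ∧ ∀ x, P x = α * x := by
  classical
  haveI : NeZero (4*k) := ⟨by omega⟩
  obtain ⟨a, ha⟩ := aux_repr p hp3 (4*k) (by omega) hcard P hPa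
  obtain ⟨d, hd⟩ := aux_repr p hp3 (4*k) (by omega) hcard P₀ hP₀a
  set kk : ZMod (4*k) := ((k : ℕ) : ZMod (4*k)) with hkk
  set k2 : ZMod (4*k) := (((2*k : ℕ)) : ZMod (4*k)) with hk2
  set k3 : ZMod (4*k) := (((3*k : ℕ)) : ZMod (4*k)) with hk3
  set B₀ : F := b ^ (p^k) with hB₀
  set C₀ : F := c ^ (p^k) with hC₀
  have hne : ∀ u v : ℕ, u < 4*k → v < 4*k → u ≠ v → ((u : ZMod (4*k)) ≠ (v : ZMod (4*k))) := by
    intro u v hu hv huv heq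
    rw [ZMod.natCast_eq_natCast_iff] at heq
    unfold Nat.ModEq at heq
    rw [Nat.mod_eq_of_lt hu, Nat.mod_eq_of_lt hv] at heq
    exact huv heq
  have zk2 : k2 ≠ 0 := by
    have h := hne (2*k) 0 (by omega) (by omega) (by omega)
    rwa [Nat.cast_zero] at h
  have zkk : kk ≠ 0 := by
    have h := hne k 0 (by omega) (by omega) (by omega)
    rwa [Nat.cast_zero] at h
  have zk3 : k3 ≠ 0 := by
    have h := hne (3*k) 0 (by omega) (by omega) (by omega)
    rwa [Nat.cast_zero] at h
  have zkk2 : kk ≠ k2 := hne k (2*k) (by omega) (by omega) (by omega)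
  have zkk3 : kk ≠ k3 := hne k (3*k) (by omega) (by omega) (by omega)
  have zk32 : k3 ≠ k2 := hne (3*k) (2*k) (by omega) (by omega) (by omega)
  have zadd2 : kk + k2 = k3 := by
    rw [hkk, hk2, hk3, ← Nat.cast_add]
    congr 1
    omega
  have zadd3 : k2 + k2 = 0 := by
    rw [hk2, ← Nat.cast_add]
    have h4 : (2*k + 2*k) = 4*k := by omega
    rw [h4, ZMod.natCast_self]
  have zadd1 : k3 + k2 = kk := by
    rw [← zadd2, add_assoc, zadd3, add_zero]
  have zneg : -k2 = k2 := neg_eq_of_add_eq_zero_left zadd3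
  have zsub2 : k3 - kk = k2 := by rw [← zadd2]; ring
  have zsub1 : kk - k3 = k2 := by rw [← zadd1]; ring
  have zsub3 : k3 - k2 = kk := by rw [sub_eq_add_neg, zneg, zadd1]
  have zsub4 : kk - k2 = k3 := by rw [sub_eq_add_neg, zneg, zadd2]
  have vkk : kk.val = k := by rw [hkk, ZMod.val_natCast, Nat.mod_eq_of_lt (by omega)]
  have vk2 : k2.val = 2*k := by rw [hk2, ZMod.val_natCast, Nat.mod_eq_of_lt (by omega)]
  have vk3 : k3.val = 3*k := by rw [hk3, ZMod.val_natCast, Nat.mod_eq_of_lt (by omega)]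
  have shiftv : ∀ (w i : ZMod (4*k)) (z : F),
      (z ^ p ^ w.val) ^ (p ^ i.val) = z ^ p ^ ((w + i).val) := by
    intro w i z
    have h := aux_mon_shift p (4*k) hcard w i.val z
    rwa [ZMod.natCast_val, ZMod.cast_id] at h
  have shift1 : ∀ (i : ZMod (4*k)) (z : F),
      (z ^ p ^ i.val) ^ (p ^ k) = z ^ p ^ ((i + kk).val) := by
    intro i z
    have h := aux_mon_shift p (4*k) hcard i k z
    rwa [← hkk] at h
  have shift2 : ∀ (i : ZMod (4*k)) (z : F),
      (z ^ p ^ i.val) ^ (p ^ (2*k)) = z ^ p ^ ((i + k2).val) := by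
    intro i z
    have h := aux_mon_shift p (4*k) hcard i (2*k) z
    rwa [← hk2] at h
  have shift3 : ∀ (i : ZMod (4*k)) (z : F),
      (z ^ p ^ i.val) ^ (p ^ (3*k)) = z ^ p ^ ((i + k3).val) := by
    intro i z
    have h := aux_mon_shift p (4*k) hcard i (3*k) z
    rwa [← hk3] at h
  have two_pow : ∀ t : ℕ, (2:F) ^ (p ^ t) = 2 := by
    intro t
    rw [show (2:F) = 1+1 by norm_num, add_pow_char_pow, one_pow]
  set δ : ZMod (4*k) → ZMod (4*k) → F := fun u v => (if u = v then (1:F) else 0) with hδ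
  have dpos : ∀ u : ZMod (4*k), δ u u = 1 := by
    intro u; simp [hδ]
  have dneg : ∀ {u v : ZMod (4*k)}, u ≠ v → δ u v = 0 := by
    intro u v h; simp [hδ, h]
  have colA : ∀ (w : ZMod (4*k)) (f : ZMod (4*k) → F),
      (∑ t : ZMod (4*k), δ t w * f t) = f w := by
    intro w f
    rw [Finset.sum_eq_single w]
    · rw [dpos, one_mul]
    · intro t _ htw
      rw [dneg htw, zero_mul]
    · intro hmem
      exact absurd (Finset.mem_univ w) hmem
  have reR : ∀ (G : ZMod (4*k) → F) (w : ZMod (4*k)),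
      (∑ s : ZMod (4*k), G s) = ∑ i : ZMod (4*k), G (i + w) := by
    intro G w
    exact (Fintype.sum_equiv (Equiv.addRight w) (fun i => G (i + w)) G (fun i => rfl)).symm
  set cc : ZMod (4*k) → ZMod (4*k) → F := fun s t =>
    δ t 0 * ((a (s - k2)) ^ (p^(2*k)))
    + δ t k2 * (a s)
    + δ t k3 * (2*B₀*(a (s - k3)) ^ (p^(3*k)))
    + δ t kk * (2*C₀*(a (s - kk)) ^ (p^k))
    - δ t (s - k2) * (d (s - k2))
    - δ t (s + k2) * (d s)
    - δ t s * (2*(B₀ ^ (p ^ (s - k3).val))*(d (s - k3))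
          + 2*(C₀ ^ (p ^ (s - kk).val))*(d (s - kk))) with hcc
  have claim1 : ∀ x y : F,
      ∑ s : ZMod (4*k), ∑ t : ZMod (4*k), cc s t * x ^ p ^ s.val * y ^ p ^ t.val = 0 := by
    intro x y
    have step1 : (∑ s : ZMod (4*k), ∑ t : ZMod (4*k), cc s t * x ^ p ^ s.val * y ^ p ^ t.val)
        = ∑ s : ZMod (4*k),
          ( (a (s - k2)) ^ (p^(2*k)) * x ^ p ^ (s).val * y ^ p ^ ((0 : ZMod (4*k))).val
          + (a s) * x ^ p ^ (s).val * y ^ p ^ k2.val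
          + 2*B₀*(a (s - k3)) ^ (p^(3*k)) * x ^ p ^ (s).val * y ^ p ^ k3.val
          + 2*C₀*(a (s - kk)) ^ (p^k) * x ^ p ^ (s).val * y ^ p ^ kk.val
          - d (s - k2) * x ^ p ^ (s).val * y ^ p ^ ((s - k2)).val
          - d s * x ^ p ^ (s).val * y ^ p ^ ((s + k2)).val
          - (2*(B₀ ^ (p ^ (s - k3).val))*(d (s - k3))
              + 2*(C₀ ^ (p ^ (s - kk).val))*(d (s - kk))) * x ^ p ^ (s).val * y ^ p ^ (s).val ) := by
      refine Finset.sum_congr rfl fun s _ => ?_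
      have hpoint : ∀ t : ZMod (4*k), cc s t * x ^ p ^ s.val * y ^ p ^ t.val
          = δ t 0 * ((a (s - k2)) ^ (p^(2*k)) * x ^ p ^ s.val * y ^ p ^ t.val)
          + δ t k2 * ((a s) * x ^ p ^ s.val * y ^ p ^ t.val)
          + δ t k3 * (2*B₀*(a (s - k3)) ^ (p^(3*k)) * x ^ p ^ s.val * y ^ p ^ t.val)
          + δ t kk * (2*C₀*(a (s - kk)) ^ (p^k) * x ^ p ^ s.val * y ^ p ^ t.val)
          - δ t (s - k2) * (d (s - k2) * x ^ p ^ s.val * y ^ p ^ t.val)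
          - δ t (s + k2) * (d s * x ^ p ^ s.val * y ^ p ^ t.val)
          - δ t s * ((2*(B₀ ^ (p ^ (s - k3).val))*(d (s - k3))
              + 2*(C₀ ^ (p ^ (s - kk).val))*(d (s - kk))) * x ^ p ^ s.val * y ^ p ^ t.val) := by
        intro t
        simp only [hcc]
        ring
      rw [Finset.sum_congr rfl (fun t _ => hpoint t)]
      rw [Finset.sum_sub_distrib, Finset.sum_sub_distrib, Finset.sum_sub_distrib,
        Finset.sum_add_distrib, Finset.sum_add_distrib, Finset.sum_add_distrib]
      rw [colA, colA, colA, colA, colA, colA, colA]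

    have e1 : (∑ s : ZMod (4*k), (a (s - k2)) ^ (p^(2*k)) * x ^ p ^ (s).val * y ^ p ^ ((0 : ZMod (4*k))).val) = ∑ i : ZMod (4*k), (a i) ^ (p^(2*k)) * x ^ p ^ (i + k2).val * y ^ p ^ ((0 : ZMod (4*k))).val := by
      rw [reR (fun s : ZMod (4*k) => (a (s - k2)) ^ (p^(2*k)) * x ^ p ^ (s).val * y ^ p ^ ((0 : ZMod (4*k))).val) k2]
      exact Finset.sum_congr rfl fun i _ => by rw [add_sub_cancel_right]
    have e3 : (∑ s : ZMod (4*k), 2*B₀*(a (s - k3)) ^ (p^(3*k)) * x ^ p ^ (s).val * y ^ p ^ k3.val) = ∑ i : ZMod (4*k), 2*B₀*(a i) ^ (p^(3*k)) * x ^ p ^ (i + k3).val * y ^ p ^ k3.val := by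
      rw [reR (fun s : ZMod (4*k) => 2*B₀*(a (s - k3)) ^ (p^(3*k)) * x ^ p ^ (s).val * y ^ p ^ k3.val) k3]
      exact Finset.sum_congr rfl fun i _ => by rw [add_sub_cancel_right]
    have e4 : (∑ s : ZMod (4*k), 2*C₀*(a (s - kk)) ^ (p^k) * x ^ p ^ (s).val * y ^ p ^ kk.val) = ∑ i : ZMod (4*k), 2*C₀*(a i) ^ (p^k) * x ^ p ^ (i + kk).val * y ^ p ^ kk.val := by
      rw [reR (fun s : ZMod (4*k) => 2*C₀*(a (s - kk)) ^ (p^k) * x ^ p ^ (s).val * y ^ p ^ kk.val) kk]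
      exact Finset.sum_congr rfl fun i _ => by rw [add_sub_cancel_right]
    have e5 : (∑ s : ZMod (4*k), d (s - k2) * x ^ p ^ (s).val * y ^ p ^ (s - k2).val) = ∑ i : ZMod (4*k), d i * x ^ p ^ (i + k2).val * y ^ p ^ (i).val := by
      rw [reR (fun s : ZMod (4*k) => d (s - k2) * x ^ p ^ (s).val * y ^ p ^ (s - k2).val) k2]
      exact Finset.sum_congr rfl fun i _ => by rw [add_sub_cancel_right]
    have e7a : (∑ s : ZMod (4*k), 2*(B₀ ^ (p ^ (s - k3).val))*(d (s - k3)) * x ^ p ^ (s).val * y ^ p ^ (s).val) = ∑ i : ZMod (4*k), 2*(B₀ ^ (p ^ i.val))*(d i) * x ^ p ^ (i + k3).val * y ^ p ^ (i + k3).val := by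
      rw [reR (fun s : ZMod (4*k) => 2*(B₀ ^ (p ^ (s - k3).val))*(d (s - k3)) * x ^ p ^ (s).val * y ^ p ^ (s).val) k3]
      exact Finset.sum_congr rfl fun i _ => by rw [add_sub_cancel_right]
    have e7b : (∑ s : ZMod (4*k), 2*(C₀ ^ (p ^ (s - kk).val))*(d (s - kk)) * x ^ p ^ (s).val * y ^ p ^ (s).val) = ∑ i : ZMod (4*k), 2*(C₀ ^ (p ^ i.val))*(d i) * x ^ p ^ (i + kk).val * y ^ p ^ (i + kk).val := by
      rw [reR (fun s : ZMod (4*k) => 2*(C₀ ^ (p ^ (s - kk).val))*(d (s - kk)) * x ^ p ^ (s).val * y ^ p ^ (s).val) kk]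
      exact Finset.sum_congr rfl fun i _ => by rw [add_sub_cancel_right]
    have step2 : (∑ s : ZMod (4*k),
          ( (a (s - k2)) ^ (p^(2*k)) * x ^ p ^ (s).val * y ^ p ^ ((0 : ZMod (4*k))).val
          + (a s) * x ^ p ^ (s).val * y ^ p ^ k2.val
          + 2*B₀*(a (s - k3)) ^ (p^(3*k)) * x ^ p ^ (s).val * y ^ p ^ k3.val
          + 2*C₀*(a (s - kk)) ^ (p^k) * x ^ p ^ (s).val * y ^ p ^ kk.val
          - d (s - k2) * x ^ p ^ (s).val * y ^ p ^ (s - k2).val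
          - d s * x ^ p ^ (s).val * y ^ p ^ (s + k2).val
          - (2*(B₀ ^ (p ^ (s - k3).val))*(d (s - k3)) + 2*(C₀ ^ (p ^ (s - kk).val))*(d (s - kk))) * x ^ p ^ (s).val * y ^ p ^ (s).val ))
        = ((∑ i : ZMod (4*k), (a i) ^ (p^(2*k)) * x ^ p ^ (i + k2).val * y ^ p ^ ((0 : ZMod (4*k))).val)
          + (∑ i : ZMod (4*k), (a i) * x ^ p ^ (i).val * y ^ p ^ k2.val)
          + (∑ i : ZMod (4*k), 2*B₀*(a i) ^ (p^(3*k)) * x ^ p ^ (i + k3).val * y ^ p ^ k3.val)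
          + (∑ i : ZMod (4*k), 2*C₀*(a i) ^ (p^k) * x ^ p ^ (i + kk).val * y ^ p ^ kk.val))
          - ((∑ i : ZMod (4*k), d i * x ^ p ^ (i + k2).val * y ^ p ^ (i).val)
          + (∑ i : ZMod (4*k), d i * x ^ p ^ (i).val * y ^ p ^ (i + k2).val)
          + (∑ i : ZMod (4*k), 2*(B₀ ^ (p ^ i.val))*(d i) * x ^ p ^ (i + k3).val * y ^ p ^ (i + k3).val)
          + (∑ i : ZMod (4*k), 2*(C₀ ^ (p ^ i.val))*(d i) * x ^ p ^ (i + kk).val * y ^ p ^ (i + kk).val)) := by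
      have hpt : ∀ s : ZMod (4*k),
          ( (a (s - k2)) ^ (p^(2*k)) * x ^ p ^ (s).val * y ^ p ^ ((0 : ZMod (4*k))).val
          + (a s) * x ^ p ^ (s).val * y ^ p ^ k2.val
          + 2*B₀*(a (s - k3)) ^ (p^(3*k)) * x ^ p ^ (s).val * y ^ p ^ k3.val
          + 2*C₀*(a (s - kk)) ^ (p^k) * x ^ p ^ (s).val * y ^ p ^ kk.val
          - d (s - k2) * x ^ p ^ (s).val * y ^ p ^ (s - k2).val
          - d s * x ^ p ^ (s).val * y ^ p ^ (s + k2).val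
          - (2*(B₀ ^ (p ^ (s - k3).val))*(d (s - k3)) + 2*(C₀ ^ (p ^ (s - kk).val))*(d (s - kk))) * x ^ p ^ (s).val * y ^ p ^ (s).val )
          = (a (s - k2)) ^ (p^(2*k)) * x ^ p ^ (s).val * y ^ p ^ ((0 : ZMod (4*k))).val
          + (a s) * x ^ p ^ (s).val * y ^ p ^ k2.val
          + 2*B₀*(a (s - k3)) ^ (p^(3*k)) * x ^ p ^ (s).val * y ^ p ^ k3.val
          + 2*C₀*(a (s - kk)) ^ (p^k) * x ^ p ^ (s).val * y ^ p ^ kk.val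
          - d (s - k2) * x ^ p ^ (s).val * y ^ p ^ (s - k2).val
          - d s * x ^ p ^ (s).val * y ^ p ^ (s + k2).val
          - (2*(B₀ ^ (p ^ (s - k3).val))*(d (s - k3)) * x ^ p ^ (s).val * y ^ p ^ (s).val + 2*(C₀ ^ (p ^ (s - kk).val))*(d (s - kk)) * x ^ p ^ (s).val * y ^ p ^ (s).val) := fun s => by ring
      rw [Finset.sum_congr rfl (fun s _ => hpt s)]
      simp only [Finset.sum_add_distrib, Finset.sum_sub_distrib]
      rw [e1, e3, e4, e5, e7a, e7b]
      ring
    have eL : (P x)^(p^(2*k)) * y + (P x) * y^(p^(2*k)) + 2*B₀*((P x)*y)^(p^(3*k))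
          + 2*C₀*((P x)*y)^(p^k)
        = (∑ i : ZMod (4*k), (a i) ^ (p^(2*k)) * x ^ p ^ (i + k2).val * y ^ p ^ ((0 : ZMod (4*k))).val) + (∑ i : ZMod (4*k), (a i) * x ^ p ^ (i).val * y ^ p ^ k2.val) + (∑ i : ZMod (4*k), 2*B₀*(a i) ^ (p^(3*k)) * x ^ p ^ (i + k3).val * y ^ p ^ k3.val) + (∑ i : ZMod (4*k), 2*C₀*(a i) ^ (p^k) * x ^ p ^ (i + kk).val * y ^ p ^ kk.val) := by
      rw [ha x]
      have t1 : (∑ i : ZMod (4*k), a i * x ^ p ^ i.val) ^ (p^(2*k)) * y = ∑ i : ZMod (4*k), (a i) ^ (p^(2*k)) * x ^ p ^ (i + k2).val * y ^ p ^ ((0 : ZMod (4*k))).val := by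
        rw [sum_pow_char_pow, Finset.sum_mul]
        refine Finset.sum_congr rfl fun i _ => ?_
        rw [mul_pow, shift2, ZMod.val_zero, pow_zero, pow_one]
      have t2 : (∑ i : ZMod (4*k), a i * x ^ p ^ i.val) * y ^ (p^(2*k)) = ∑ i : ZMod (4*k), (a i) * x ^ p ^ (i).val * y ^ p ^ k2.val := by
        rw [Finset.sum_mul, vk2]
      have t3 : 2*B₀*((∑ i : ZMod (4*k), a i * x ^ p ^ i.val) * y)^(p^(3*k)) = ∑ i : ZMod (4*k), 2*B₀*(a i) ^ (p^(3*k)) * x ^ p ^ (i + k3).val * y ^ p ^ k3.val := by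
        rw [mul_pow, sum_pow_char_pow, Finset.sum_mul, Finset.mul_sum]
        refine Finset.sum_congr rfl fun i _ => ?_
        rw [mul_pow, shift3, vk3]
        ring
      have t4 : 2*C₀*((∑ i : ZMod (4*k), a i * x ^ p ^ i.val) * y)^(p^k) = ∑ i : ZMod (4*k), 2*C₀*(a i) ^ (p^k) * x ^ p ^ (i + kk).val * y ^ p ^ kk.val := by
        rw [mul_pow, sum_pow_char_pow, Finset.sum_mul, Finset.mul_sum]
        refine Finset.sum_congr rfl fun i _ => ?_
        rw [mul_pow, shift1, vkk]
        ring
      rw [t1, t2, t3, t4]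
    have eR : P₀ (x^(p^(2*k)) * y + x * y^(p^(2*k)) + 2*B₀*(x*y)^(p^(3*k)) + 2*C₀*(x*y)^(p^k))
        = (∑ i : ZMod (4*k), d i * x ^ p ^ (i + k2).val * y ^ p ^ (i).val) + (∑ i : ZMod (4*k), d i * x ^ p ^ (i).val * y ^ p ^ (i + k2).val) + (∑ i : ZMod (4*k), 2*(B₀ ^ (p ^ i.val))*(d i) * x ^ p ^ (i + k3).val * y ^ p ^ (i + k3).val) + (∑ i : ZMod (4*k), 2*(C₀ ^ (p ^ i.val))*(d i) * x ^ p ^ (i + kk).val * y ^ p ^ (i + kk).val) := by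
      rw [hd _]
      have pc2 : ∀ z : F, z^(p^(2*k)) = z ^ p ^ k2.val := fun z => by rw [vk2]
      have pc3 : ∀ z : F, z^(p^(3*k)) = z ^ p ^ k3.val := fun z => by rw [vk3]
      have pc1 : ∀ z : F, z^(p^k) = z ^ p ^ kk.val := fun z => by rw [vkk]
      have hco2 : ∀ i : ZMod (4*k), k2 + i = i + k2 := fun i => add_comm _ _
      have hco3 : ∀ i : ZMod (4*k), k3 + i = i + k3 := fun i => add_comm _ _
      have hco1 : ∀ i : ZMod (4*k), kk + i = i + kk := fun i => add_comm _ _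
      have hexp : ∀ i : ZMod (4*k),
          (x^(p^(2*k)) * y + x * y^(p^(2*k)) + 2*B₀*(x*y)^(p^(3*k)) + 2*C₀*(x*y)^(p^k)) ^ (p ^ i.val)
          = x ^ p ^ (i + k2).val * y ^ p ^ (i).val + x ^ p ^ (i).val * y ^ p ^ (i + k2).val
            + 2*(B₀ ^ (p ^ i.val)) * (x ^ p ^ (i + k3).val * y ^ p ^ (i + k3).val)
            + 2*(C₀ ^ (p ^ i.val)) * (x ^ p ^ (i + kk).val * y ^ p ^ (i + kk).val) := by
        intro i
        rw [add_pow_char_pow, add_pow_char_pow, add_pow_char_pow]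
        simp only [mul_pow, two_pow, pc2, pc3, pc1, shiftv, hco2, hco3, hco1]
        all_goals ring
      calc (∑ i : ZMod (4*k), d i *
            (x^(p^(2*k)) * y + x * y^(p^(2*k)) + 2*B₀*(x*y)^(p^(3*k)) + 2*C₀*(x*y)^(p^k)) ^ p ^ i.val)
          = ∑ i : ZMod (4*k),
            (d i * (x ^ p ^ (i + k2).val * y ^ p ^ (i).val) + d i * (x ^ p ^ (i).val * y ^ p ^ (i + k2).val)
            + d i * (2*(B₀ ^ (p ^ i.val)) * (x ^ p ^ (i + k3).val * y ^ p ^ (i + k3).val))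
            + d i * (2*(C₀ ^ (p ^ i.val)) * (x ^ p ^ (i + kk).val * y ^ p ^ (i + kk).val))) := by
            refine Finset.sum_congr rfl fun i _ => ?_
            rw [hexp i]
            ring
        _ = (∑ i : ZMod (4*k), d i * (x ^ p ^ (i + k2).val * y ^ p ^ (i).val))
            + (∑ i : ZMod (4*k), d i * (x ^ p ^ (i).val * y ^ p ^ (i + k2).val))
            + (∑ i : ZMod (4*k), d i * (2*(B₀ ^ (p ^ i.val)) * (x ^ p ^ (i + k3).val * y ^ p ^ (i + k3).val)))
            + (∑ i : ZMod (4*k), d i * (2*(C₀ ^ (p ^ i.val)) * (x ^ p ^ (i + kk).val * y ^ p ^ (i + kk).val))) := by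
            simp only [Finset.sum_add_distrib]
        _ = (∑ i : ZMod (4*k), d i * x ^ p ^ (i + k2).val * y ^ p ^ (i).val) + (∑ i : ZMod (4*k), d i * x ^ p ^ (i).val * y ^ p ^ (i + k2).val) + (∑ i : ZMod (4*k), 2*(B₀ ^ (p ^ i.val))*(d i) * x ^ p ^ (i + k3).val * y ^ p ^ (i + k3).val) + (∑ i : ZMod (4*k), 2*(C₀ ^ (p ^ i.val))*(d i) * x ^ p ^ (i + kk).val * y ^ p ^ (i + kk).val) := by
            congr 1
            · congr 1
              · congr 1
                · exact Finset.sum_congr rfl fun i _ => by ring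
                · exact Finset.sum_congr rfl fun i _ => by ring
              · exact Finset.sum_congr rfl fun i _ => by ring
            · exact Finset.sum_congr rfl fun i _ => by ring
    rw [step1, step2, ← eL, ← eR, hiden x y, sub_self]

  have hc0 : ∀ s t, cc s t = 0 := aux_indep2 p hp3 (4*k) (by omega) hcard cc claim1
  have qne : (p^(2*k)) ≠ 0 := (Nat.pow_pos (by omega : 0 < p)).ne'
  have h2ne : (2:F) ≠ 0 := by
    intro h20
    have h2 : ((2:ℕ) : F) = 0 := by exact_mod_cast h20
    have hdvd := (CharP.cast_eq_zero_iff F p 2).mp h2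
    have := Nat.le_of_dvd (by norm_num) hdvd
    omega
  have hx4 : ∀ z : F, z ^ (p^(4*k)) = z := by
    intro z; rw [← hcard]; exact FiniteField.pow_card z
  have ext1 : ∀ j : ZMod (4*k), j ≠ 0 → j ≠ k2 → a j = 0 := by
    intro j hj0 hjk2
    have h := hc0 (j + k2) 0
    simp only [hcc] at h
    simp only [add_sub_cancel_right] at h
    have hne7 : (0 : ZMod (4*k)) ≠ j + k2 := by
      intro hcon
      apply hjk2
      have h2 : j = -k2 := eq_neg_of_add_eq_zero_left hcon.symm
      rwa [zneg] at h2
    have hne6 : (0 : ZMod (4*k)) ≠ j + k2 + k2 := by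
      rw [add_assoc, zadd3, add_zero]
      exact Ne.symm hj0
    simp only [dpos, dneg (Ne.symm zk2), dneg (Ne.symm zk3), dneg (Ne.symm zkk),
      dneg (Ne.symm hj0), dneg hne7, dneg hne6] at h
    simp only [one_mul, zero_mul, add_zero, sub_zero, zero_add] at h
    exact (pow_eq_zero_iff qne).mp h
  have ext2a : a 0 ^ (p^(2*k)) - d 0 - d k2 = 0 := by
    have h := hc0 k2 0
    simp only [hcc] at h
    simp only [sub_self, zadd3] at h
    simp only [dpos, dneg (Ne.symm zk2), dneg (Ne.symm zk3), dneg (Ne.symm zkk)] at h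
    simp only [one_mul, zero_mul, add_zero, sub_zero, zero_add] at h
    linear_combination h
  have ext2b : a 0 - d k2 - d 0 = 0 := by
    have h := hc0 0 k2
    simp only [hcc] at h
    simp only [zero_sub, zneg, zero_add] at h
    simp only [dpos, dneg zk2, dneg (Ne.symm zk32), dneg (Ne.symm zkk2)] at h
    simp only [one_mul, zero_mul, add_zero, sub_zero, zero_add] at h
    linear_combination h
  have haq : a 0 ^ (p^(2*k)) = a 0 := by linear_combination ext2a - ext2b
  have ext3 : 2*C₀*(a k2) ^ (p^k) - d kk - d k3 = 0 := by
    have h := hc0 k3 kk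
    simp only [hcc] at h
    simp only [zsub2, zsub3, zadd1, sub_self] at h
    simp only [dpos, dneg zkk, dneg zkk2, dneg zkk3] at h
    simp only [one_mul, zero_mul, add_zero, sub_zero, zero_add] at h
    linear_combination h
  have ext4 : 2*B₀*(a k2) ^ (p^(3*k)) - d k3 - d kk = 0 := by
    have h := hc0 kk k3
    simp only [hcc] at h
    simp only [zsub1, zsub4, zadd2, sub_self] at h
    simp only [dpos, dneg zk3, dneg zk32, dneg (Ne.symm zkk3)] at h
    simp only [one_mul, zero_mul, add_zero, sub_zero, zero_add] at h
    linear_combination h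
  have heq34 : 2*C₀*(a k2) ^ (p^k) = 2*B₀*(a k2) ^ (p^(3*k)) := by
    linear_combination ext3 - ext4
  have hfrob : (2*c*(a k2)) ^ (p^k) = (2*b*((a k2) ^ (p^(2*k)))) ^ (p^k) := by
    rw [mul_pow, mul_pow, mul_pow, mul_pow, two_pow, ← hC₀, ← hB₀, ← pow_mul]
    have hmm : p^(2*k) * p^k = p^(3*k) := by rw [← pow_add]; congr 1; omega
    rw [hmm]
    linear_combination heq34
  have hcancel : 2*c*(a k2) = 2*b*((a k2) ^ (p^(2*k))) := by
    have hsub : (2*c*(a k2) - 2*b*((a k2) ^ (p^(2*k)))) ^ (p^k) = 0 := by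
      rw [sub_pow_char_pow, hfrob, sub_self]
    have h0 := (pow_eq_zero_iff ((Nat.pow_pos (by omega : 0 < p)).ne' : (p^k) ≠ 0)).mp hsub
    exact sub_eq_zero.mp h0
  have hca : c * (a k2) = b * ((a k2) ^ (p^(2*k))) := by
    apply mul_left_cancel₀ h2ne
    linear_combination hcancel
  have hak2 : a k2 = 0 := by
    by_contra hne0
    apply hbc
    have hpowq : ((a k2) ^ (p^(2*k))) ^ (p^(2*k)+1) = (a k2) ^ (p^(2*k)+1) := by
      rw [← pow_mul]
      have hsplit : p^(2*k) * (p^(2*k)+1) = p^(4*k) + p^(2*k) := by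
        rw [Nat.mul_add, Nat.mul_one, ← pow_add]
        congr 2
        omega
      rw [hsplit, pow_add, hx4, ← pow_succ']
    have h0 : c ^ (p^(2*k)+1) * (a k2) ^ (p^(2*k)+1) = b ^ (p^(2*k)+1) * (a k2) ^ (p^(2*k)+1) := by
      have := congrArg (fun z => z ^ (p^(2*k)+1)) hca
      simp only [mul_pow] at this
      rw [hpowq] at this
      exact this
    have hak2Q : (a k2) ^ (p^(2*k)+1) ≠ 0 := pow_ne_zero _ hne0
    exact (mul_right_cancel₀ hak2Q h0).symm
  refine ⟨a 0, haq, ?_⟩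
  intro x
  rw [ha x]
  rw [Finset.sum_eq_single (0 : ZMod (4*k))]
  · rw [ZMod.val_zero, pow_zero, pow_one]
  · intro i _ hi
    by_cases hik2 : i = k2
    · rw [hik2, hak2, zero_mul]
    · rw [ext1 i hi hik2, zero_mul]
  · intro hmem
    exact absurd (Finset.mem_univ _) hmem

end KeyA

set_option maxHeartbeats 1000000 in
/-- with `m = 2k`, `q = p^m`, `N(b) ≠ N(c)` and
`ℓ(x) = (b·x^q + c·x)^{p^k}`, the planar function `f(x) = x^{q+1} + ℓ(x²)` is not
linearly equivalent to any planar monomial `x^{p^e+1}` (those with `2m/gcd(e,2m)` odd). -/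
theorem planar_not_equivalent_to_any_monomial
    (p k : ℕ) (hp : p.Prime) (hodd : Odd p) (hk : 0 < k)
    (m : ℕ) (hm : m = 2 * k)
    (q : ℕ) (hq : q = p ^ m)
    (F : Type*) [Field F] [Fintype F] (hF : Fintype.card F = q ^ 2)
    (b c : F) (hbc : b ^ (q + 1) ≠ c ^ (q + 1))
    (ℓ : F → F) (hℓ : ∀ x, ℓ x = (b * x ^ q + c * x) ^ p ^ k)
    (f : F → F) (hf : ∀ x, f x = x ^ (q + 1) + ℓ (x ^ 2)) :
    ∀ e : ℕ, Odd (2 * m / Nat.gcd e (2 * m)) →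
      ¬∃ ℓ₀ ℓ₁ : F → F,
        (∀ x y, ℓ₀ (x + y) = ℓ₀ x + ℓ₀ y) ∧ Function.Bijective ℓ₀ ∧
        (∀ x y, ℓ₁ (x + y) = ℓ₁ x + ℓ₁ y) ∧ Function.Bijective ℓ₁ ∧
        (∀ x : F, ℓ₀ (f x) = (ℓ₁ x) ^ (p ^ e + 1)) := by
  intro e he
  rintro ⟨ℓ₀, ℓ₁, h0a, h0b, h1a, h1b, hE⟩
  classical
  subst hm
  subst hq
  haveI : Fact p.Prime := ⟨hp⟩
  have hp3 : 3 ≤ p := by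
    rcases hodd with ⟨t, ht⟩
    have := hp.two_le
    omega
  have hcard : Fintype.card F = p ^ (4*k) := by
    rw [hF, ← pow_mul]
    congr 1
    omega
  haveI hcharp : CharP F p := by
    haveI hring : CharP F (ringChar F) := ringChar.charP F
    have hprime : (ringChar F).Prime := CharP.char_is_prime F (ringChar F)
    have hdvd : p ∣ Fintype.card F := by
      rw [hcard]
      exact dvd_pow_self p (by omega)
    obtain ⟨n, hn, hcard2⟩ := FiniteField.card F (ringChar F)
    rw [hcard2] at hdvd
    have hpr : p ∣ ringChar F := hp.dvd_of_dvd_pow hdvd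
    have hpe : p = ringChar F := (Nat.prime_dvd_prime_iff_eq hp hn).mp hpr
    rwa [hpe]
  -- basic facts
  have h10 : ℓ₁ 0 = 0 := by
    have h := h1a 0 0
    rw [add_zero] at h
    exact (left_eq_add.mp h)
  have h0sub : ∀ u v, ℓ₀ (u - v) = ℓ₀ u - ℓ₀ v := by
    intro u v
    have h := h0a (u - v) v
    rw [sub_add_cancel] at h
    linear_combination -h
  -- the B_f transport identity
  have hBM : ∀ x y : F, ℓ₀ (f (x+y) - f x - f y)
      = (ℓ₁ x)^(p^e) * (ℓ₁ y) + (ℓ₁ x) * (ℓ₁ y)^(p^e) := by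
    intro x y
    rw [h0sub, h0sub, hE, hE, hE, h1a]
    rw [pow_succ, pow_succ, pow_succ, add_pow_char_pow]
    ring
  have hℓ' : ∀ z : F, (b * z^(p^(2*k)) + c*z)^(p^k)
      = b^(p^k) * z^(p^(3*k)) + c^(p^k) * z^(p^k) := by
    intro z
    rw [add_pow_char_pow, mul_pow, mul_pow, ← pow_mul,
      show p^(2*k)*p^k = p^(3*k) from by rw [← pow_add]; congr 1; omega]
  have hBf : ∀ x y : F, f (x+y) - f x - f y
      = x^(p^(2*k)) * y + x * y^(p^(2*k)) + 2*(b^(p^k))*(x*y)^(p^(3*k))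
        + 2*(c^(p^k))*(x*y)^(p^k) := by
    intro x y
    have e2 : ∀ (z : F) (t : ℕ), (z^2)^(p^t) = (z^(p^t))^2 := fun z t => pow_right_comm z 2 (p^t)
    rw [hf, hf, hf, hℓ, hℓ, hℓ, hℓ', hℓ', hℓ']
    rw [pow_succ, pow_succ, pow_succ]
    simp only [e2, add_pow_char_pow, mul_pow]
    ring
  -- the subfield element ζ of order p^g - 1
  have h24 : 2*(2*k) = 4*k := by ring
  rw [h24] at he
  set g := Nat.gcd e (4*k) with hg
  have hgpos : 0 < g := Nat.gcd_pos_of_pos_right e (by omega)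
  have hgdvd : g ∣ 4*k := Nat.gcd_dvd_right e (4*k)
  have hge : g ∣ e := Nat.gcd_dvd_left e (4*k)
  set N := p^(4*k) - 1 with hN
  set dd := p^g - 1 with hdd
  have hNpos : 0 < N := by
    have := Nat.one_lt_pow (by omega : 4*k ≠ 0) (by omega : 1 < p)
    omega
  have hddpos : 0 < dd := by
    have := Nat.one_lt_pow (by omega : g ≠ 0) (by omega : 1 < p)
    omega
  have hdvdN : dd ∣ N := by
    obtain ⟨t, ht⟩ := hgdvd
    have hh : p^(4*k) = (p^g)^t := by rw [← pow_mul, ← ht]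
    rw [hN, hdd, hh]
    simpa using Nat.sub_dvd_pow_sub_pow (p^g) 1 t
  obtain ⟨u, hu⟩ := IsCyclic.exists_generator (α := Fˣ)
  have huord : orderOf u = N := by
    rw [orderOf_eq_card_of_forall_mem_zpowers hu, Nat.card_eq_fintype_card,
      Fintype.card_units, hcard]
  have hzord : orderOf (u ^ (N / dd)) = dd := by
    rw [orderOf_pow, huord, Nat.gcd_eq_right (Nat.div_dvd_of_dvd hdvdN),
      Nat.div_div_self hdvdN (by omega)]
  set ζ : F := ((u ^ (N / dd) : Fˣ) : F) with hζ
  have hζord : orderOf ζ = dd := by rw [hζ, orderOf_units, hzord]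
  have hζne : ζ ≠ 0 := Units.ne_zero _
  have hζd : ζ ^ dd = 1 := by rw [← hζord]; exact pow_orderOf_eq_one ζ
  have hζpg : ζ ^ (p ^ g) = ζ := by
    have hh : p ^ g = dd + 1 := by
      rw [hdd]
      have := Nat.one_le_pow g p (by omega)
      omega
    rw [hh, pow_succ, hζd, one_mul]
  have hζpe : ζ ^ (p ^ e) = ζ := by
    obtain ⟨s, hs⟩ := hge
    have hrec : ∀ t : ℕ, ζ ^ (p ^ (g * t)) = ζ := by
      intro t
      induction t with
      | zero => simp
      | succ w ih =>
        have hh : g * (w+1) = g*w + g := by ring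
        rw [hh, pow_add, pow_mul, ih]
        exact hζpg
    have := hrec s
    rwa [← hs] at this
  have hζje : ∀ j : ℕ, (ζ^j) ^ (p^e) = ζ^j := by
    intro j
    rw [← pow_mul, mul_comm, pow_mul, hζpe]
  -- the transported scalar-multiplication maps
  set E1 : F ≃ F := Equiv.ofBijective ℓ₁ h1b with hE1
  set E0 : F ≃ F := Equiv.ofBijective ℓ₀ h0b with hE0
  have hE1app : ∀ z, ℓ₁ (E1.symm z) = z := fun z => E1.apply_symm_apply z
  have hE1symm : ∀ z, E1.symm (ℓ₁ z) = z := fun z => E1.symm_apply_apply z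
  have hE0app : ∀ z, ℓ₀ (E0.symm z) = z := fun z => E0.apply_symm_apply z
  have h1ia : ∀ u v : F, E1.symm (u + v) = E1.symm u + E1.symm v := by
    intro u v
    apply E1.injective
    rw [Equiv.apply_symm_apply]
    show u + v = ℓ₁ (E1.symm u + E1.symm v)
    rw [h1a, hE1app, hE1app]
  have h0ia : ∀ u v : F, E0.symm (u + v) = E0.symm u + E0.symm v := by
    intro u v
    apply E0.injective
    rw [Equiv.apply_symm_apply]
    show u + v = ℓ₀ (E0.symm u + E0.symm v)
    rw [h0a, hE0app, hE0app]
  set Pf : ℕ → F → F := fun j x => E1.symm (ζ^j * ℓ₁ x) with hPf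
  set P0 : ℕ → F → F := fun j z => E0.symm (ζ^j * ℓ₀ z) with hP0
  have hPfadd : ∀ j, ∀ x y, Pf j (x+y) = Pf j x + Pf j y := by
    intro j x y
    simp only [hPf]
    rw [h1a, mul_add, h1ia]
  have hP0add : ∀ j, ∀ x y, P0 j (x+y) = P0 j x + P0 j y := by
    intro j x y
    simp only [hP0]
    rw [h0a, mul_add, h0ia]
  have hidenj : ∀ j : ℕ, ∀ x y : F,
      (Pf j x)^(p^(2*k)) * y + (Pf j x) * y^(p^(2*k))
        + 2*(b^(p^k))*((Pf j x)*y)^(p^(3*k)) + 2*(c^(p^k))*((Pf j x)*y)^(p^k)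
      = P0 j (x^(p^(2*k)) * y + x * y^(p^(2*k)) + 2*(b^(p^k))*(x*y)^(p^(3*k))
          + 2*(c^(p^k))*(x*y)^(p^k)) := by
    intro j x y
    apply E0.injective
    have hL : (E0 : F → F) ((Pf j x)^(p^(2*k)) * y + (Pf j x) * y^(p^(2*k))
        + 2*(b^(p^k))*((Pf j x)*y)^(p^(3*k)) + 2*(c^(p^k))*((Pf j x)*y)^(p^k))
        = ℓ₀ (f (Pf j x + y) - f (Pf j x) - f y) := by
      show ℓ₀ _ = ℓ₀ _
      rw [hBf]
    have hR : (E0 : F → F) (P0 j (x^(p^(2*k)) * y + x * y^(p^(2*k))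
        + 2*(b^(p^k))*(x*y)^(p^(3*k)) + 2*(c^(p^k))*(x*y)^(p^k)))
        = ζ^j * ℓ₀ (f (x+y) - f x - f y) := by
      show ℓ₀ (E0.symm _) = _
      rw [hE0app, hBf x y]
    rw [hL, hR, hBM, hBM]
    have hℓPf : ℓ₁ (Pf j x) = ζ^j * ℓ₁ x := by
      simp only [hPf]
      exact hE1app _
    rw [hℓPf, mul_pow, hζje j]
    ring
  have hkey : ∀ j : ℕ, ∃ α : F, α^(p^(2*k)) = α ∧ ∀ x, Pf j x = α * x := fun j =>
    keyA p k hp3 hk hcard b c hbc (Pf j) (P0 j) (hPfadd j) (hP0add j) (hidenj j)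
  choose α hαq hα using hkey
  have hαval : ∀ j, α j = Pf j 1 := by
    intro j
    have h := hα j 1
    rw [mul_one] at h
    exact h.symm
  have hmul : ∀ i j : ℕ, α (i+j) = α i * α j := by
    intro i j
    have h1 : Pf (i+j) 1 = Pf i (Pf j 1) := by
      simp only [hPf]
      rw [hE1app, pow_add, mul_assoc]
    calc α (i+j) = Pf (i+j) 1 := hαval _
      _ = Pf i (Pf j 1) := h1
      _ = α i * Pf j 1 := hα i _
      _ = α i * (α j * 1) := by rw [hα j 1]
      _ = α i * α j := by ring
  have hαpow : ∀ j, α j = (α 1)^j := by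
    intro j
    induction j with
    | zero =>
      have h0 : Pf 0 1 = 1 := by
        simp only [hPf]
        rw [pow_zero, one_mul, hE1symm]
      rw [hαval 0, h0, pow_zero]
    | succ w ih =>
      rw [hmul w 1, ih, pow_succ]
  have hℓ11 : ℓ₁ 1 ≠ 0 := by
    intro hz
    have h1 : ℓ₁ 1 = ℓ₁ 0 := by rw [hz, h10]
    exact one_ne_zero (h1b.1 h1)
  have hrory : ∀ j : ℕ, (α 1)^j = 1 ↔ ζ^j = 1 := by
    intro j
    constructor
    · intro hαj
      have hαj' : α j = 1 := by rw [hαpow j]; exact hαj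
      have h1 : Pf j 1 = 1 := by rw [← hαval j]; exact hαj'
      have h2 : ζ^j * ℓ₁ 1 = ℓ₁ 1 := by
        have h3 := congrArg (fun z => ℓ₁ z) h1
        simp only [hPf] at h3
        rw [hE1app] at h3
        exact h3
      have h3 : (ζ^j - 1) * ℓ₁ 1 = 0 := by linear_combination h2
      rcases mul_eq_zero.mp h3 with h4 | h4
      · exact sub_eq_zero.mp h4
      · exact absurd h4 hℓ11
    · intro hζj
      have h1 : Pf j 1 = 1 := by
        simp only [hPf]
        rw [hζj, one_mul, hE1symm]
      rw [← hαpow j, hαval j, h1]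
  have hrd : (α 1) ^ dd = 1 := (hrory dd).mpr hζd
  have hr0 : α 1 ≠ 0 := by
    intro h0
    rw [h0, zero_pow (by omega : dd ≠ 0)] at hrd
    exact zero_ne_one hrd
  have hordr : orderOf (α 1) = dd := by
    have h1 : orderOf (α 1) ∣ dd := orderOf_dvd_of_pow_eq_one hrd
    have h2 : ζ ^ (orderOf (α 1)) = 1 := (hrory _).mp (pow_orderOf_eq_one (α 1))
    have h3 : dd ∣ orderOf (α 1) := by rw [← hζord]; exact orderOf_dvd_of_pow_eq_one h2
    exact Nat.dvd_antisymm h1 h3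
  have hrq : (α 1) ^ (p^(2*k)) = α 1 := hαq 1
  have hrq1 : (α 1) ^ (p^(2*k) - 1) = 1 := by
    have h1 : (α 1) ^ (p^(2*k) - 1) * (α 1) = 1 * (α 1) := by
      rw [one_mul, ← pow_succ]
      have hh : p^(2*k) - 1 + 1 = p^(2*k) := by
        have := Nat.one_le_pow (2*k) p (by omega)
        omega
      rw [hh]
      exact hrq
    exact mul_right_cancel₀ hr0 h1
  have hdvdq1 : dd ∣ p^(2*k) - 1 := by
    rw [← hordr]
    exact orderOf_dvd_of_pow_eq_one hrq1
  rw [hdd] at hdvdq1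
  have hgdvd2k : g ∣ 2*k := aux_gcddvd p g (by omega) hgpos (2*k) hdvdq1
  obtain ⟨t, ht⟩ := hgdvd2k
  have h4 : 4*k = g*(2*t) := by
    rw [show g*(2*t) = 2*(g*t) from by ring, ← ht]
    omega
  have h4kg : 4*k / g = 2*t := by
    rw [h4, Nat.mul_div_cancel_left _ hgpos]
  rw [h4kg] at he
  exact (Nat.not_odd_iff_even.mpr ⟨t, by omega⟩) he
end
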